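/- arXiv:1102.3491 — 5 statements merged into one kernel-verified Lean document; each statement's English description precedes it below -/
import Mathlib

section
/- Let M be a strongly base orderable matroid on a finite ground set S, let E be a partition of S into n pairs, and let w : E → ℝ≥0 be a weight function. Let 0 < ε < 1 and set t = ⌈1/ε⌉, and assume t ≤ n. If B ⊆ E is a maximum-weight feasible set of pairs and A ⊆ E is a feasible set of pairs that is a local optimum for (2t+1)-moves, then w(B) ≤ (1 + ε)·w(A). -/
open Finset

variable {α : Type*} [DecidableEq α]

/-- `E` is a partition of the finite set `S` into pairs: every member of `E` has two elements,
the members of `E` are pairwise disjoint, and their union is `S`. -/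
def IsPairPartition (S : Finset α) (E : Finset (Finset α)) : Prop :=
  (∀ e ∈ E, e.card = 2) ∧ (E : Set (Finset α)).PairwiseDisjoint id ∧ E.biUnion id = S

/-- A matroid is strongly base orderable if for every pair of bases `I`, `J` there is a
bijection `π : I → J` such that for every `K ⊆ I`, the set `π(K) ∪ (I \ K)` is a base. -/
def Matroid.StronglyBaseOrderable (M : Matroid α) : Prop :=
  ∀ I J : Set α, M.IsBase I → M.IsBase J →
    ∃ π : α → α, Set.BijOn π I J ∧ ∀ K ⊆ I, M.IsBase (π '' K ∪ (I \ K))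

/-- A set of pairs `A ⊆ E` is feasible for `M` if the set `⋃ A` of covered elements is
independent in `M`. -/
def FeasibleSet (M : Matroid α) (A : Finset (Finset α)) : Prop :=
  M.Indep ↑(A.biUnion id)

/-- `(Abar, Bbar)` is an `s`-move for the feasible set `A` (inside the set of pairs `E`):
`Abar ⊆ A`, `Bbar ⊆ E \ A`, `|Abar| + |Bbar| ≤ s` and `A Δ (Abar ∪ Bbar)` is feasible.
Its gain is `w Bbar - w Abar`. -/
def IsMove (M : Matroid α) (E A : Finset (Finset α)) (s : ℕ)
    (Abar Bbar : Finset (Finset α)) : Prop :=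
  Abar ⊆ A ∧ Bbar ⊆ E \ A ∧ Abar.card + Bbar.card ≤ s ∧
    FeasibleSet M (symmDiff A (Abar ∪ Bbar))


section PTASWindowLemmas
variable {γ : Type*} [DecidableEq γ]

section Windows
variable {t : ℕ} {X Y : Finset γ} {adj : γ → γ → Prop} {w : γ → ℝ}
variable {f : ℕ → γ} {len pa : ℕ}

/-- Apply the move hypothesis to a window given by index sets. -/
lemma window_apply
    (hmv : ∀ T Z : Finset γ, T ⊆ X → Z ⊆ Y →
      (∀ b ∈ T, ∀ a ∈ Y, adj b a → a ∈ Z) →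
      T.card + Z.card ≤ 2 * t + 1 → ∑ e ∈ T, w e ≤ ∑ e ∈ Z, w e)
    (hinj : ∀ i < len, ∀ j < len, f i = f j → i = j)
    (hmemX : ∀ i < len, ¬ (i % 2 = pa % 2) → f i ∈ X)
    (hmemY : ∀ i < len, i % 2 = pa % 2 → f i ∈ Y)
    (U V : Finset ℕ)
    (hU : ∀ i ∈ U, i < len ∧ ¬ (i % 2 = pa % 2))
    (hV : ∀ j ∈ V, j < len ∧ j % 2 = pa % 2)
    (hcard : U.card + V.card ≤ 2 * t + 1)
    (hclw : ∀ i ∈ U, ∀ a ∈ Y, adj (f i) a → ∃ j ∈ V, f j = a) :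
    ∑ i ∈ U, w (f i) ≤ ∑ j ∈ V, w (f j) := by
  have hinjU : Set.InjOn f U := fun i hi j hj hij =>
    hinj i (hU i hi).1 j (hU j hj).1 hij
  have hinjV : Set.InjOn f V := fun i hi j hj hij =>
    hinj i (hV i hi).1 j (hV j hj).1 hij
  have hTsum : ∑ e ∈ U.image f, w e = ∑ i ∈ U, w (f i) := Finset.sum_image hinjU
  have hZsum : ∑ e ∈ V.image f, w e = ∑ j ∈ V, w (f j) := Finset.sum_image hinjV
  rw [← hTsum, ← hZsum]
  refine hmv _ _ ?_ ?_ ?_ ?_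
  · intro b hb
    obtain ⟨i, hi, rfl⟩ := Finset.mem_image.1 hb
    exact hmemX i (hU i hi).1 (hU i hi).2
  · intro a ha
    obtain ⟨j, hj, rfl⟩ := Finset.mem_image.1 ha
    exact hmemY j (hV j hj).1 (hV j hj).2
  · intro b hb a ha hadj
    obtain ⟨i, hi, rfl⟩ := Finset.mem_image.1 hb
    obtain ⟨j, hj, rfl⟩ := hclw i hi a ha hadj
    exact Finset.mem_image_of_mem f hj
  · calc (U.image f).card + (V.image f).card ≤ U.card + V.card :=
          Nat.add_le_add Finset.card_image_le Finset.card_image_le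
      _ ≤ 2 * t + 1 := hcard


/-- Component inequality when the whole component fits in one window. -/
lemma whole_window
    (hlen : len ≤ 2 * t)
    (hmv : ∀ T Z : Finset γ, T ⊆ X → Z ⊆ Y →
      (∀ b ∈ T, ∀ a ∈ Y, adj b a → a ∈ Z) →
      T.card + Z.card ≤ 2 * t + 1 → ∑ e ∈ T, w e ≤ ∑ e ∈ Z, w e)
    (hinj : ∀ i < len, ∀ j < len, f i = f j → i = j)
    (hmemX : ∀ i < len, ¬ (i % 2 = pa % 2) → f i ∈ X)
    (hmemY : ∀ i < len, i % 2 = pa % 2 → f i ∈ Y)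
    (hwY : ∀ a ∈ Y, 0 ≤ w a)
    (hcl : ∀ i < len, ¬ (i % 2 = pa % 2) → ∀ a ∈ Y, adj (f i) a →
      ∃ j, j < len ∧ j % 2 = pa % 2 ∧ f j = a) :
    (t : ℝ) * ∑ i ∈ (range len).filter (fun i => ¬ (i % 2 = pa % 2)), w (f i) ≤
      (t + 1) * ∑ i ∈ (range len).filter (fun i => i % 2 = pa % 2), w (f i) := by
  have h1 : ∑ i ∈ (range len).filter (fun i => ¬ (i % 2 = pa % 2)), w (f i) ≤
      ∑ i ∈ (range len).filter (fun i => i % 2 = pa % 2), w (f i) := by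
    refine window_apply hmv hinj hmemX hmemY _ _ ?_ ?_ ?_ ?_
    · intro i hi; simp only [mem_filter, mem_range] at hi; exact hi
    · intro j hj; simp only [mem_filter, mem_range] at hj; exact hj
    · have := Finset.card_filter_add_card_filter_not
        (s := range len) (p := fun i => i % 2 = pa % 2)
      have hc : ((range len).filter (fun i => ¬ (i % 2 = pa % 2))).card +
          ((range len).filter (fun i => i % 2 = pa % 2)).card = len := by
        rw [Nat.add_comm]
        simpa using this
      omega
    · intro i hi a ha hadj
      simp only [mem_filter, mem_range] at hi
      obtain ⟨j, hj1, hj2, hj3⟩ := hcl i hi.1 hi.2 a ha hadj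
      exact ⟨j, by simp [mem_filter, mem_range, hj1, hj2], hj3⟩
  have hY0 : 0 ≤ ∑ i ∈ (range len).filter (fun i => i % 2 = pa % 2), w (f i) := by
    refine Finset.sum_nonneg fun i hi => ?_
    simp only [mem_filter, mem_range] at hi
    exact hwY _ (hmemY i hi.1 hi.2)
  have ht0 : (0:ℝ) ≤ t := Nat.cast_nonneg t
  nlinarith [h1, hY0]


/-- Component inequality for path components via sliding windows. -/
lemma path_windows
    (hmv : ∀ T Z : Finset γ, T ⊆ X → Z ⊆ Y →
      (∀ b ∈ T, ∀ a ∈ Y, adj b a → a ∈ Z) →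
      T.card + Z.card ≤ 2 * t + 1 → ∑ e ∈ T, w e ≤ ∑ e ∈ Z, w e)
    (hinj : ∀ i < len, ∀ j < len, f i = f j → i = j)
    (hmemX : ∀ i < len, ¬ (i % 2 = pa % 2) → f i ∈ X)
    (hmemY : ∀ i < len, i % 2 = pa % 2 → f i ∈ Y)
    (hwX : ∀ b ∈ X, 0 ≤ w b) (hwY : ∀ a ∈ Y, 0 ≤ w a)
    (hcl : ∀ i < len, ¬ (i % 2 = pa % 2) → ∀ a ∈ Y, adj (f i) a →
      ∃ j, j < len ∧ (j = i + 1 ∨ i = j + 1) ∧ f j = a) :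
    (t : ℝ) * ∑ i ∈ (range len).filter (fun i => ¬ (i % 2 = pa % 2)), w (f i) ≤
      (t + 1) * ∑ i ∈ (range len).filter (fun i => i % 2 = pa % 2), w (f i) := by
  classical
  set Xidx := (range len).filter (fun i => ¬ (i % 2 = pa % 2)) with hXidx
  set Yidx := (range len).filter (fun i => i % 2 = pa % 2) with hYidx
  set S := (range (len + 2 * t)).filter (fun s => s % 2 = pa % 2) with hS
  have hXmem : ∀ i ∈ Xidx, i < len ∧ ¬ (i % 2 = pa % 2) := by
    intro i hi; rw [hXidx, mem_filter, mem_range] at hi; exact hi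
  have hYmem : ∀ i ∈ Yidx, i < len ∧ i % 2 = pa % 2 := by
    intro i hi; rw [hYidx, mem_filter, mem_range] at hi; exact hi
  have hSmem : ∀ s ∈ S, s < len + 2 * t ∧ s % 2 = pa % 2 := by
    intro s hs; rw [hS, mem_filter, mem_range] at hs; exact hs
  -- the per-window inequality
  have key : ∀ s ∈ S,
      ∑ i ∈ Xidx.filter (fun i => s ≤ i + 2 * t ∧ i ≤ s), w (f i) ≤
      ∑ j ∈ Yidx.filter (fun j => s ≤ j + 2 * t ∧ j ≤ s), w (f j) := by
    intro s hs
    obtain ⟨hslt, hspar⟩ := hSmem s hs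
    refine window_apply hmv hinj hmemX hmemY _ _ ?_ ?_ ?_ ?_
    · intro i hi; exact hXmem i (Finset.filter_subset _ _ hi)
    · intro j hj; exact hYmem j (Finset.filter_subset _ _ hj)
    · have hcU : (Xidx.filter (fun i => s ≤ i + 2 * t ∧ i ≤ s)).card ≤ t := by
        have := Finset.card_range t
        refine le_trans (Finset.card_le_card_of_injOn (t := range t)
          (fun i => (s - i - 1) / 2) ?_ ?_) (by simp)
        · intro i hi
          simp only [Finset.mem_coe, mem_filter] at hi
          obtain ⟨hiX, hi1, hi2⟩ := hi
          obtain ⟨hilen, hipar⟩ := hXmem i hiX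
          simp only [Finset.mem_coe, mem_range]
          omega
        · intro i hi j hj hij
          simp only [Finset.mem_coe, mem_filter] at hi hj
          obtain ⟨hiX, hi1, hi2⟩ := hi
          obtain ⟨hjX, hj1, hj2⟩ := hj
          obtain ⟨hilen, hipar⟩ := hXmem i hiX
          obtain ⟨hjlen, hjpar⟩ := hXmem j hjX
          have hij' : (s - i - 1) / 2 = (s - j - 1) / 2 := hij
          omega
      have hcV : (Yidx.filter (fun j => s ≤ j + 2 * t ∧ j ≤ s)).card ≤ t + 1 := by
        refine le_trans (Finset.card_le_card_of_injOn (t := range (t+1))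
          (fun i => (s - i) / 2) ?_ ?_) (by simp)
        · intro i hi
          simp only [Finset.mem_coe, mem_filter] at hi
          obtain ⟨hiY, hi1, hi2⟩ := hi
          obtain ⟨hilen, hipar⟩ := hYmem i hiY
          simp only [Finset.mem_coe, mem_range]
          omega
        · intro i hi j hj hij
          simp only [Finset.mem_coe, mem_filter] at hi hj
          obtain ⟨hiY, hi1, hi2⟩ := hi
          obtain ⟨hjY, hj1, hj2⟩ := hj
          obtain ⟨hilen, hipar⟩ := hYmem i hiY
          obtain ⟨hjlen, hjpar⟩ := hYmem j hjY
          have hij' : (s - i) / 2 = (s - j) / 2 := hij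
          omega
      omega
    · intro i hi a ha hadj
      simp only [mem_filter] at hi
      obtain ⟨hiX, hi1, hi2⟩ := hi
      obtain ⟨hilen, hipar⟩ := hXmem i hiX
      obtain ⟨j, hjlen, hjnbr, hja⟩ := hcl i hilen hipar a ha hadj
      refine ⟨j, ?_, hja⟩
      simp only [mem_filter, hYidx, mem_range]
      refine ⟨⟨hjlen, by omega⟩, by omega, by omega⟩
  -- counting: each X index is in at least t windows
  have cnt_ge : ∀ i ∈ Xidx,
      (t : ℝ) ≤ ((S.filter (fun s => s ≤ i + 2 * t ∧ i ≤ s)).card : ℝ) := by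
    intro i hi
    obtain ⟨hilen, hipar⟩ := hXmem i hi
    have himg : (range t).image (fun j => i + 1 + 2 * j) ⊆
        S.filter (fun s => s ≤ i + 2 * t ∧ i ≤ s) := by
      intro s hs
      simp only [mem_image, mem_range] at hs
      obtain ⟨j, hj, rfl⟩ := hs
      simp only [mem_filter, hS, mem_range]
      refine ⟨⟨by omega, by omega⟩, by omega, by omega⟩
    have hinj2 : Function.Injective (fun j : ℕ => i + 1 + 2 * j) := by
      intro a b hab; simp only at hab; omega
    have := Finset.card_le_card himg
    rw [Finset.card_image_of_injective _ hinj2, Finset.card_range] at this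
    exact_mod_cast this
  -- each Y index is in at most t+1 windows
  have cnt_le : ∀ i ∈ Yidx,
      ((S.filter (fun s => s ≤ i + 2 * t ∧ i ≤ s)).card : ℝ) ≤ (t : ℝ) + 1 := by
    intro i hi
    obtain ⟨hilen, hipar⟩ := hYmem i hi
    have : (S.filter (fun s => s ≤ i + 2 * t ∧ i ≤ s)).card ≤ t + 1 := by
      refine le_trans (Finset.card_le_card_of_injOn (t := range (t+1))
        (fun s => (s - i) / 2) ?_ ?_) (by simp)
      · intro s hs
        simp only [Finset.mem_coe, mem_filter] at hs
        obtain ⟨hsS, hs1, hs2⟩ := hs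
        obtain ⟨hslt, hspar⟩ := hSmem s hsS
        simp only [Finset.mem_coe, mem_range]
        omega
      · intro s hs s' hs' hss
        simp only [Finset.mem_coe, mem_filter] at hs hs'
        obtain ⟨hsS, hs1, hs2⟩ := hs
        obtain ⟨hsS', hs1', hs2'⟩ := hs'
        obtain ⟨hslt, hspar⟩ := hSmem s hsS
        obtain ⟨hslt', hspar'⟩ := hSmem s' hsS'
        have hss' : (s - i) / 2 = (s' - i) / 2 := hss
        omega
    calc ((S.filter (fun s => s ≤ i + 2 * t ∧ i ≤ s)).card : ℝ)
        ≤ ((t + 1 : ℕ) : ℝ) := by exact_mod_cast this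
      _ = (t : ℝ) + 1 := by push_cast; ring
  -- assemble
  have expand : ∀ (W : Finset ℕ) (hW : ∀ i ∈ W, i < len),
      ∑ s ∈ S, ∑ i ∈ W.filter (fun i => s ≤ i + 2 * t ∧ i ≤ s), w (f i) =
      ∑ i ∈ W, ((S.filter (fun s => s ≤ i + 2 * t ∧ i ≤ s)).card : ℝ) * w (f i) := by
    intro W hW
    have h1 : ∀ s, ∑ i ∈ W.filter (fun i => s ≤ i + 2 * t ∧ i ≤ s), w (f i) =
        ∑ i ∈ W, if s ≤ i + 2 * t ∧ i ≤ s then w (f i) else 0 :=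
      fun s => Finset.sum_filter _ _
    simp_rw [h1]
    rw [Finset.sum_comm]
    refine Finset.sum_congr rfl fun i _ => ?_
    rw [← Finset.sum_filter, Finset.sum_const, nsmul_eq_mul]
  have hXsum : (t : ℝ) * ∑ i ∈ Xidx, w (f i) ≤
      ∑ s ∈ S, ∑ i ∈ Xidx.filter (fun i => s ≤ i + 2 * t ∧ i ≤ s), w (f i) := by
    rw [expand Xidx (fun i hi => (hXmem i hi).1), Finset.mul_sum]
    refine Finset.sum_le_sum fun i hi => ?_
    have hw0 : 0 ≤ w (f i) := hwX _ (hmemX i (hXmem i hi).1 (hXmem i hi).2)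
    exact mul_le_mul_of_nonneg_right (cnt_ge i hi) hw0
  have hYsum : ∑ s ∈ S, ∑ j ∈ Yidx.filter (fun j => s ≤ j + 2 * t ∧ j ≤ s), w (f j) ≤
      ((t : ℝ) + 1) * ∑ i ∈ Yidx, w (f i) := by
    rw [expand Yidx (fun i hi => (hYmem i hi).1), Finset.mul_sum]
    refine Finset.sum_le_sum fun i hi => ?_
    have hw0 : 0 ≤ w (f i) := hwY _ (hmemY i (hYmem i hi).1 (hYmem i hi).2)
    exact mul_le_mul_of_nonneg_right (cnt_le i hi) hw0
  calc (t : ℝ) * ∑ i ∈ Xidx, w (f i)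
      ≤ ∑ s ∈ S, ∑ i ∈ Xidx.filter (fun i => s ≤ i + 2 * t ∧ i ≤ s), w (f i) := hXsum
    _ ≤ ∑ s ∈ S, ∑ j ∈ Yidx.filter (fun j => s ≤ j + 2 * t ∧ j ≤ s), w (f j) :=
        Finset.sum_le_sum key
    _ ≤ ((t : ℝ) + 1) * ∑ i ∈ Yidx, w (f i) := hYsum


lemma sum_windows_expand {P : ℕ → ℕ → Prop} [DecidableRel P] (S W : Finset ℕ) (g : ℕ → ℝ) :
    ∑ s ∈ S, ∑ i ∈ W.filter (fun i => P s i), g i =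
    ∑ i ∈ W, ((S.filter (fun s => P s i)).card : ℝ) * g i := by
  have h1 : ∀ s, ∑ i ∈ W.filter (fun i => P s i), g i =
      ∑ i ∈ W, if P s i then g i else 0 := fun s => Finset.sum_filter _ _
  simp_rw [h1]
  rw [Finset.sum_comm]
  refine Finset.sum_congr rfl fun i _ => ?_
  rw [← Finset.sum_filter, Finset.sum_const, nsmul_eq_mul]

/-- Component inequality for long cycle components via sliding cyclic windows. -/
lemma cycle_windows
    (hlen : 2 * t < len) (heven : len % 2 = 0)
    (hmv : ∀ T Z : Finset γ, T ⊆ X → Z ⊆ Y →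
      (∀ b ∈ T, ∀ a ∈ Y, adj b a → a ∈ Z) →
      T.card + Z.card ≤ 2 * t + 1 → ∑ e ∈ T, w e ≤ ∑ e ∈ Z, w e)
    (hinj : ∀ i < len, ∀ j < len, f i = f j → i = j)
    (hmemX : ∀ i < len, ¬ (i % 2 = pa % 2) → f i ∈ X)
    (hmemY : ∀ i < len, i % 2 = pa % 2 → f i ∈ Y)
    (hwX : ∀ b ∈ X, 0 ≤ w b) (hwY : ∀ a ∈ Y, 0 ≤ w a)
    (hcl : ∀ i < len, ¬ (i % 2 = pa % 2) → ∀ a ∈ Y, adj (f i) a →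
      ∃ j, j < len ∧ (j = i + 1 ∨ i = j + 1 ∨ (i = len - 1 ∧ j = 0) ∨ (j = len - 1 ∧ i = 0)) ∧
        f j = a) :
    (t : ℝ) * ∑ i ∈ (range len).filter (fun i => ¬ (i % 2 = pa % 2)), w (f i) ≤
      (t + 1) * ∑ i ∈ (range len).filter (fun i => i % 2 = pa % 2), w (f i) := by
  classical
  set Xidx := (range len).filter (fun i => ¬ (i % 2 = pa % 2)) with hXidx
  set Yidx := (range len).filter (fun i => i % 2 = pa % 2) with hYidx
  set S := (range len).filter (fun s => s % 2 = pa % 2) with hS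
  -- cyclic window membership
  set P : ℕ → ℕ → Prop := fun s i => (i ≤ s ∧ s ≤ i + 2 * t) ∨ (s + len ≤ i + 2 * t) with hP
  have hXmem : ∀ i ∈ Xidx, i < len ∧ ¬ (i % 2 = pa % 2) := by
    intro i hi; rw [hXidx, mem_filter, mem_range] at hi; exact hi
  have hYmem : ∀ i ∈ Yidx, i < len ∧ i % 2 = pa % 2 := by
    intro i hi; rw [hYidx, mem_filter, mem_range] at hi; exact hi
  have hSmem : ∀ s ∈ S, s < len ∧ s % 2 = pa % 2 := by
    intro s hs; rw [hS, mem_filter, mem_range] at hs; exact hs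
  have key : ∀ s ∈ S,
      ∑ i ∈ Xidx.filter (fun i => P s i), w (f i) ≤
      ∑ j ∈ Yidx.filter (fun j => P s j), w (f j) := by
    intro s hs
    obtain ⟨hslt, hspar⟩ := hSmem s hs
    refine window_apply hmv hinj hmemX hmemY _ _ ?_ ?_ ?_ ?_
    · intro i hi; exact hXmem i (Finset.filter_subset _ _ hi)
    · intro j hj; exact hYmem j (Finset.filter_subset _ _ hj)
    · have hcU : (Xidx.filter (fun i => P s i)).card ≤ t := by
        refine le_trans (Finset.card_le_card_of_injOn (t := range t)
          (fun i => ((if i ≤ s then s - i else s + len - i) - 1) / 2) ?_ ?_) (by simp)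
        · intro i hi
          simp only [Finset.mem_coe, mem_filter, hP] at hi
          obtain ⟨hiX, hi1⟩ := hi
          obtain ⟨hilen, hipar⟩ := hXmem i hiX
          simp only [Finset.mem_coe, mem_range]
          by_cases h : i ≤ s <;> simp only [h, if_true, if_false] <;> omega
        · intro i hi j hj hij
          simp only [Finset.mem_coe, mem_filter, hP] at hi hj
          obtain ⟨hiX, hi1⟩ := hi
          obtain ⟨hjX, hj1⟩ := hj
          obtain ⟨hilen, hipar⟩ := hXmem i hiX
          obtain ⟨hjlen, hjpar⟩ := hXmem j hjX
          have hij' : ((if i ≤ s then s - i else s + len - i) - 1) / 2 =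
              ((if j ≤ s then s - j else s + len - j) - 1) / 2 := hij
          by_cases h1 : i ≤ s <;> by_cases h2 : j ≤ s <;>
            simp only [h1, h2, if_true, if_false] at hij' <;> omega
      have hcV : (Yidx.filter (fun j => P s j)).card ≤ t + 1 := by
        refine le_trans (Finset.card_le_card_of_injOn (t := range (t + 1))
          (fun i => (if i ≤ s then s - i else s + len - i) / 2) ?_ ?_) (by simp)
        · intro i hi
          simp only [Finset.mem_coe, mem_filter, hP] at hi
          obtain ⟨hiY, hi1⟩ := hi
          obtain ⟨hilen, hipar⟩ := hYmem i hiY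
          simp only [Finset.mem_coe, mem_range]
          by_cases h : i ≤ s <;> simp only [h, if_true, if_false] <;> omega
        · intro i hi j hj hij
          simp only [Finset.mem_coe, mem_filter, hP] at hi hj
          obtain ⟨hiY, hi1⟩ := hi
          obtain ⟨hjY, hj1⟩ := hj
          obtain ⟨hilen, hipar⟩ := hYmem i hiY
          obtain ⟨hjlen, hjpar⟩ := hYmem j hjY
          have hij' : (if i ≤ s then s - i else s + len - i) / 2 =
              (if j ≤ s then s - j else s + len - j) / 2 := hij
          by_cases h1 : i ≤ s <;> by_cases h2 : j ≤ s <;>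
            simp only [h1, h2, if_true, if_false] at hij' <;> omega
      omega
    · intro i hi a ha hadj
      simp only [mem_filter, hP] at hi
      obtain ⟨hiX, hi1⟩ := hi
      obtain ⟨hilen, hipar⟩ := hXmem i hiX
      obtain ⟨j, hjlen, hjnbr, hja⟩ := hcl i hilen hipar a ha hadj
      refine ⟨j, ?_, hja⟩
      refine Finset.mem_filter.2 ⟨?_, ?_⟩
      · rw [hYidx]
        exact Finset.mem_filter.2 ⟨Finset.mem_range.2 hjlen, by omega⟩
      · simp only [hP]
        omega
  -- counting: each X index is in at least t windows
  have cnt_ge : ∀ i ∈ Xidx,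
      (t : ℝ) ≤ ((S.filter (fun s => P s i)).card : ℝ) := by
    intro i hi
    obtain ⟨hilen, hipar⟩ := hXmem i hi
    have himg : (range t).image
        (fun j => if i + (2 * j + 1) < len then i + (2 * j + 1) else i + (2 * j + 1) - len) ⊆
        S.filter (fun s => P s i) := by
      intro s hs
      simp only [mem_image, mem_range] at hs
      obtain ⟨j, hj, rfl⟩ := hs
      simp only [mem_filter, hS, mem_range, hP]
      by_cases h : i + (2 * j + 1) < len <;> simp only [h, if_true, if_false] <;>
        refine ⟨⟨?_, ?_⟩, ?_⟩ <;> first | trivial | omega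
    have hinj2 : Set.InjOn
        (fun j => if i + (2 * j + 1) < len then i + (2 * j + 1) else i + (2 * j + 1) - len)
        (range t) := by
      intro a h1 b h2 hab
      simp only [Finset.mem_coe, mem_range] at h1 h2
      by_cases ha : i + (2 * a + 1) < len <;> by_cases hb : i + (2 * b + 1) < len <;>
        simp only [ha, hb, if_true, if_false] at hab <;> omega
    have := Finset.card_le_card himg
    rw [Finset.card_image_of_injOn hinj2, Finset.card_range] at this
    exact_mod_cast this
  -- each Y index is in at most t+1 windows
  have cnt_le : ∀ i ∈ Yidx,
      ((S.filter (fun s => P s i)).card : ℝ) ≤ (t : ℝ) + 1 := by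
    intro i hi
    obtain ⟨hilen, hipar⟩ := hYmem i hi
    have : (S.filter (fun s => P s i)).card ≤ t + 1 := by
      refine le_trans (Finset.card_le_card_of_injOn (t := range (t + 1))
        (fun s => (if i ≤ s then s - i else s + len - i) / 2) ?_ ?_) (by simp)
      · intro s hs
        simp only [Finset.mem_coe, mem_filter, hP] at hs
        obtain ⟨hsS, hs1⟩ := hs
        obtain ⟨hslt, hspar⟩ := hSmem s hsS
        simp only [Finset.mem_coe, mem_range]
        by_cases h : i ≤ s <;> simp only [h, if_true, if_false] <;> omega
      · intro s hs s' hs' hss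
        simp only [Finset.mem_coe, mem_filter, hP] at hs hs'
        obtain ⟨hsS, hs1⟩ := hs
        obtain ⟨hsS', hs1'⟩ := hs'
        obtain ⟨hslt, hspar⟩ := hSmem s hsS
        obtain ⟨hslt', hspar'⟩ := hSmem s' hsS'
        have hss2 : (if i ≤ s then s - i else s + len - i) / 2 =
            (if i ≤ s' then s' - i else s' + len - i) / 2 := hss
        by_cases h1 : i ≤ s <;> by_cases h2 : i ≤ s' <;>
          simp only [h1, h2, if_true, if_false] at hss2 <;> omega
    calc ((S.filter (fun s => P s i)).card : ℝ) ≤ ((t + 1 : ℕ) : ℝ) := by exact_mod_cast this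
      _ = (t : ℝ) + 1 := by push_cast; ring
  have hXsum : (t : ℝ) * ∑ i ∈ Xidx, w (f i) ≤
      ∑ s ∈ S, ∑ i ∈ Xidx.filter (fun i => P s i), w (f i) := by
    rw [sum_windows_expand, Finset.mul_sum]
    refine Finset.sum_le_sum fun i hi => ?_
    have hw0 : 0 ≤ w (f i) := hwX _ (hmemX i (hXmem i hi).1 (hXmem i hi).2)
    exact mul_le_mul_of_nonneg_right (cnt_ge i hi) hw0
  have hYsum : ∑ s ∈ S, ∑ j ∈ Yidx.filter (fun j => P s j), w (f j) ≤
      ((t : ℝ) + 1) * ∑ i ∈ Yidx, w (f i) := by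
    rw [sum_windows_expand, Finset.mul_sum]
    refine Finset.sum_le_sum fun i hi => ?_
    have hw0 : 0 ≤ w (f i) := hwY _ (hmemY i (hYmem i hi).1 (hYmem i hi).2)
    exact mul_le_mul_of_nonneg_right (cnt_le i hi) hw0
  calc (t : ℝ) * ∑ i ∈ Xidx, w (f i)
      ≤ ∑ s ∈ S, ∑ i ∈ Xidx.filter (fun i => P s i), w (f i) := hXsum
    _ ≤ ∑ s ∈ S, ∑ j ∈ Yidx.filter (fun j => P s j), w (f j) := Finset.sum_le_sum key
    _ ≤ ((t : ℝ) + 1) * ∑ i ∈ Yidx, w (f i) := hYsum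


end Windows

section Trail

variable (X Y : Finset γ) (adj : γ → γ → Prop)

/-- An alternating trail: `Y`-vertices sit at indices `≡ pa (mod 2)`,
`X`-vertices at the other indices, consecutive entries are adjacent
(oriented `adj x y` with `x` on the `X` side), and entries are distinct. -/
def IsTrail (f : ℕ → γ) (l pa : ℕ) : Prop :=
  (∀ i j, i < l → j < l → f i = f j → i = j) ∧
  (∀ i < l, (i % 2 = pa % 2 → f i ∈ Y) ∧ (¬ (i % 2 = pa % 2) → f i ∈ X)) ∧
  (∀ i, i + 1 < l → (¬ (i % 2 = pa % 2) → adj (f i) (f (i + 1))) ∧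
      (i % 2 = pa % 2 → adj (f (i + 1)) (f i)))

variable {X Y adj}

lemma IsTrail.length_le {f : ℕ → γ} {l pa : ℕ} (h : IsTrail X Y adj f l pa) :
    l ≤ (X ∪ Y).card := by
  obtain ⟨hinj, hmem, -⟩ := h
  rw [← Finset.card_range l]
  refine Finset.card_le_card_of_injOn f ?_ ?_
  · intro i hi
    rw [Finset.mem_coe, Finset.mem_range] at hi
    by_cases hp : i % 2 = pa % 2
    · exact Finset.mem_union_right _ ((hmem i hi).1 hp)
    · exact Finset.mem_union_left _ ((hmem i hi).2 hp)
  · intro i hi j hj hij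
    rw [Finset.mem_coe, Finset.mem_range] at hi hj
    exact hinj i j hi hj hij

lemma IsTrail.tail_ext {f : ℕ → γ} {l pa : ℕ} (h : IsTrail X Y adj f l pa) (hl : 0 < l)
    (v : γ) (hvnew : ∀ i < l, f i ≠ v)
    (hty1 : l % 2 = pa % 2 → v ∈ Y ∧ adj (f (l - 1)) v)
    (hty2 : ¬ (l % 2 = pa % 2) → v ∈ X ∧ adj v (f (l - 1))) :
    IsTrail X Y adj (fun i => if i = l then v else f i) (l + 1) pa := by
  obtain ⟨hinj, hmem, hadj⟩ := h
  refine ⟨?_, ?_, ?_⟩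
  · intro i j hi hj hij
    simp only at hij
    by_cases hi' : i = l <;> by_cases hj' : j = l
    · omega
    · rw [if_pos hi', if_neg hj'] at hij
      exact absurd hij.symm (hvnew j (by omega))
    · rw [if_neg hi', if_pos hj'] at hij
      exact absurd hij (hvnew i (by omega))
    · rw [if_neg hi', if_neg hj'] at hij
      exact hinj i j (by omega) (by omega) hij
  · intro i hi
    by_cases hil : i = l
    · subst hil
      simp only [if_pos rfl]
      constructor
      · intro hp; exact (hty1 hp).1
      · intro hp; exact (hty2 hp).1
    · simp only [if_neg hil]
      exact hmem i (by omega)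
  · intro i hi
    by_cases hil : i + 1 = l
    · have hi0 : i = l - 1 := by omega
      have hine : ¬ (i = l) := by omega
      simp only [if_neg hine, if_pos hil]
      subst hi0
      constructor
      · intro hp
        have : l % 2 = pa % 2 := by omega
        exact (hty1 this).2
      · intro hp
        have : ¬ (l % 2 = pa % 2) := by omega
        exact (hty2 this).2
    · have h1 : ¬ (i = l) := by omega
      have h2 : ¬ (i + 1 = l) := hil
      simp only [if_neg h1, if_neg h2]
      exact hadj i (by omega)

lemma IsTrail.head_ext {f : ℕ → γ} {l pa : ℕ} (h : IsTrail X Y adj f l pa) (hl : 0 < l)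
    (v : γ) (hvnew : ∀ i < l, f i ≠ v)
    (hty1 : pa % 2 = 1 → v ∈ Y ∧ adj (f 0) v)
    (hty2 : pa % 2 = 0 → v ∈ X ∧ adj v (f 0)) :
    IsTrail X Y adj (fun i => if i = 0 then v else f (i - 1)) (l + 1) (pa + 1) := by
  obtain ⟨hinj, hmem, hadj⟩ := h
  refine ⟨?_, ?_, ?_⟩
  · intro i j hi hj hij
    simp only at hij
    rcases Nat.eq_zero_or_pos i with rfl | hi0 <;> rcases Nat.eq_zero_or_pos j with rfl | hj0
    · rfl
    · rw [if_pos rfl, if_neg (by omega)] at hij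
      exact absurd hij.symm (hvnew _ (by omega))
    · rw [if_neg (by omega), if_pos rfl] at hij
      exact absurd hij (hvnew _ (by omega))
    · rw [if_neg (by omega), if_neg (by omega)] at hij
      have := hinj (i - 1) (j - 1) (by omega) (by omega) hij
      omega
  · intro i hi
    rcases Nat.eq_zero_or_pos i with rfl | hi0
    · simp only [if_pos rfl]
      constructor
      · intro hp; exact (hty1 (by omega)).1
      · intro hp; exact (hty2 (by omega)).1
    · simp only [if_neg (by omega : ¬ (i = 0))]
      have := hmem (i - 1) (by omega)
      constructor
      · intro hp; exact this.1 (by omega)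
      · intro hp; exact this.2 (by omega)
  · intro i hi
    rcases Nat.eq_zero_or_pos i with rfl | hi0
    · simp only [if_pos rfl, if_neg (by omega : ¬ (0 + 1 = 0))]
      constructor
      · intro hp
        exact (hty2 (by omega)).2
      · intro hp
        exact (hty1 (by omega)).2
    · simp only [if_neg (by omega : ¬ (i = 0)), if_neg (by omega : ¬ (i + 1 = 0))]
      have := hadj (i - 1) (by omega)
      have heq : i - 1 + 1 = i := by omega
      rw [heq] at this
      constructor
      · intro hp; exact this.1 (by omega)
      · intro hp; exact this.2 (by omega)

/-- three distinct elements satisfying a filter contradict a degree-2 bound -/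
lemma deg2_contra {s : Finset γ} {p : γ → Prop} [DecidablePred p]
    (hc : (s.filter p).card ≤ 2) {a1 a2 a3 : γ}
    (h1 : a1 ∈ s) (h2 : a2 ∈ s) (h3 : a3 ∈ s)
    (p1 : p a1) (p2 : p a2) (p3 : p a3)
    (d12 : a1 ≠ a2) (d13 : a1 ≠ a3) (d23 : a2 ≠ a3) : False := by
  have hsub : ({a1, a2, a3} : Finset γ) ⊆ s.filter p := by
    intro x hx
    simp only [Finset.mem_insert, Finset.mem_singleton] at hx
    rcases hx with rfl | rfl | rfl <;> exact Finset.mem_filter.2 ⟨by assumption, by assumption⟩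
  have hcard : ({a1, a2, a3} : Finset γ).card = 3 := by
    rw [Finset.card_insert_of_notMem (by simp [d12, d13]),
      Finset.card_insert_of_notMem (by simp [d23]), Finset.card_singleton]
  have h3le := Finset.card_le_card hsub
  omega


lemma extract_component [DecidableRel adj]
    (hdisj : ∀ v, v ∈ X → v ∈ Y → False)
    (hdX : ∀ b ∈ X, (Y.filter (fun a => adj b a)).card ≤ 2)
    (hdY : ∀ a ∈ Y, (X.filter (fun b => adj b a)).card ≤ 2)
    (b₀ : γ) (hb₀ : b₀ ∈ X) :
    ∃ (f : ℕ → γ) (l pa : ℕ) (cyc : Bool),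
      0 < l ∧ (cyc = true → l % 2 = 0) ∧
      (∀ i j, i < l → j < l → f i = f j → i = j) ∧
      (∀ i < l, (i % 2 = pa % 2 → f i ∈ Y) ∧ (¬ (i % 2 = pa % 2) → f i ∈ X)) ∧
      (∃ i < l, f i = b₀) ∧
      (∀ i < l, ¬ (i % 2 = pa % 2) → ∀ a ∈ Y, adj (f i) a →
        ∃ j, j < l ∧ f j = a ∧ (j = i + 1 ∨ i = j + 1 ∨
          (cyc = true ∧ ((i = l - 1 ∧ j = 0) ∨ (j = l - 1 ∧ i = 0))))) ∧
      (∀ i < l, i % 2 = pa % 2 → ∀ b ∈ X, adj b (f i) →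
        ∃ j, j < l ∧ f j = b ∧ (j = i + 1 ∨ i = j + 1 ∨
          (cyc = true ∧ ((i = l - 1 ∧ j = 0) ∨ (j = l - 1 ∧ i = 0))))) := by
  classical
  set N := (X ∪ Y).card with hN
  set Q : ℕ → Prop :=
    fun l => ∃ (f : ℕ → γ) (pa : ℕ), IsTrail X Y adj f l pa ∧ ∃ i < l, f i = b₀ with hQ
  have hQ1 : Q 1 := by
    refine ⟨fun _ => b₀, 1, ⟨?_, ?_, ?_⟩, 0, by omega, rfl⟩
    · intro i j hi hj _; omega
    · intro i hi
      have : i = 0 := by omega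
      subst this
      exact ⟨fun h => absurd h (by omega), fun _ => hb₀⟩
    · intro i hi; omega
  have hN1 : 1 ≤ N := by
    rw [hN]
    have : b₀ ∈ X ∪ Y := Finset.mem_union_left _ hb₀
    exact Finset.card_pos.2 ⟨b₀, this⟩
  set l := Nat.findGreatest Q N with hldef
  have hQl : Q l := Nat.findGreatest_spec hN1 hQ1
  have hl1 : 1 ≤ l := Nat.le_findGreatest hN1 hQ1
  obtain ⟨f, pa, htr, i₀, hi₀l, hi₀⟩ := hQl
  have hmax : ∀ (f' : ℕ → γ) (pa' : ℕ), IsTrail X Y adj f' (l + 1) pa' →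
      (∃ i < l + 1, f' i = b₀) → False := by
    intro f' pa' ht hb
    have hQsucc : Q (l + 1) := ⟨f', pa', ht, hb⟩
    have hlt : Nat.findGreatest Q N < l + 1 := by rw [← hldef]; omega
    have hle : l + 1 ≤ N := by rw [hN]; exact ht.length_le
    exact Nat.findGreatest_is_greatest hlt hle hQsucc
  obtain ⟨hinj, hmem, hadj⟩ := htr
  have htr' : IsTrail X Y adj f l pa := ⟨hinj, hmem, hadj⟩
  -- no tail extension
  have hnoT : ∀ v, (∀ i < l, f i ≠ v) →
      (l % 2 = pa % 2 → ¬ (v ∈ Y ∧ adj (f (l - 1)) v)) ∧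
      (¬ (l % 2 = pa % 2) → ¬ (v ∈ X ∧ adj v (f (l - 1)))) := by
    intro v hvnew
    constructor
    · intro hp hvy
      refine hmax _ pa (htr'.tail_ext (by omega) v hvnew (fun _ => hvy)
        (fun h => absurd hp h)) ⟨i₀, by omega, ?_⟩
      simp only [if_neg (by omega : ¬ i₀ = l)]
      exact hi₀
    · intro hp hvy
      refine hmax _ pa (htr'.tail_ext (by omega) v hvnew
        (fun h => absurd h hp) (fun _ => hvy)) ⟨i₀, by omega, ?_⟩
      simp only [if_neg (by omega : ¬ i₀ = l)]
      exact hi₀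
  -- no head extension
  have hnoH : ∀ v, (∀ i < l, f i ≠ v) →
      (pa % 2 = 1 → ¬ (v ∈ Y ∧ adj (f 0) v)) ∧
      (pa % 2 = 0 → ¬ (v ∈ X ∧ adj v (f 0))) := by
    intro v hvnew
    constructor
    · intro hp hvy
      refine hmax _ (pa + 1) (htr'.head_ext (by omega) v hvnew (fun _ => hvy)
        (fun h => by omega)) ⟨i₀ + 1, by omega, ?_⟩
      simp only [if_neg (by omega : ¬ i₀ + 1 = 0), Nat.add_sub_cancel]
      exact hi₀
    · intro hp hvy
      refine hmax _ (pa + 1) (htr'.head_ext (by omega) v hvnew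
        (fun h => by omega) (fun _ => hvy)) ⟨i₀ + 1, by omega, ?_⟩
      simp only [if_neg (by omega : ¬ i₀ + 1 = 0), Nat.add_sub_cancel]
      exact hi₀
  have htyY : ∀ i < l, f i ∈ Y → i % 2 = pa % 2 := by
    intro i hi hfY
    by_contra hp
    exact hdisj _ ((hmem i hi).2 hp) hfY
  have htyX : ∀ i < l, f i ∈ X → ¬ (i % 2 = pa % 2) := by
    intro i hi hfX hp
    exact hdisj _ hfX ((hmem i hi).1 hp)
  -- interior closures
  have hintX : ∀ i, 0 < i → i + 1 < l → ¬ (i % 2 = pa % 2) → ∀ a ∈ Y, adj (f i) a →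
      a = f (i - 1) ∨ a = f (i + 1) := by
    intro i h0 h1 hp a ha hadja
    by_contra hcon
    push_neg at hcon
    obtain ⟨hne1, hne2⟩ := hcon
    have hY1 : f (i - 1) ∈ Y := (hmem (i - 1) (by omega)).1 (by omega)
    have hY2 : f (i + 1) ∈ Y := (hmem (i + 1) (by omega)).1 (by omega)
    have ha1 : adj (f i) (f (i - 1)) := by
      have := (hadj (i - 1) (by omega)).2 (by omega)
      have heq : i - 1 + 1 = i := by omega
      rwa [heq] at this
    have ha2 : adj (f i) (f (i + 1)) := (hadj i (by omega)).1 hp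
    have hd12 : f (i - 1) ≠ f (i + 1) := fun h => by
      have := hinj _ _ (by omega) (by omega) h; omega
    exact deg2_contra (hdX (f i) ((hmem i (by omega)).2 hp)) hY1 hY2 ha
      ha1 ha2 hadja hd12 (fun h => hne1 h.symm) (fun h => hne2 h.symm)
  have hintY : ∀ i, 0 < i → i + 1 < l → i % 2 = pa % 2 → ∀ b ∈ X, adj b (f i) →
      b = f (i - 1) ∨ b = f (i + 1) := by
    intro i h0 h1 hp b hb hadjb
    by_contra hcon
    push_neg at hcon
    obtain ⟨hne1, hne2⟩ := hcon
    have hX1 : f (i - 1) ∈ X := (hmem (i - 1) (by omega)).2 (by omega)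
    have hX2 : f (i + 1) ∈ X := (hmem (i + 1) (by omega)).2 (by omega)
    have ha1 : adj (f (i - 1)) (f i) := by
      have := (hadj (i - 1) (by omega)).1 (by omega)
      have heq : i - 1 + 1 = i := by omega
      rwa [heq] at this
    have ha2 : adj (f (i + 1)) (f i) := (hadj i (by omega)).2 hp
    have hd12 : f (i - 1) ≠ f (i + 1) := fun h => by
      have := hinj _ _ (by omega) (by omega) h; omega
    exact deg2_contra (hdY (f i) ((hmem i (by omega)).1 hp)) hX1 hX2 hb
      ha1 ha2 hadjb hd12 (fun h => hne1 h.symm) (fun h => hne2 h.symm)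
  -- end closures
  have hEheadX : pa % 2 = 1 → ∀ a ∈ Y, adj (f 0) a →
      (1 < l ∧ a = f 1) ∨ (a = f (l - 1) ∧ l % 2 = 0 ∧ 1 < l) := by
    intro hpa a ha hadja
    by_cases hex : ∃ j, j < l ∧ f j = a
    · obtain ⟨j, hjl, hja⟩ := hex
      have hjpa : j % 2 = pa % 2 := htyY j hjl (hja ▸ ha)
      by_cases hjlast : j = l - 1
      · right
        refine ⟨by rw [← hja, hjlast], by omega, by omega⟩
      · have hint := hintY j (by omega) (by omega) hjpa (f 0)
          ((hmem 0 (by omega)).2 (by omega)) (by rw [hja]; exact hadja)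
        rcases hint with h | h
        · have := hinj _ _ (by omega) (by omega) h
          left
          exact ⟨by omega, by rw [← hja]; congr 1; omega⟩
        · have := hinj _ _ (by omega) (by omega) h
          omega
    · push_neg at hex
      exact absurd ⟨ha, hadja⟩ ((hnoH a hex).1 hpa)
  have hEheadY : pa % 2 = 0 → ∀ b ∈ X, adj b (f 0) →
      (1 < l ∧ b = f 1) ∨ (b = f (l - 1) ∧ l % 2 = 0 ∧ 1 < l) := by
    intro hpa b hb hadjb
    by_cases hex : ∃ j, j < l ∧ f j = b
    · obtain ⟨j, hjl, hjb⟩ := hex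
      have hjpa : ¬ (j % 2 = pa % 2) := htyX j hjl (hjb ▸ hb)
      by_cases hjlast : j = l - 1
      · right
        refine ⟨by rw [← hjb, hjlast], by omega, by omega⟩
      · have hint := hintX j (by omega) (by omega) hjpa (f 0)
          ((hmem 0 (by omega)).1 (by omega)) (by rw [hjb]; exact hadjb)
        rcases hint with h | h
        · have := hinj _ _ (by omega) (by omega) h
          left
          exact ⟨by omega, by rw [← hjb]; congr 1; omega⟩
        · have := hinj _ _ (by omega) (by omega) h
          omega
    · push_neg at hex
      exact absurd ⟨hb, hadjb⟩ ((hnoH b hex).2 hpa)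
  have hEtailX : ¬ ((l - 1) % 2 = pa % 2) → ∀ a ∈ Y, adj (f (l - 1)) a →
      (1 < l ∧ a = f (l - 2)) ∨ (a = f 0 ∧ l % 2 = 0 ∧ 1 < l) := by
    intro hpa a ha hadja
    by_cases hex : ∃ j, j < l ∧ f j = a
    · obtain ⟨j, hjl, hja⟩ := hex
      have hjpa : j % 2 = pa % 2 := htyY j hjl (hja ▸ ha)
      by_cases hj0 : j = 0
      · right
        refine ⟨by rw [← hja, hj0], by omega, by omega⟩
      · have hint := hintY j (by omega) (by omega) hjpa (f (l - 1))
          ((hmem (l - 1) (by omega)).2 hpa) (by rw [hja]; exact hadja)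
        rcases hint with h | h
        · have := hinj _ _ (by omega) (by omega) h
          omega
        · have := hinj _ _ (by omega) (by omega) h
          left
          exact ⟨by omega, by rw [← hja]; congr 1; omega⟩
    · push_neg at hex
      exact absurd ⟨ha, hadja⟩ ((hnoT a hex).1 (by omega))
  have hEtailY : (l - 1) % 2 = pa % 2 → ∀ b ∈ X, adj b (f (l - 1)) →
      (1 < l ∧ b = f (l - 2)) ∨ (b = f 0 ∧ l % 2 = 0 ∧ 1 < l) := by
    intro hpa b hb hadjb
    by_cases hex : ∃ j, j < l ∧ f j = b
    · obtain ⟨j, hjl, hjb⟩ := hex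
      have hjpa : ¬ (j % 2 = pa % 2) := htyX j hjl (hjb ▸ hb)
      by_cases hj0 : j = 0
      · right
        refine ⟨by rw [← hjb, hj0], by omega, by omega⟩
      · have hint := hintX j (by omega) (by omega) hjpa (f (l - 1))
          ((hmem (l - 1) (by omega)).1 hpa) (by rw [hjb]; exact hadjb)
        rcases hint with h | h
        · have := hinj _ _ (by omega) (by omega) h
          omega
        · have := hinj _ _ (by omega) (by omega) h
          left
          exact ⟨by omega, by rw [← hjb]; congr 1; omega⟩
    · push_neg at hex
      exact absurd ⟨hb, hadjb⟩ ((hnoT b hex).2 (by omega))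
  -- case split on whether the trail closes into a cycle
  by_cases hcy : (l % 2 = 0 ∧ 1 < l) ∧
      ((pa % 2 = 0 ∧ adj (f (l - 1)) (f 0)) ∨ (pa % 2 = 1 ∧ adj (f 0) (f (l - 1))))
  · -- cycle component
    refine ⟨f, l, pa, true, by omega, fun _ => hcy.1.1, hinj, hmem, ⟨i₀, hi₀l, hi₀⟩, ?_, ?_⟩
    · intro i hil hip a ha hadja
      by_cases hi0 : i = 0
      · subst hi0
        rcases hEheadX (by omega) a ha hadja with ⟨h1, h2⟩ | ⟨h2, h3, h4⟩
        · exact ⟨1, by omega, h2.symm, by omega⟩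
        · refine ⟨l - 1, by omega, h2.symm, ?_⟩
          refine Or.inr (Or.inr ⟨rfl, ?_⟩)
          omega
      · by_cases hilast : i = l - 1
        · rcases hEtailX (by rw [← hilast]; exact hip) a ha
            (by rw [← hilast]; exact hadja) with ⟨h1, h2⟩ | ⟨h2, h3, h4⟩
          · exact ⟨l - 2, by omega, h2.symm, by omega⟩
          · refine ⟨0, by omega, h2.symm, ?_⟩
            refine Or.inr (Or.inr ⟨rfl, ?_⟩)
            omega
        · rcases hintX i (by omega) (by omega) hip a ha hadja with h | h
          · exact ⟨i - 1, by omega, h.symm, by omega⟩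
          · exact ⟨i + 1, by omega, h.symm, by omega⟩
    · intro i hil hip b hb hadjb
      by_cases hi0 : i = 0
      · subst hi0
        rcases hEheadY (by omega) b hb hadjb with ⟨h1, h2⟩ | ⟨h2, h3, h4⟩
        · exact ⟨1, by omega, h2.symm, by omega⟩
        · refine ⟨l - 1, by omega, h2.symm, ?_⟩
          refine Or.inr (Or.inr ⟨rfl, ?_⟩)
          omega
      · by_cases hilast : i = l - 1
        · rcases hEtailY (by rw [← hilast]; exact hip) b hb
            (by rw [← hilast]; exact hadjb) with ⟨h1, h2⟩ | ⟨h2, h3, h4⟩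
          · exact ⟨l - 2, by omega, h2.symm, by omega⟩
          · refine ⟨0, by omega, h2.symm, ?_⟩
            refine Or.inr (Or.inr ⟨rfl, ?_⟩)
            omega
        · rcases hintY i (by omega) (by omega) hip b hb hadjb with h | h
          · exact ⟨i - 1, by omega, h.symm, by omega⟩
          · exact ⟨i + 1, by omega, h.symm, by omega⟩
  · -- path component
    refine ⟨f, l, pa, false, by omega, by simp, hinj, hmem, ⟨i₀, hi₀l, hi₀⟩, ?_, ?_⟩
    · intro i hil hip a ha hadja
      by_cases hi0 : i = 0
      · subst hi0
        rcases hEheadX (by omega) a ha hadja with ⟨h1, h2⟩ | ⟨h2, h3, h4⟩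
        · exact ⟨1, by omega, h2.symm, by omega⟩
        · exfalso
          apply hcy
          refine ⟨⟨h3, h4⟩, Or.inr ⟨by omega, by rw [← h2]; exact hadja⟩⟩
      · by_cases hilast : i = l - 1
        · rcases hEtailX (by rw [← hilast]; exact hip) a ha
            (by rw [← hilast]; exact hadja) with ⟨h1, h2⟩ | ⟨h2, h3, h4⟩
          · exact ⟨l - 2, by omega, h2.symm, by omega⟩
          · exfalso
            apply hcy
            have hpa0 : pa % 2 = 0 := by omega
            refine ⟨⟨h3, h4⟩, Or.inl ⟨hpa0, ?_⟩⟩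
            have : adj (f (l - 1)) a := by rw [← hilast]; exact hadja
            rwa [h2] at this
        · rcases hintX i (by omega) (by omega) hip a ha hadja with h | h
          · exact ⟨i - 1, by omega, h.symm, by omega⟩
          · exact ⟨i + 1, by omega, h.symm, by omega⟩
    · intro i hil hip b hb hadjb
      by_cases hi0 : i = 0
      · subst hi0
        rcases hEheadY (by omega) b hb hadjb with ⟨h1, h2⟩ | ⟨h2, h3, h4⟩
        · exact ⟨1, by omega, h2.symm, by omega⟩
        · exfalso
          apply hcy
          refine ⟨⟨h3, h4⟩, Or.inl ⟨by omega, ?_⟩⟩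
          rw [h2] at hadjb
          exact hadjb
      · by_cases hilast : i = l - 1
        · rcases hEtailY (by rw [← hilast]; exact hip) b hb
            (by rw [← hilast]; exact hadjb) with ⟨h1, h2⟩ | ⟨h2, h3, h4⟩
          · exact ⟨l - 2, by omega, h2.symm, by omega⟩
          · exfalso
            apply hcy
            refine ⟨⟨h3, h4⟩, Or.inr ⟨by omega, ?_⟩⟩
            have hadjb' : adj b (f (l - 1)) := by rw [← hilast]; exact hadjb
            rw [h2] at hadjb'
            exact hadjb'
        · rcases hintY i (by omega) (by omega) hip b hb hadjb with h | h
          · exact ⟨i - 1, by omega, h.symm, by omega⟩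
          · exact ⟨i + 1, by omega, h.symm, by omega⟩



end Trail

/-- The core combinatorial lemma: in a bipartite graph with both-side degrees `≤ 2`,
if every small "window" move satisfies `w(T) ≤ w(Z)`, then `t·w(X) ≤ (t+1)·w(Y)`. -/
lemma core_lemma (t : ℕ) (adj : γ → γ → Prop) [DecidableRel adj] (w : γ → ℝ) :
    ∀ (n : ℕ) (X Y : Finset γ), X.card ≤ n →
    (∀ v, v ∈ X → v ∈ Y → False) →
    (∀ b ∈ X, (Y.filter (fun a => adj b a)).card ≤ 2) →
    (∀ a ∈ Y, (X.filter (fun b => adj b a)).card ≤ 2) →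
    (∀ b ∈ X, 0 ≤ w b) → (∀ a ∈ Y, 0 ≤ w a) →
    (∀ T Z : Finset γ, T ⊆ X → Z ⊆ Y →
      (∀ b ∈ T, ∀ a ∈ Y, adj b a → a ∈ Z) →
      T.card + Z.card ≤ 2 * t + 1 → ∑ e ∈ T, w e ≤ ∑ e ∈ Z, w e) →
    (t : ℝ) * ∑ e ∈ X, w e ≤ (t + 1) * ∑ e ∈ Y, w e := by
  intro n
  induction n with
  | zero =>
    intro X Y hcard hdisj hdX hdY hwX hwY hmv
    have hX : X = ∅ := Finset.card_eq_zero.1 (by omega)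
    subst hX
    simp only [Finset.sum_empty, mul_zero]
    have : 0 ≤ ∑ e ∈ Y, w e := Finset.sum_nonneg fun a ha => hwY a ha
    positivity
  | succ n ih =>
    intro X Y hcard hdisj hdX hdY hwX hwY hmv
    rcases X.eq_empty_or_nonempty with rfl | ⟨b₀, hb₀⟩
    · simp only [Finset.sum_empty, mul_zero]
      have : 0 ≤ ∑ e ∈ Y, w e := Finset.sum_nonneg fun a ha => hwY a ha
      positivity
    · obtain ⟨f, l, pa, cyc, hl0, hcyceven, hinj, hmem, ⟨i₀, hi₀l, hi₀⟩, hclX, hclY⟩ :=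
        extract_component hdisj hdX hdY b₀ hb₀
      set C := (range l).image f with hC
      set CX := ((range l).filter (fun i => ¬ (i % 2 = pa % 2))).image f with hCX
      set CY := ((range l).filter (fun i => i % 2 = pa % 2)).image f with hCY
      have hmemX : ∀ i < l, ¬ (i % 2 = pa % 2) → f i ∈ X := fun i hi hp => (hmem i hi).2 hp
      have hmemY : ∀ i < l, i % 2 = pa % 2 → f i ∈ Y := fun i hi hp => (hmem i hi).1 hp
      have hCXX : CX ⊆ X := by
        intro e he
        rw [hCX] at he
        obtain ⟨i, hi, rfl⟩ := Finset.mem_image.1 he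
        rw [Finset.mem_filter, Finset.mem_range] at hi
        exact hmemX i hi.1 hi.2
      have hCYY : CY ⊆ Y := by
        intro e he
        rw [hCY] at he
        obtain ⟨i, hi, rfl⟩ := Finset.mem_image.1 he
        rw [Finset.mem_filter, Finset.mem_range] at hi
        exact hmemY i hi.1 hi.2
      have hXdiff : X \ C = X \ CX := by
        ext e
        simp only [Finset.mem_sdiff, hC, hCX, Finset.mem_image, Finset.mem_range,
          Finset.mem_filter]
        constructor
        · rintro ⟨heX, hne⟩
          exact ⟨heX, fun ⟨i, ⟨hi, _⟩, hfi⟩ => hne ⟨i, hi, hfi⟩⟩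
        · rintro ⟨heX, hne⟩
          refine ⟨heX, fun ⟨i, hi, hfi⟩ => hne ⟨i, ⟨hi, ?_⟩, hfi⟩⟩
          intro hp
          exact hdisj e heX (hfi ▸ hmemY i hi hp)
      have hYdiff : Y \ C = Y \ CY := by
        ext e
        simp only [Finset.mem_sdiff, hC, hCY, Finset.mem_image, Finset.mem_range,
          Finset.mem_filter]
        constructor
        · rintro ⟨heY, hne⟩
          exact ⟨heY, fun ⟨i, ⟨hi, _⟩, hfi⟩ => hne ⟨i, hi, hfi⟩⟩
        · rintro ⟨heY, hne⟩
          refine ⟨heY, fun ⟨i, hi, hfi⟩ => hne ⟨i, ⟨hi, ?_⟩, hfi⟩⟩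
          by_contra hp
          exact hdisj e (hfi ▸ hmemX i hi hp) heY
      -- component inequality, in index form
      have hcomp : (t : ℝ) * ∑ i ∈ (range l).filter (fun i => ¬ (i % 2 = pa % 2)), w (f i) ≤
          (t + 1) * ∑ i ∈ (range l).filter (fun i => i % 2 = pa % 2), w (f i) := by
        by_cases hshort : l ≤ 2 * t
        · refine whole_window hshort hmv (fun i hi j hj => hinj i j hi hj) hmemX hmemY hwY ?_
          intro i hil hip a ha hadja
          obtain ⟨j, hjl, hja, hrel⟩ := hclX i hil hip a ha hadja
          refine ⟨j, hjl, ?_, hja⟩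
          rcases hrel with h | h | ⟨hcyc, h⟩
          · omega
          · omega
          · have heven := hcyceven hcyc
            omega
        · cases cyc with
          | false =>
            refine path_windows hmv (fun i hi j hj => hinj i j hi hj) hmemX hmemY hwX hwY ?_
            intro i hil hip a ha hadja
            obtain ⟨j, hjl, hja, hrel⟩ := hclX i hil hip a ha hadja
            refine ⟨j, hjl, ?_, hja⟩
            rcases hrel with h | h | ⟨hcyc, h⟩
            · omega
            · omega
            · exact absurd hcyc (by simp)
          | true =>
            refine cycle_windows (by omega) (hcyceven rfl) hmv (fun i hi j hj => hinj i j hi hj) hmemX hmemY hwX hwY ?_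
            intro i hil hip a ha hadja
            obtain ⟨j, hjl, hja, hrel⟩ := hclX i hil hip a ha hadja
            refine ⟨j, hjl, ?_, hja⟩
            rcases hrel with h | h | ⟨hcyc, h⟩
            · omega
            · omega
            · omega
      -- translate to element sums
      have hsumCX : ∑ i ∈ (range l).filter (fun i => ¬ (i % 2 = pa % 2)), w (f i) =
          ∑ e ∈ CX, w e := by
        rw [hCX]
        refine (Finset.sum_image ?_).symm
        intro i hi j hj hij
        rw [Finset.mem_coe, Finset.mem_filter, Finset.mem_range] at hi hj
        exact hinj i j hi.1 hj.1 hij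
      have hsumCY : ∑ i ∈ (range l).filter (fun i => i % 2 = pa % 2), w (f i) =
          ∑ e ∈ CY, w e := by
        rw [hCY]
        refine (Finset.sum_image ?_).symm
        intro i hi j hj hij
        rw [Finset.mem_coe, Finset.mem_filter, Finset.mem_range] at hi hj
        exact hinj i j hi.1 hj.1 hij
      -- recursion
      have hb₀C : b₀ ∈ C := by
        rw [hC]
        exact Finset.mem_image.2 ⟨i₀, Finset.mem_range.2 hi₀l, hi₀⟩
      have hcard' : (X \ C).card ≤ n := by
        have hssub : X \ C ⊂ X := by
          refine Finset.ssubset_iff_of_subset (Finset.sdiff_subset) |>.2 ?_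
          exact ⟨b₀, hb₀, by simp [hb₀C]⟩
        have := Finset.card_lt_card hssub
        omega
      have hrec := ih (X \ C) (Y \ C) hcard'
        (fun v hv hv' => hdisj v (Finset.sdiff_subset hv) (Finset.sdiff_subset hv'))
        (fun b hb => le_trans (Finset.card_le_card
          (Finset.filter_subset_filter _ (Finset.sdiff_subset))) (hdX b (Finset.sdiff_subset hb)))
        (fun a ha => le_trans (Finset.card_le_card
          (Finset.filter_subset_filter _ (Finset.sdiff_subset))) (hdY a (Finset.sdiff_subset ha)))
        (fun b hb => hwX b (Finset.sdiff_subset hb))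
        (fun a ha => hwY a (Finset.sdiff_subset ha))
        ?_
      · -- combine
        have hsplitX : ∑ e ∈ X, w e = ∑ e ∈ X \ CX, w e + ∑ e ∈ CX, w e :=
          (Finset.sum_sdiff hCXX).symm
        have hsplitY : ∑ e ∈ Y, w e = ∑ e ∈ Y \ CY, w e + ∑ e ∈ CY, w e :=
          (Finset.sum_sdiff hCYY).symm
        rw [hsumCX, hsumCY] at hcomp
        rw [hXdiff, hYdiff] at hrec
        rw [hsplitX, hsplitY]
        ring_nf
        ring_nf at hrec hcomp
        linarith
      · -- move hypothesis for the remainder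
        intro T Z hT hZ hcl hsz
        refine hmv T Z (hT.trans Finset.sdiff_subset) (hZ.trans Finset.sdiff_subset) ?_ hsz
        intro b hb a ha hadj
        by_cases haC : a ∈ C
        · exfalso
          rw [hC] at haC
          obtain ⟨i, hi, rfl⟩ := Finset.mem_image.1 haC
          rw [Finset.mem_range] at hi
          have hip : i % 2 = pa % 2 := by
            by_contra hp
            exact hdisj _ (hmemX i hi hp) ha
          obtain ⟨j, hjl, hjb, -⟩ := hclY i hi hip b (hT hb |> fun h => Finset.sdiff_subset h)
            hadj
          have : b ∈ C := by
            rw [hC]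
            exact Finset.mem_image.2 ⟨j, Finset.mem_range.2 hjl, hjb⟩
          exact (Finset.mem_sdiff.1 (hT hb)).2 this
        · exact hcl b hb a (Finset.mem_sdiff.2 ⟨ha, haC⟩) hadj

end PTASWindowLemmas

section FixLemma
/-- The exchange bijection of a strongly base orderable matroid can be modified to fix
the intersection of the two bases pointwise. -/
lemma fix_bijection {β : Type*} (M : Matroid β) (I J : Set β)
    (hfinI : I.Finite) (hfinJ : J.Finite)
    (π : β → β) (hbij : Set.BijOn π I J)
    (hexch : ∀ K ⊆ I, M.IsBase (π '' K ∪ (I \ K))) :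
    ∃ π' : β → β, Set.BijOn π' I J ∧ (∀ x ∈ I ∩ J, π' x = x) ∧
      ∀ K ⊆ I, M.IsBase (π' '' K ∪ (I \ K)) := by
  classical
  set C : Set β := I ∩ J with hC
  -- iterates of π starting in I and staying in C remain in I
  have iter_inj : ∀ (k : ℕ) (x y : β), (∀ j < k, π^[j] x ∈ I) → (∀ j < k, π^[j] y ∈ I) →
      π^[k] x = π^[k] y → x = y := by
    intro k
    induction k with
    | zero => intro x y _ _ h; simpa using h
    | succ k ihk =>
      intro x y hx hy h
      rw [Function.iterate_succ_apply', Function.iterate_succ_apply'] at h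
      have := hbij.injOn (hx k (by omega)) (hy k (by omega)) h
      exact ihk x y (fun j hj => hx j (by omega)) (fun j hj => hy j (by omega)) this
  have pigeon : ∀ x ∈ I, (∀ j, 1 ≤ j → π^[j] x ∈ C) → ∃ p, 1 ≤ p ∧ π^[p] x = x := by
    intro x hxI hcyc
    have hmap : Set.MapsTo (fun k : ℕ => π^[k + 1] x) Set.univ C := by
      intro k _
      exact hcyc (k + 1) (by omega)
    have hCfin : C.Finite := hfinI.subset Set.inter_subset_left
    obtain ⟨m, -, n, -, hmn, heq⟩ :=
      Set.Infinite.exists_ne_map_eq_of_mapsTo Set.infinite_univ hmap hCfin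
    have hiterI : ∀ j, π^[j] x ∈ I := by
      intro j
      cases j with
      | zero => exact hxI
      | succ j => exact (hcyc (j + 1) (by omega)).1
    rcases Nat.lt_or_ge m n with h | h
    · have heq2 : π^[m + 1] x = π^[m + 1] (π^[n - m] x) := by
        rw [← Function.iterate_add_apply]
        have : m + 1 + (n - m) = n + 1 := by omega
        rw [this]
        exact heq
      have := iter_inj (m + 1) x (π^[n - m] x) (fun j _ => hiterI j)
        (fun j _ => by rw [← Function.iterate_add_apply]; exact hiterI _) heq2
      exact ⟨n - m, by omega, this.symm⟩
    · have hnm : n < m := by omega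
      have heq2 : π^[n + 1] x = π^[n + 1] (π^[m - n] x) := by
        rw [← Function.iterate_add_apply]
        have : n + 1 + (m - n) = m + 1 := by omega
        rw [this]
        exact heq.symm
      have := iter_inj (n + 1) x (π^[m - n] x) (fun j _ => hiterI j)
        (fun j _ => by rw [← Function.iterate_add_apply]; exact hiterI _) heq2
      exact ⟨m - n, by omega, this.symm⟩
  -- termination of forward chases
  have hterm : ∀ x ∈ I \ J, ∃ k, 1 ≤ k ∧ π^[k] x ∉ C := by
    intro x hx
    by_contra hcon
    push_neg at hcon
    obtain ⟨p, hp1, hpx⟩ := pigeon x hx.1 hcon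
    have : x ∈ C := hpx ▸ hcon p hp1
    exact hx.2 this.2
  -- chain bookkeeping
  have chainI : ∀ (x : β), x ∈ I → ∀ (j : ℕ), (∀ j', 1 ≤ j' → j' ≤ j → π^[j'] x ∈ C) →
      ∀ j' ≤ j, π^[j'] x ∈ I := by
    intro x hxI j hch j' hj'
    cases j' with
    | zero => exact hxI
    | succ j' => exact (hch (j' + 1) (by omega) hj').1
  set πk : β → ℕ := fun x => if hx : ∃ k, 1 ≤ k ∧ π^[k] x ∉ C then Nat.find hx else 0 with hπk
  have hk_spec : ∀ x ∈ I \ J, 1 ≤ πk x ∧ π^[πk x] x ∉ C ∧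
      (∀ j, 1 ≤ j → j < πk x → π^[j] x ∈ C) := by
    intro x hx
    have hex := hterm x hx
    rw [hπk]
    simp only [dif_pos hex]
    refine ⟨(Nat.find_spec hex).1, (Nat.find_spec hex).2, ?_⟩
    intro j hj1 hjlt
    by_contra hout
    exact Nat.find_min hex hjlt ⟨hj1, hout⟩
  set π' : β → β := fun x => if x ∈ I \ J then π^[πk x] x else x with hπ'
  have hval_in : ∀ x ∈ I \ J, π' x = π^[πk x] x := by
    intro x hx; rw [hπ']; simp only [if_pos hx]
  have hval_out : ∀ x, x ∉ I \ J → π' x = x := by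
    intro x hx; rw [hπ']; simp only [if_neg hx]
  -- basic chain facts for x ∈ I \ J
  have hchainI : ∀ x ∈ I \ J, ∀ j < πk x, π^[j] x ∈ I := by
    intro x hx j hj
    obtain ⟨h1, h2, h3⟩ := hk_spec x hx
    cases j with
    | zero => exact hx.1
    | succ j => exact (h3 (j + 1) (by omega) hj).1
  have hexitJ : ∀ x ∈ I \ J, π' x ∈ J \ I := by
    intro x hx
    obtain ⟨h1, h2, h3⟩ := hk_spec x hx
    have hJ : π^[πk x] x ∈ J := by
      have : πk x = (πk x - 1) + 1 := by omega
      rw [this, Function.iterate_succ_apply']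
      exact hbij.mapsTo (hchainI x hx (πk x - 1) (by omega))
    rw [hval_in x hx]
    refine ⟨hJ, fun hI => h2 ⟨hI, hJ⟩⟩
  -- `π'` is a bijection from I to J
  have hmapsTo : Set.MapsTo π' I J := by
    intro x hxI
    by_cases hxJ : x ∈ J
    · rw [hval_out x (fun h => h.2 hxJ)]; exact hxJ
    · exact (hexitJ x ⟨hxI, hxJ⟩).1
  have hinjOn : Set.InjOn π' I := by
    intro x hxI y hyI hxy
    by_cases hxJ : x ∈ J <;> by_cases hyJ : y ∈ J
    · rw [hval_out x (fun h => h.2 hxJ), hval_out y (fun h => h.2 hyJ)] at hxy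
      exact hxy
    · exfalso
      rw [hval_out x (fun h => h.2 hxJ)] at hxy
      exact (hexitJ y ⟨hyI, hyJ⟩).2 (hxy ▸ hxI)
    · exfalso
      rw [hval_out y (fun h => h.2 hyJ)] at hxy
      exact (hexitJ x ⟨hxI, hxJ⟩).2 (hxy.symm ▸ hyI)
    · -- both chains exit; equal exits force equal chains
      have hx' : x ∈ I \ J := ⟨hxI, hxJ⟩
      have hy' : y ∈ I \ J := ⟨hyI, hyJ⟩
      rw [hval_in x hx', hval_in y hy'] at hxy
      obtain ⟨hx1, hx2, hx3⟩ := hk_spec x hx'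
      obtain ⟨hy1, hy2, hy3⟩ := hk_spec y hy'
      -- wlog πk x ≤ πk y
      have main : ∀ u v : β, u ∈ I \ J → v ∈ I \ J → πk u ≤ πk v →
          π^[πk u] u = π^[πk v] v → u = v := by
        intro u v hu hv hle heq
        obtain ⟨hu1, hu2, hu3⟩ := hk_spec u hu
        obtain ⟨hv1, hv2, hv3⟩ := hk_spec v hv
        have heq2 : π^[πk u] u = π^[πk u] (π^[πk v - πk u] v) := by
          rw [← Function.iterate_add_apply]
          have : πk u + (πk v - πk u) = πk v := by omega
          rw [this]; exact heq
        have huv := iter_inj (πk u) u (π^[πk v - πk u] v)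
          (fun j hj => hchainI u hu j hj)
          (fun j hj => by
            rw [← Function.iterate_add_apply]
            exact hchainI v hv (j + (πk v - πk u)) (by omega)) heq2
        by_cases hlt : πk u < πk v
        · exfalso
          have : π^[πk v - πk u] v ∈ C := hv3 _ (by omega) (by omega)
          rw [← huv] at this
          exact hu.2 this.2
        · have : πk u = πk v := by omega
          rw [this] at huv
          simpa using huv
      rcases le_total (πk x) (πk y) with h | h
      · exact main x y hx' hy' h hxy
      · exact (main y x hy' hx' h hxy.symm).symm
  have himage : π' '' I = J := by
    have hsub : π' '' I ⊆ J := Set.mapsTo_iff_image_subset.1 hmapsTo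
    have hIJcard : I.ncard = J.ncard := by
      rw [← hbij.image_eq]
      exact (Set.ncard_image_of_injOn hbij.injOn).symm
    have hcard2 : (π' '' I).ncard = J.ncard := by
      rw [Set.ncard_image_of_injOn hinjOn, hIJcard]
    exact Set.eq_of_subset_of_ncard_le hsub (le_of_eq hcard2.symm) hfinJ
  have hfixC : ∀ x ∈ I ∩ J, π' x = x := fun x hx => hval_out x (fun h => h.2 hx.2)
  refine ⟨π', ⟨hmapsTo, hinjOn, fun y hy => by rw [← himage] at hy; exact hy⟩, hfixC, ?_⟩
  intro K hK
  set Ch : Set β := {y | ∃ x, x ∈ K ∧ x ∉ J ∧ ∃ j, 1 ≤ j ∧ j < πk x ∧ y = π^[j] x} with hCh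
  set Cy : Set β := {y | y ∈ C ∧ (∀ j, 1 ≤ j → π^[j] y ∈ C) ∧ ∃ j, π^[j] y ∈ K} with hCy
  set Khat : Set β := ((K \ J) ∪ Ch) ∪ Cy with hKhat
  have hChC : Ch ⊆ C := by
    intro y hy
    rw [hCh] at hy
    obtain ⟨x, hxK, hxJ, j, hj1, hjlt, rfl⟩ := hy
    exact (hk_spec x ⟨hK hxK, hxJ⟩).2.2 j hj1 hjlt
  have hKhatI : Khat ⊆ I := by
    intro y hy
    rcases hy with (hy | hy) | hy
    · exact hK hy.1
    · exact (hChC hy).1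
    · exact hy.1.1
  have hCright : ∀ y ∈ C, y ∈ π' '' K ∪ (I \ K) := by
    intro y hy
    by_cases hyK : y ∈ K
    · exact Or.inl ⟨y, hyK, hval_out y (fun h => h.2 hy.2)⟩
    · exact Or.inr ⟨hy.1, hyK⟩
  have hpred : ∀ y, y ∈ Ch ∪ Cy → y ∈ π '' Khat := by
    intro y hy
    rcases hy with hy | hy
    · rw [hCh] at hy
      obtain ⟨x, hxK, hxJ, j, hj1, hjlt, rfl⟩ := hy
      refine ⟨π^[j - 1] x, ?_, ?_⟩
      · rcases Nat.eq_or_lt_of_le hj1 with h1 | h1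
        · have : π^[j - 1] x = x := by rw [← h1]; rfl
          rw [this]
          exact Or.inl (Or.inl ⟨hxK, hxJ⟩)
        · exact Or.inl (Or.inr ⟨x, hxK, hxJ, j - 1, by omega, by omega, rfl⟩)
      · have hj' : j = (j - 1) + 1 := by omega
        conv_rhs => rw [hj', Function.iterate_succ_apply']
    · rw [hCy] at hy
      obtain ⟨hyC, hcyc, j₀, hj₀⟩ := hy
      obtain ⟨p, hp1, hpx⟩ := pigeon y hyC.1 hcyc
      refine ⟨π^[p - 1] y, Or.inr ?_, ?_⟩
      · rw [hCy]
        refine ⟨?_, ?_, ⟨j₀ + 1, ?_⟩⟩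
        · rcases Nat.eq_or_lt_of_le hp1 with h1 | h1
          · have : π^[p - 1] y = y := by rw [← h1]; rfl
            rw [this]; exact hyC
          · exact hcyc (p - 1) (by omega)
        · intro j hj
          rw [← Function.iterate_add_apply]
          exact hcyc (j + (p - 1)) (by omega)
        · rw [← Function.iterate_add_apply]
          have harr : j₀ + 1 + (p - 1) = j₀ + p := by omega
          rw [harr]
          have : π^[j₀ + p] y = π^[j₀] (π^[p] y) := Function.iterate_add_apply π j₀ p y
          rw [this, hpx]
          exact hj₀
      · have hp' : π (π^[p - 1] y) = π^[p] y := by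
          conv_rhs => rw [show p = (p - 1) + 1 by omega, Function.iterate_succ_apply']
        rw [hp']
        exact hpx
  have hsub1 : π '' Khat ∪ (I \ Khat) ⊆ π' '' K ∪ (I \ K) := by
    rintro z (⟨y, hyKhat, rfl⟩ | hz)
    · rcases hyKhat with (hy | hy) | hy
      · have hy' : y ∈ I \ J := ⟨hK hy.1, hy.2⟩
        obtain ⟨h1, h2, h3⟩ := hk_spec y hy'
        by_cases hk1 : πk y = 1
        · refine Or.inl ⟨y, hy.1, ?_⟩
          rw [hval_in y hy', hk1]
          simp
        · have : π y ∈ C := by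
            have := h3 1 le_rfl (by omega)
            simpa using this
          exact hCright _ this
      · rw [hCh] at hy
        obtain ⟨x, hxK, hxJ, j, hj1, hjlt, rfl⟩ := hy
        have hx' : x ∈ I \ J := ⟨hK hxK, hxJ⟩
        have hstep : π (π^[j] x) = π^[j + 1] x := (Function.iterate_succ_apply' π j x).symm
        rw [hstep]
        by_cases hj2 : j + 1 = πk x
        · refine Or.inl ⟨x, hxK, ?_⟩
          rw [hval_in x hx', ← hj2]
        · have : π^[j + 1] x ∈ C := (hk_spec x hx').2.2 (j + 1) (by omega) (by omega)
          exact hCright _ this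
      · have : π y ∈ C := by
          have := hy.2.1 1 le_rfl
          simpa using this
        exact hCright _ this
    · by_cases hzC : z ∈ C
      · exact hCright _ hzC
      · refine Or.inr ⟨hz.1, fun hzK => ?_⟩
        have hzJ : z ∉ J := fun hzJ => hzC ⟨hz.1, hzJ⟩
        exact hz.2 (Or.inl (Or.inl ⟨hzK, hzJ⟩))
  have hsub2 : π' '' K ∪ (I \ K) ⊆ π '' Khat ∪ (I \ Khat) := by
    rintro z (⟨x, hxK, rfl⟩ | hz)
    · by_cases hxJ : x ∈ J
      · rw [hval_out x (fun h => h.2 hxJ)]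
        by_cases hxKhat : x ∈ Khat
        · refine Or.inl (hpred x ?_)
          rcases hxKhat with (h | h) | h
          · exact absurd hxJ h.2
          · exact Or.inl h
          · exact Or.inr h
        · exact Or.inr ⟨hK hxK, hxKhat⟩
      · have hx' : x ∈ I \ J := ⟨hK hxK, hxJ⟩
        obtain ⟨h1, h2, h3⟩ := hk_spec x hx'
        refine Or.inl ⟨π^[πk x - 1] x, ?_, ?_⟩
        · by_cases hk1 : πk x = 1
          · have : π^[πk x - 1] x = x := by rw [hk1]; rfl
            rw [this]
            exact Or.inl (Or.inl ⟨hxK, hxJ⟩)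
          · exact Or.inl (Or.inr ⟨x, hxK, hxJ, πk x - 1, by omega, by omega, rfl⟩)
        · rw [hval_in x hx']
          conv_rhs => rw [show πk x = (πk x - 1) + 1 by omega, Function.iterate_succ_apply']
    · by_cases hzKhat : z ∈ Khat
      · rcases hzKhat with (h | h) | h
        · exact absurd h.1 hz.2
        · exact Or.inl (hpred z (Or.inl h))
        · exact Or.inl (hpred z (Or.inr h))
      · exact Or.inr ⟨hz.1, hzKhat⟩
  have heqset : π '' Khat ∪ (I \ Khat) = π' '' K ∪ (I \ K) :=
    Set.Subset.antisymm hsub1 hsub2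
  rw [← heqset]
  exact hexch Khat hKhatI



end FixLemma

theorem unweighted_ptas_guarantee
    (M : Matroid α) (S : Finset α) (hground : M.E = ↑S)
    (hsbo : M.StronglyBaseOrderable)
    (E : Finset (Finset α)) (hE : IsPairPartition S E)
    (n : ℕ) (hn : E.card = n)
    (w : Finset α → ℝ) (hw : ∀ e ∈ E, 0 ≤ w e)
    (ε : ℝ) (hε0 : 0 < ε) (hε1 : ε < 1)
    (t : ℕ) (hteq : t = ⌈1 / ε⌉₊) (htn : t ≤ n)
    (B : Finset (Finset α)) (hBE : B ⊆ E) (hB : FeasibleSet M B)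
    (hBmax : ∀ B' ⊆ E, FeasibleSet M B' → ∑ e ∈ B', w e ≤ ∑ e ∈ B, w e)
    (A : Finset (Finset α)) (hAE : A ⊆ E) (hA : FeasibleSet M A)
    (hAloc : ∀ Abar Bbar, IsMove M E A (2 * t + 1) Abar Bbar →
      ∑ e ∈ Bbar, w e - ∑ e ∈ Abar, w e ≤ 0) :
    ∑ e ∈ B, w e ≤ (1 + ε) * ∑ e ∈ A, w e := by
  classical
  obtain ⟨hE2, hEdisj, hEunion⟩ := hE
  have ht0 : 0 < t := by
    rw [hteq]
    exact Nat.ceil_pos.2 (by positivity)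
  have htε : 1 / ε ≤ (t : ℝ) := by rw [hteq]; exact Nat.le_ceil _
  have hεt : 1 ≤ ε * (t : ℝ) := by
    rw [div_le_iff₀ hε0] at htε
    linarith
  -- pairwise disjointness of pairs
  have huniq : ∀ e ∈ E, ∀ e' ∈ E, ∀ z : α, z ∈ e → z ∈ e' → e = e' := by
    intro e he e' he' z hz hz'
    by_contra hne
    have hdisj := hEdisj (Finset.mem_coe.2 he) (Finset.mem_coe.2 he') hne
    exact Finset.disjoint_left.1 hdisj hz hz'
  -- bases
  obtain ⟨Ist, hIbase, hIsub⟩ := hA.exists_isBase_superset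
  obtain ⟨Jst, hJbase, hJsub⟩ := hB.exists_isBase_superset
  have hIfin : Ist.Finite := S.finite_toSet.subset (hground ▸ hIbase.subset_ground)
  have hJfin : Jst.Finite := S.finite_toSet.subset (hground ▸ hJbase.subset_ground)
  obtain ⟨π₀, hbij₀, hexch₀⟩ := hsbo Ist Jst hIbase hJbase
  obtain ⟨π, hbij, hfix, hexch⟩ := fix_bijection M Ist Jst hIfin hJfin π₀ hbij₀ hexch₀
  have hEne : E.Nonempty := by
    rw [← Finset.card_pos, hn]
    omega
  haveI : Nonempty α := by
    obtain ⟨e₀, he₀⟩ := hEne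
    have he₀2 := hE2 e₀ he₀
    have hne : e₀.Nonempty := Finset.card_pos.1 (by omega)
    exact ⟨hne.choose⟩
  set g : α → α := Function.invFunOn π Ist with hg
  have hgmem : ∀ z ∈ Jst, g z ∈ Ist ∧ π (g z) = z := by
    intro z hz
    have hz' : z ∈ π '' Ist := by rw [hbij.image_eq]; exact hz
    obtain ⟨x, hx, hxz⟩ := hz'
    exact ⟨Function.invFunOn_mem ⟨x, hx, hxz⟩, Function.invFunOn_eq ⟨x, hx, hxz⟩⟩
  have hginj : ∀ z ∈ Jst, ∀ z' ∈ Jst, g z = g z' → z = z' := by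
    intro z hz z' hz' hgg
    have h1 := (hgmem z hz).2
    have h2 := (hgmem z' hz').2
    rw [← h1, ← h2, hgg]
  -- membership in the base supersets
  have hJstB : ∀ b ∈ B, ∀ z ∈ b, z ∈ Jst := by
    intro b hb z hz
    exact hJsub (Finset.mem_coe.2 (Finset.mem_biUnion.2 ⟨b, hb, hz⟩))
  have hIstA : ∀ a ∈ A, ∀ x ∈ a, x ∈ Ist := by
    intro a ha x hx
    exact hIsub (Finset.mem_coe.2 (Finset.mem_biUnion.2 ⟨a, ha, hx⟩))
  -- the exchange graph
  set X : Finset (Finset α) := B \ A with hX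
  set Y : Finset (Finset α) := A \ B with hY
  set adj : Finset α → Finset α → Prop := fun b a => ∃ z ∈ b, g z ∈ a with hadjdef
  haveI : DecidableRel adj := fun b a => Classical.propDecidable _
  have hXE : ∀ b ∈ X, b ∈ E ∧ b ∈ B ∧ b ∉ A := by
    intro b hb
    rw [hX, Finset.mem_sdiff] at hb
    exact ⟨hBE hb.1, hb.1, hb.2⟩
  have hYE : ∀ a ∈ Y, a ∈ E ∧ a ∈ A ∧ a ∉ B := by
    intro a ha
    rw [hY, Finset.mem_sdiff] at ha
    exact ⟨hAE ha.1, ha.1, ha.2⟩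
  have hdisjXY : ∀ v, v ∈ X → v ∈ Y → False := by
    intro v hv hv'
    exact (hXE v hv).2.2 (hYE v hv').2.1
  -- degree bounds
  have hdX : ∀ b ∈ X, (Y.filter (fun a => adj b a)).card ≤ 2 := by
    intro b hb
    obtain ⟨hbE, hbB, hbA⟩ := hXE b hb
    have hb2 : b.card = 2 := hE2 b hbE
    have hbne : b.Nonempty := Finset.card_pos.1 (by omega)
    refine le_trans (le_trans (Finset.card_le_card_of_injOn
      (fun a => if h : ∃ z ∈ b, g z ∈ a then h.choose else hbne.choose) ?_ ?_) le_rfl)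
      (le_of_eq hb2)
    · intro a ha
      rw [Finset.mem_coe, Finset.mem_filter] at ha
      have hadj : ∃ z ∈ b, g z ∈ a := ha.2
      simp only [dif_pos hadj]
      exact hadj.choose_spec.1
    · intro a1 h1 a2 h2 heq
      simp only [Finset.mem_coe, Finset.mem_filter] at h1 h2
      have hadj1 : ∃ z ∈ b, g z ∈ a1 := h1.2
      have hadj2 : ∃ z ∈ b, g z ∈ a2 := h2.2
      simp only [dif_pos hadj1, dif_pos hadj2] at heq
      have hz1 : g hadj1.choose ∈ a1 := hadj1.choose_spec.2
      have hz2 : g hadj2.choose ∈ a2 := hadj2.choose_spec.2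
      rw [heq] at hz1
      exact huniq a1 (hYE a1 h1.1).1 a2 (hYE a2 h2.1).1 (g hadj2.choose) hz1 hz2
  have hdY : ∀ a ∈ Y, (X.filter (fun b => adj b a)).card ≤ 2 := by
    intro a ha
    obtain ⟨haE, haA, haB⟩ := hYE a ha
    have ha2 : a.card = 2 := hE2 a haE
    have hane : a.Nonempty := Finset.card_pos.1 (by omega)
    refine le_trans (le_trans (Finset.card_le_card_of_injOn
      (fun b => if h : ∃ z ∈ b, g z ∈ a then g h.choose else hane.choose) ?_ ?_) le_rfl)
      (le_of_eq ha2)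
    · intro b hbf
      rw [Finset.mem_coe, Finset.mem_filter] at hbf
      have hadj : ∃ z ∈ b, g z ∈ a := hbf.2
      simp only [dif_pos hadj]
      exact hadj.choose_spec.2
    · intro b1 h1 b2 h2 heq
      simp only [Finset.mem_coe, Finset.mem_filter] at h1 h2
      have hadj1 : ∃ z ∈ b1, g z ∈ a := h1.2
      have hadj2 : ∃ z ∈ b2, g z ∈ a := h2.2
      simp only [dif_pos hadj1, dif_pos hadj2] at heq
      have hz1 : hadj1.choose ∈ b1 := hadj1.choose_spec.1
      have hz2 : hadj2.choose ∈ b2 := hadj2.choose_spec.1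
      have hzz : hadj1.choose = hadj2.choose :=
        hginj _ (hJstB b1 (hXE b1 h1.1).2.1 _ hz1) _ (hJstB b2 (hXE b2 h2.1).2.1 _ hz2) heq
      rw [hzz] at hz1
      exact huniq b1 (hXE b1 h1.1).1 b2 (hXE b2 h2.1).1 hadj2.choose hz1 hz2
  -- weights
  have hwX : ∀ b ∈ X, 0 ≤ w b := fun b hb => hw b (hXE b hb).1
  have hwY : ∀ a ∈ Y, 0 ≤ w a := fun a ha => hw a (hYE a ha).1
  -- move hypothesis
  have hmv : ∀ T Z : Finset (Finset α), T ⊆ X → Z ⊆ Y →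
      (∀ b ∈ T, ∀ a ∈ Y, adj b a → a ∈ Z) →
      T.card + Z.card ≤ 2 * t + 1 → ∑ e ∈ T, w e ≤ ∑ e ∈ Z, w e := by
    intro T Z hT hZ hcl hsz
    have hZA : Z ⊆ A := fun a haZ => (hYE a (hZ haZ)).2.1
    have hTEA : T ⊆ E \ A := by
      intro b hbT
      rw [Finset.mem_sdiff]
      exact ⟨(hXE b (hT hbT)).1, (hXE b (hT hbT)).2.2⟩
    have hsymm : symmDiff A (Z ∪ T) = (A \ Z) ∪ T := by
      ext e
      rw [Finset.mem_symmDiff]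
      simp only [Finset.mem_union, Finset.mem_sdiff]
      constructor
      · rintro (⟨heA, hne⟩ | ⟨(heZ | heT), heA⟩)
        · exact Or.inl ⟨heA, fun hZ' => hne (Or.inl hZ')⟩
        · exact absurd (hZA heZ) heA
        · exact Or.inr heT
      · rintro (⟨heA, heZ⟩ | heT)
        · refine Or.inl ⟨heA, fun h => ?_⟩
          rcases h with h | h
          · exact heZ h
          · exact (Finset.mem_sdiff.1 (hTEA h)).2 heA
        · exact Or.inr ⟨Or.inr heT, (Finset.mem_sdiff.1 (hTEA heT)).2⟩
    have hfeas : FeasibleSet M (symmDiff A (Z ∪ T)) := by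
      show M.Indep _
      rw [hsymm]
      set K : Set α := {x | x ∈ Ist ∧ ∃ b ∈ T, π x ∈ b} with hK
      have hKsub : K ⊆ Ist := fun x hx => hx.1
      have hbase := hexch K hKsub
      refine hbase.indep.subset ?_
      intro x hx
      rw [Finset.mem_coe, Finset.mem_biUnion] at hx
      obtain ⟨e, he, hxe⟩ := hx
      simp only [id] at hxe
      rcases Finset.mem_union.1 he with heA | heT
      · -- e ∈ A \ Z
        rw [Finset.mem_sdiff] at heA
        have hxI : x ∈ Ist := hIstA e heA.1 x hxe
        by_cases hxK : x ∈ K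
        · exfalso
          obtain ⟨-, b', hb'T, hπx⟩ := hxK
          have hb'X : b' ∈ X := hT hb'T
          have hπxJ : π x ∈ Jst := hJstB b' (hXE b' hb'X).2.1 _ hπx
          have hgx : g (π x) = x := by
            have h1 := (hgmem (π x) hπxJ).2
            exact hbij.injOn (hgmem (π x) hπxJ).1 hxI h1
          by_cases heB : e ∈ B
          · -- e ∈ A ∩ B, so x is fixed by π
            have hxJ : x ∈ Jst := hJstB e heB x hxe
            have hπfix : π x = x := hfix x ⟨hxI, hxJ⟩
            rw [hπfix] at hπx
            have : b' = e := huniq b' (hXE b' hb'X).1 e (hAE heA.1) x hπx hxe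
            exact (hXE b' hb'X).2.2 (this ▸ heA.1)
          · have heY : e ∈ Y := by
              rw [hY, Finset.mem_sdiff]; exact ⟨heA.1, heB⟩
            have hadj : adj b' e := ⟨π x, hπx, by rw [hgx]; exact hxe⟩
            exact heA.2 (hcl b' hb'T e heY hadj)
        · exact Or.inr ⟨hxI, hxK⟩
      · -- e ∈ T : x is covered by π '' K
        have hxJ : x ∈ Jst := hJstB e (hXE e (hT heT)).2.1 x hxe
        left
        refine ⟨g x, ⟨(hgmem x hxJ).1, e, heT, ?_⟩, (hgmem x hxJ).2⟩
        rw [(hgmem x hxJ).2]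
        exact hxe
    have hmove : IsMove M E A (2 * t + 1) Z T := ⟨hZA, hTEA, by omega, hfeas⟩
    have := hAloc Z T hmove
    linarith
  -- core inequality
  have hcore := core_lemma t adj w X.card X Y le_rfl hdisjXY hdX hdY hwX hwY hmv
  -- final arithmetic
  have hsplitB : ∑ e ∈ B, w e = ∑ e ∈ B ∩ A, w e + ∑ e ∈ B \ A, w e :=
    (Finset.sum_inter_add_sum_sdiff B A w).symm
  have hsplitA : ∑ e ∈ A, w e = ∑ e ∈ A ∩ B, w e + ∑ e ∈ A \ B, w e :=
    (Finset.sum_inter_add_sum_sdiff A B w).symm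
  have hBA : B ∩ A = A ∩ B := Finset.inter_comm B A
  have hnn1 : 0 ≤ ∑ e ∈ A ∩ B, w e :=
    Finset.sum_nonneg fun e he => hw e (hAE (Finset.mem_inter.1 he).1)
  have hnn2 : 0 ≤ ∑ e ∈ A \ B, w e :=
    Finset.sum_nonneg fun e he => hw e (hAE (Finset.mem_sdiff.1 he).1)
  have hnn3 : 0 ≤ ∑ e ∈ B \ A, w e :=
    Finset.sum_nonneg fun e he => hw e (hBE (Finset.mem_sdiff.1 he).1)
  have ht0' : (0 : ℝ) < t := by exact_mod_cast ht0
  have hmul : (t : ℝ) * ∑ e ∈ B, w e ≤ (t : ℝ) * ((1 + ε) * ∑ e ∈ A, w e) := by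
    rw [hsplitB, hsplitA, hBA]
    have hX' : ∑ e ∈ X, w e = ∑ e ∈ B \ A, w e := by rw [hX]
    have hY' : ∑ e ∈ Y, w e = ∑ e ∈ A \ B, w e := by rw [hY]
    rw [hX', hY'] at hcore
    nlinarith [hcore, hnn1, hnn2, hnn3, hεt, ht0', hε0,
      mul_nonneg (mul_nonneg hε0.le ht0'.le) hnn1,
      mul_nonneg (sub_nonneg.2 hεt) hnn2]
  exact le_of_mul_le_mul_left hmul ht0'
end

section
/- Let S be a finite set, let E be a partition of S into n pairs, let ν be a positive integer with ν < n, and let G be a simple graph with vertex set E. Then every matroid on ground set S whose bases are exactly the members of B(M_G) is strongly base orderable. -/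
open Finset

variable {α : Type*} [DecidableEq α]

/-- Membership in the family `B(M_G)`: either `T ⊆ S` has `2ν` elements and is not the union
of `ν` pairs of `E`, or `T = ⋃ F` for a clique `F ⊆ E` of size `ν` in the graph `G`
(whose vertices are the pairs in `E`). -/
def MemBMG (S : Finset α) (E : Finset (Finset α)) (ν : ℕ)
    (G : SimpleGraph (Finset α)) (T : Set α) : Prop :=
  (∃ T' : Finset α, ↑T' = T ∧ T' ⊆ S ∧ T'.card = 2 * ν ∧
      ¬∃ F ⊆ E, F.card = ν ∧ F.biUnion id = T') ∨
  (∃ F ⊆ E, F.card = ν ∧ (↑F : Set (Finset α)).Pairwise G.Adj ∧ ↑(F.biUnion id) = T)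

/-- chain propagation: everything false -/
lemma chain_all_false (L : ℕ) (bit : ℕ → Prop) (h0 : ¬ bit 0)
    (hstep : ∀ i, i + 1 < L → (¬ bit (i+1) ∨ (bit (i+1) ↔ bit i))) :
    ∀ i, i < L → ¬ bit i := by
  intro i
  induction i with
  | zero => exact fun _ => h0
  | succ k ih =>
    intro h
    rcases hstep k h with h' | h'
    · exact h'
    · exact fun hb => ih (Nat.lt_of_succ_lt h) (h'.mp hb)

lemma chain_all_eq (L : ℕ) (bit : ℕ → Prop)
    (hstep : ∀ i, i + 1 < L → (bit (i+1) ↔ bit i)) :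
    ∀ i, i < L → (bit i ↔ bit 0) := by
  intro i
  induction i with
  | zero => exact fun _ => Iff.rfl
  | succ k ih => intro h; exact (hstep k h).trans (ih (Nat.lt_of_succ_lt h))

/-- the function mapping the i-th element of `W` to the i-th element of `W'`. -/
noncomputable def listMap (W W' : List α) : α → α := fun x => (W'[List.idxOf x W]?).getD x

lemma listMap_getElem (W W' : List α) (hW : W.Nodup) (hl : W.length = W'.length)
    (i : ℕ) (h : i < W.length) : listMap W W' W[i] = W'[i] := by
  unfold listMap
  rw [List.Nodup.idxOf_getElem hW i h, List.getElem?_eq_getElem (hl ▸ h)]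
  rfl

lemma listMap_bijOn (W W' : List α) (hW : W.Nodup) (hW' : W'.Nodup)
    (hl : W.length = W'.length) :
    Set.BijOn (listMap W W') ↑W.toFinset ↑W'.toFinset := by
  have key : ∀ i (h : i < W.length), listMap W W' W[i] = W'[i] :=
    listMap_getElem W W' hW hl
  constructor
  · intro x hx
    simp only [Finset.coe_sort_coe, Finset.mem_coe, List.mem_toFinset] at hx ⊢
    obtain ⟨i, hi, rfl⟩ := List.mem_iff_getElem.mp hx
    rw [key i hi]
    exact List.getElem_mem _
  constructor
  · intro x hx y hy hxy
    simp only [Finset.mem_coe, List.mem_toFinset] at hx hy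
    obtain ⟨i, hi, rfl⟩ := List.mem_iff_getElem.mp hx
    obtain ⟨j, hj, rfl⟩ := List.mem_iff_getElem.mp hy
    rw [key i hi, key j hj] at hxy
    have : i = j := by
      have := List.nodup_iff_injective_get.mp hW'
      have h2 := this (a₁ := ⟨i, hl ▸ hi⟩) (a₂ := ⟨j, hl ▸ hj⟩) (by simpa using hxy)
      exact congrArg Fin.val h2
    subst this; rfl
  · intro y hy
    simp only [Finset.mem_coe, List.mem_toFinset] at hy
    obtain ⟨i, hi, rfl⟩ := List.mem_iff_getElem.mp hy
    exact ⟨W[i]'(hl ▸ hi), by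
      simp only [Finset.mem_coe, List.mem_toFinset]
      exact List.getElem_mem _, key i (hl ▸ hi)⟩

/-- extend a partial bijection between finsets of equal cardinality -/
lemma bijOn_extend (A B A₀ B₀ : Finset α) (h : A.card = B.card)
    (hA₀ : A₀ ⊆ A) (hB₀ : B₀ ⊆ B) (f₀ : α → α) (hf : Set.BijOn f₀ ↑A₀ ↑B₀) :
    ∃ f : α → α, Set.BijOn f ↑A ↑B ∧ ∀ x ∈ A₀, f x = f₀ x := by
  have himg : A₀.image f₀ = B₀ := by
    apply Finset.coe_injective
    rw [Finset.coe_image]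
    exact hf.image_eq
  have hc0 : A₀.card = B₀.card := by
    rw [← himg, Finset.card_image_of_injOn hf.injOn]
  have hc : (A \ A₀).card = (B \ B₀).card := by
    rw [Finset.card_sdiff_of_subset hA₀, Finset.card_sdiff_of_subset hB₀, h, hc0]
  set e := Finset.equivOfCardEq hc with he
  refine ⟨fun x => if hx : x ∈ A \ A₀ then (e ⟨x, hx⟩ : α) else f₀ x, ?_, ?_⟩
  · constructor
    · intro x hx
      simp only [Finset.mem_coe] at hx ⊢
      by_cases h1 : x ∈ A \ A₀
      · rw [dif_pos h1]
        exact Finset.sdiff_subset (e ⟨x, h1⟩).2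
      · have hx0 : x ∈ A₀ := by
          rcases Finset.mem_sdiff.not.mp h1 with h2
          push_neg at h2
          exact h2 hx
        rw [dif_neg h1]
        exact hB₀ (hf.mapsTo hx0)
    constructor
    · intro x hx y hy hxy
      dsimp only at hxy
      simp only [Finset.mem_coe] at hx hy
      by_cases h1 : x ∈ A \ A₀ <;> by_cases h2 : y ∈ A \ A₀
      · rw [dif_pos h1, dif_pos h2] at hxy
        exact congrArg Subtype.val (e.injective (Subtype.ext hxy))
      · have hy0 : y ∈ A₀ := by
          rcases Finset.mem_sdiff.not.mp h2 with h3; push_neg at h3; exact h3 hy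
        rw [dif_pos h1, dif_neg h2] at hxy
        exfalso
        have hb : f₀ y ∈ B₀ := hf.mapsTo hy0
        have : (e ⟨x, h1⟩ : α) ∈ B \ B₀ := (e ⟨x, h1⟩).2
        rw [hxy] at this
        exact (Finset.mem_sdiff.mp this).2 hb
      · have hx0 : x ∈ A₀ := by
          rcases Finset.mem_sdiff.not.mp h1 with h3; push_neg at h3; exact h3 hx
        rw [dif_neg h1, dif_pos h2] at hxy
        exfalso
        have hb : f₀ x ∈ B₀ := hf.mapsTo hx0
        have : (e ⟨y, h2⟩ : α) ∈ B \ B₀ := (e ⟨y, h2⟩).2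
        rw [← hxy] at this
        exact (Finset.mem_sdiff.mp this).2 hb
      · have hx0 : x ∈ A₀ := by
          rcases Finset.mem_sdiff.not.mp h1 with h3; push_neg at h3; exact h3 hx
        have hy0 : y ∈ A₀ := by
          rcases Finset.mem_sdiff.not.mp h2 with h3; push_neg at h3; exact h3 hy
        rw [dif_neg h1, dif_neg h2] at hxy
        exact hf.injOn hx0 hy0 hxy
    · intro y hy
      simp only [Finset.mem_coe] at hy
      by_cases hy0 : y ∈ B₀
      · obtain ⟨x, hx, hxy⟩ := hf.surjOn hy0
        refine ⟨x, Finset.mem_coe.mpr (hA₀ hx), ?_⟩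
        have : x ∉ A \ A₀ := fun hc => (Finset.mem_sdiff.mp hc).2 hx
        simp only [dif_neg this]
        exact hxy
      · have hmem : y ∈ B \ B₀ := Finset.mem_sdiff.mpr ⟨hy, hy0⟩
        refine ⟨(e.symm ⟨y, hmem⟩ : α), ?_, ?_⟩
        · exact Finset.mem_coe.mpr (Finset.sdiff_subset (e.symm ⟨y, hmem⟩).2)
        · have h1 : ((e.symm ⟨y, hmem⟩ : α)) ∈ A \ A₀ := (e.symm ⟨y, hmem⟩).2
          simp only [dif_pos h1]
          have : (⟨(e.symm ⟨y, hmem⟩ : α), h1⟩ : {x // x ∈ A \ A₀}) = e.symm ⟨y, hmem⟩ := by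
            apply Subtype.ext; rfl
          rw [this, Equiv.apply_symm_apply]
  · intro x hx
    have : x ∉ A \ A₀ := fun hc => (Finset.mem_sdiff.mp hc).2 hx
    simp only [dif_neg this]

/-- the mate function of a pair partition -/
lemma exists_mate (S : Finset α) (E : Finset (Finset α)) (hE : IsPairPartition S E) :
    ∃ m : α → α, (∀ x ∈ S, m x ∈ S) ∧ (∀ x ∈ S, m (m x) = x) ∧ (∀ x ∈ S, m x ≠ x) ∧
      (∀ x ∈ S, ({x, m x} : Finset α) ∈ E) ∧ (∀ e ∈ E, ∀ x ∈ e, e = {x, m x}) := by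
  obtain ⟨hcard2, hdisj, hunion⟩ := hE
  have huniq : ∀ e ∈ E, ∀ f ∈ E, ∀ x, x ∈ e → x ∈ f → e = f := by
    intro e he f hf x hxe hxf
    by_contra hne
    exact Finset.notMem_empty x (by
      have := hdisj he hf hne
      have h2 := Finset.disjoint_left.mp this hxe
      exact absurd hxf h2)
  have hQ : ∀ x, x ∈ S → ∃ y, y ≠ x ∧ ({x, y} : Finset α) ∈ E := by
    intro x hx
    rw [← hunion] at hx
    obtain ⟨e, he, hxe⟩ := Finset.mem_biUnion.mp hx
    simp only [id] at hxe
    have h2 := hcard2 e he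
    obtain ⟨a, b, hab, hre⟩ := Finset.card_eq_two.mp h2
    rcases Finset.mem_insert.mp (hre ▸ hxe) with rfl | hb
    · exact ⟨b, fun h => hab h.symm, hre ▸ he⟩
    · rcases Finset.mem_singleton.mp hb with rfl
      have : ({x, a} : Finset α) = {a, x} := Finset.pair_comm x a
      exact ⟨a, fun h => hab h, by rw [this, ← hre]; exact he⟩
  classical
  set m : α → α := fun x => if h : ∃ y, y ≠ x ∧ ({x, y} : Finset α) ∈ E then h.choose else x
    with hm
  have hmspec : ∀ x ∈ S, m x ≠ x ∧ ({x, m x} : Finset α) ∈ E := by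
    intro x hx
    have h : ∃ y, y ≠ x ∧ ({x, y} : Finset α) ∈ E := hQ x hx
    simp only [hm, dif_pos h]
    exact ⟨h.choose_spec.1, h.choose_spec.2⟩
  have hmem : ∀ x ∈ S, m x ∈ S := by
    intro x hx
    have h := (hmspec x hx).2
    rw [← hunion]
    exact Finset.mem_biUnion.mpr ⟨_, h, by simp⟩
  have hpair : ∀ e ∈ E, ∀ x ∈ e, e = {x, m x} := by
    intro e he x hxe
    have hxS : x ∈ S := by
      rw [← hunion]; exact Finset.mem_biUnion.mpr ⟨e, he, by simpa using hxe⟩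
    have h := (hmspec x hxS).2
    exact huniq e he _ h x hxe (by simp)
  refine ⟨m, hmem, ?_, fun x hx => (hmspec x hx).1, fun x hx => (hmspec x hx).2, hpair⟩
  intro x hx
  have hmx : m x ∈ S := hmem x hx
  have h1 := (hmspec (m x) hmx).2
  have h2 := (hmspec x hx).2
  have := huniq _ h1 _ h2 (m x) (by simp) (by simp)
  have hmm : m (m x) ∈ ({x, m x} : Finset α) := by
    rw [← this]; simp
  rcases Finset.mem_insert.mp hmm with h | h
  · exact h
  · exact absurd (Finset.mem_singleton.mp h) ((hmspec (m x) hmx).1)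

/-- enumerate a mate-closed set as a list with mates adjacent -/
lemma exists_pair_list (m : α → α) (S : Finset α)
    (hmm : ∀ x ∈ S, m (m x) = x) (hne : ∀ x ∈ S, m x ≠ x) :
    ∀ (X : Finset α), X ⊆ S → (∀ x ∈ X, m x ∈ X) →
    ∃ L : List α, L.Nodup ∧ L.toFinset = X ∧ L.length % 2 = 0 ∧
      (∀ i, i % 2 = 0 → ∀ (h2 : i+1 < L.length), m (L[i]'(Nat.lt_of_succ_lt h2)) = L[i+1]) := by
  intro X
  induction X using Finset.strongInduction with
  | _ X ih =>
    intro hXS hcl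
    rcases Finset.eq_empty_or_nonempty X with rfl | ⟨x, hx⟩
    · exact ⟨[], by simp, by simp, by simp, by intro i _ h2; simp at h2⟩
    · have hxS : x ∈ S := hXS hx
      have hmx : m x ∈ X := hcl x hx
      have hnex : m x ≠ x := hne x hxS
      set X' := X \ {x, m x} with hX'
      have hsub2 : ({x, m x} : Finset α) ⊆ X := by
        intro y hy
        rcases Finset.mem_insert.mp hy with rfl | hy
        · exact hx
        · rcases Finset.mem_singleton.mp hy with rfl; exact hmx
      have hss : X' ⊂ X := Finset.sdiff_ssubset hsub2 ⟨x, by simp⟩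
      have hcl' : ∀ y ∈ X', m y ∈ X' := by
        intro y hy
        obtain ⟨hyX, hyn⟩ := Finset.mem_sdiff.mp hy
        refine Finset.mem_sdiff.mpr ⟨hcl y hyX, ?_⟩
        intro hmem
        apply hyn
        have hyy : m (m y) = y := hmm y (hXS hyX)
        rcases Finset.mem_insert.mp hmem with h | h
        · have h2 : y = m x := by rw [← h, hyy]
          simp [h2]
        · rcases Finset.mem_singleton.mp h with h
          have h2 : y = x := by rw [← hyy, h, hmm x hxS]
          simp [h2]
      obtain ⟨L', hnd', htf', hlen', hpair'⟩ := ih X' hss (Finset.Subset.trans Finset.sdiff_subset hXS) hcl'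
      refine ⟨x :: m x :: L', ?_, ?_, ?_, ?_⟩
      · have hxL : x ∉ L' := by
          intro h; have := htf' ▸ List.mem_toFinset.mpr h
          exact (Finset.mem_sdiff.mp this).2 (by simp)
        have hmxL : m x ∉ L' := by
          intro h; have := htf' ▸ List.mem_toFinset.mpr h
          exact (Finset.mem_sdiff.mp this).2 (by simp)
        simp only [List.nodup_cons]
        exact ⟨by simp [hnex.symm, hxL], hmxL, hnd'⟩
      · simp only [List.toFinset_cons, htf']
        rw [hX']
        ext y
        simp only [Finset.mem_insert, Finset.mem_sdiff, Finset.mem_insert, Finset.mem_singleton]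
        constructor
        · rintro (rfl | rfl | ⟨h1, _⟩)
          · exact hx
          · exact hmx
          · exact h1
        · intro hy
          by_cases h1 : y = x
          · exact Or.inl h1
          by_cases h2 : y = m x
          · exact Or.inr (Or.inl h2)
          · exact Or.inr (Or.inr ⟨hy, by rintro (rfl|rfl) <;> simp_all⟩)
      · simp only [List.length_cons]; omega
      · intro i hi h2
        match i, hi with
        | 0, _ => simp
        | (k+2), hk =>
          have hk' : k % 2 = 0 := by omega
          have h2' : k + 1 < L'.length := by simp only [List.length_cons] at h2; omega
          have := hpair' k hk' h2'
          simpa using this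

/-- the exchanged set -/
def TT (σ : α → α) (fI K' : Finset α) : Finset α := K'.image σ ∪ (fI \ K')

/-- the key property of the bijection on `fI \ fJ`. -/
def GoodSigma (m σ : α → α) (fI fJ : Finset α) : Prop :=
  ∀ K' ⊆ fI \ fJ, (∀ x ∈ TT σ fI K', m x ∈ TT σ fI K') →
    TT σ fI K' = fI ∨ TT σ fI K' = fJ

section Facts

variable {m σ : α → α} {S fI fJ K' : Finset α}
  (hK : K' ⊆ fI \ fJ) (himg : ∀ u ∈ fI \ fJ, σ u ∈ fJ \ fI)
  (hinj : Set.InjOn σ ↑(fI \ fJ))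

include hK himg in
lemma mem_TT_left {u : α} (hu : u ∈ fI) : u ∈ TT σ fI K' ↔ u ∉ K' := by
  unfold TT
  simp only [Finset.mem_union, Finset.mem_sdiff, Finset.mem_image]
  constructor
  · rintro (⟨w, hw, rfl⟩ | ⟨_, h⟩)
    · exact absurd hu (Finset.mem_sdiff.mp (himg w (hK hw))).2
    · exact h
  · intro h; exact Or.inr ⟨hu, h⟩

include hK himg hinj in
lemma mem_TT_img {u : α} (hu : u ∈ fI \ fJ) : σ u ∈ TT σ fI K' ↔ u ∈ K' := by
  unfold TT
  simp only [Finset.mem_union, Finset.mem_sdiff, Finset.mem_image]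
  constructor
  · rintro (⟨w, hw, hww⟩ | ⟨h, _⟩)
    · rwa [hinj (by exact_mod_cast hK hw) (by exact_mod_cast hu) hww] at hw
    · exact absurd h (Finset.mem_sdiff.mp (himg u hu)).2
  · intro h; exact Or.inl ⟨u, h, rfl⟩

include hK himg in
lemma TT_subset_union : TT σ fI K' ⊆ fI ∪ fJ := by
  intro x hx
  rcases Finset.mem_union.mp hx with h | h
  · obtain ⟨w, hw, rfl⟩ := Finset.mem_image.mp h
    exact Finset.mem_union_right _ (Finset.mem_sdiff.mp (himg w (hK hw))).1
  · exact Finset.mem_union_left _ (Finset.mem_sdiff.mp h).1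

include hK himg in
lemma mem_TT_C {c : α} (hc : c ∈ fI ∩ fJ) : c ∈ TT σ fI K' := by
  rw [mem_TT_left hK himg (Finset.mem_inter.mp hc).1]
  intro h
  exact (Finset.mem_sdiff.mp (hK h)).2 (Finset.mem_inter.mp hc).2

variable (hmm : ∀ x ∈ S, m (m x) = x) (hIS : fI ⊆ S) (hJS : fJ ⊆ S)
  (hcl : ∀ x ∈ TT σ fI K', m x ∈ TT σ fI K')

include hK himg hmm hIS hcl in
lemma pin_P0 {u : α} (hu : u ∈ fI \ fJ) (hmu : m u ∈ fI ∩ fJ) : u ∉ K' := by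
  have h1 : m u ∈ TT σ fI K' := mem_TT_C hK himg hmu
  have h2 := hcl _ h1
  rw [hmm u (hIS (Finset.mem_sdiff.mp hu).1)] at h2
  exact (mem_TT_left hK himg (Finset.mem_sdiff.mp hu).1).mp h2

include hK himg hcl in
lemma pin_P1 {u : α} (hu : u ∈ fI \ fJ) (hmu : m u ∉ fI ∪ fJ) : u ∈ K' := by
  by_contra h
  have h1 : u ∈ TT σ fI K' := (mem_TT_left hK himg (Finset.mem_sdiff.mp hu).1).mpr h
  exact hmu (TT_subset_union hK himg (hcl _ h1))

include hK himg hinj hmm hJS hcl in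
lemma pin_Q1 {u : α} (hu : u ∈ fI \ fJ) (hmu : m (σ u) ∈ fI ∩ fJ) : u ∈ K' := by
  have h1 : m (σ u) ∈ TT σ fI K' := mem_TT_C hK himg hmu
  have h2 := hcl _ h1
  rw [hmm (σ u) (hJS (Finset.mem_sdiff.mp (himg u hu)).1)] at h2
  exact (mem_TT_img hK himg hinj hu).mp h2

include hK himg hinj hcl in
lemma pin_Q0 {u : α} (hu : u ∈ fI \ fJ) (hmu : m (σ u) ∉ fI ∪ fJ) : u ∉ K' := by
  intro h
  have h1 : σ u ∈ TT σ fI K' := (mem_TT_img hK himg hinj hu).mpr h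
  exact hmu (TT_subset_union hK himg (hcl _ h1))

include hK himg hmm hIS hcl in
lemma edge_D {u u' : α} (hu : u ∈ fI \ fJ) (hu' : u' ∈ fI \ fJ) (hmu : m u = u') :
    u ∈ K' → u' ∈ K' := by
  intro h
  by_contra h'
  have h1 : u' ∈ TT σ fI K' := (mem_TT_left hK himg (Finset.mem_sdiff.mp hu').1).mpr h'
  have h2 := hcl _ h1
  rw [← hmu, hmm u (hIS (Finset.mem_sdiff.mp hu).1)] at h2
  exact (mem_TT_left hK himg (Finset.mem_sdiff.mp hu).1).mp h2 h

include hK himg hinj hcl in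
lemma edge_D' {u u' : α} (hu : u ∈ fI \ fJ) (hu' : u' ∈ fI \ fJ) (hmu : m (σ u) = σ u') :
    u ∈ K' → u' ∈ K' := by
  intro h
  have h1 : σ u ∈ TT σ fI K' := (mem_TT_img hK himg hinj hu).mpr h
  have h2 := hcl _ h1
  rw [hmu] at h2
  exact (mem_TT_img hK himg hinj hu').mp h2

end Facts

lemma K'_eq_empty (W : List α) (K' : Finset α) (hsub : K' ⊆ W.toFinset)
    (h : ∀ i (h : i < W.length), W[i]'h ∉ K') : K' = ∅ := by
  rw [Finset.eq_empty_iff_forall_notMem]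
  intro x hx
  obtain ⟨i, hi, rfl⟩ := List.mem_iff_getElem.mp (List.mem_toFinset.mp (hsub hx))
  exact h i hi hx

lemma TT_empty (σ : α → α) (fI : Finset α) : TT σ fI ∅ = fI := by simp [TT]

lemma TT_full (σ : α → α) (fI fJ : Finset α) (himage : (fI \ fJ).image σ = fJ \ fI) :
    TT σ fI (fI \ fJ) = fJ := by
  unfold TT
  rw [himage, Finset.sdiff_sdiff_self_left]
  ext x
  simp only [Finset.mem_union, Finset.mem_sdiff, Finset.mem_inter]
  tauto


set_option maxHeartbeats 1000000 in
lemma exists_goodSigma_pins_zero (m : α → α) (S fI fJ : Finset α)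
    (hmS : ∀ x ∈ S, m x ∈ S) (hmm : ∀ x ∈ S, m (m x) = x) (hne : ∀ x ∈ S, m x ≠ x)
    (hIS : fI ⊆ S) (hJS : fJ ⊆ S)
    (hDne : (fI \ fJ).Nonempty) (hcard : (fI \ fJ).card = (fJ \ fI).card)
    (hmD : ∀ u ∈ fI \ fJ, m u ∈ fI \ fJ ∨ m u ∈ fI ∩ fJ)
    (hmD' : ∀ v ∈ fJ \ fI, m v ∈ fJ \ fI ∨ m v ∉ fI ∪ fJ) :
    ∃ σ : α → α, Set.BijOn σ ↑(fI \ fJ) ↑(fJ \ fI) ∧ GoodSigma m σ fI fJ := by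
  classical
  set DP := (fI \ fJ).filter (fun u => m u ∈ fI \ fJ) with hDPdef
  set DQ := (fJ \ fI).filter (fun v => m v ∈ fJ \ fI) with hDQdef
  set P0 := (fI \ fJ) \ DP with hP0def
  set Q0 := (fJ \ fI) \ DQ with hQ0def
  have hDPsub : DP ⊆ fI \ fJ := by rw [hDPdef]; exact Finset.filter_subset _ _
  have hDQsub : DQ ⊆ fJ \ fI := by rw [hDQdef]; exact Finset.filter_subset _ _
  have hP0sub : P0 ⊆ fI \ fJ := Finset.sdiff_subset
  have hQ0sub : Q0 ⊆ fJ \ fI := Finset.sdiff_subset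
  have hmemDP : ∀ u, u ∈ fI \ fJ → m u ∈ fI \ fJ → u ∈ DP := by
    intro u h1 h2; rw [hDPdef]; exact Finset.mem_filter.mpr ⟨h1, h2⟩
  have hmemDQ : ∀ v, v ∈ fJ \ fI → m v ∈ fJ \ fI → v ∈ DQ := by
    intro v h1 h2; rw [hDQdef]; exact Finset.mem_filter.mpr ⟨h1, h2⟩
  have hDPm : ∀ u ∈ DP, m u ∈ fI \ fJ := by
    intro u hu; rw [hDPdef] at hu; exact (Finset.mem_filter.mp hu).2
  have hDQm : ∀ v ∈ DQ, m v ∈ fJ \ fI := by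
    intro v hv; rw [hDQdef] at hv; exact (Finset.mem_filter.mp hv).2
  have hP0C : ∀ u ∈ P0, m u ∈ fI ∩ fJ := by
    intro u hu
    obtain ⟨h1, h2⟩ := Finset.mem_sdiff.mp hu
    rcases hmD u h1 with h | h
    · exact absurd (hmemDP u h1 h) h2
    · exact h
  have hQ0O : ∀ v ∈ Q0, m v ∉ fI ∪ fJ := by
    intro v hv
    obtain ⟨h1, h2⟩ := Finset.mem_sdiff.mp hv
    rcases hmD' v h1 with h | h
    · exact absurd (hmemDQ v h1 h) h2
    · exact h
  have hDPcl : ∀ u ∈ DP, m u ∈ DP := by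
    intro u hu
    refine hmemDP _ (hDPm u hu) ?_
    rw [hmm u (hIS (Finset.mem_sdiff.mp (hDPsub hu)).1)]
    exact hDPsub hu
  have hDQcl : ∀ v ∈ DQ, m v ∈ DQ := by
    intro v hv
    refine hmemDQ _ (hDQm v hv) ?_
    rw [hmm v (hJS (Finset.mem_sdiff.mp (hDQsub hv)).1)]
    exact hDQsub hv
  obtain ⟨LP, hLPnd, hLPtf, hLPev, hLPpair⟩ :=
    exists_pair_list m S hmm hne DP (hDPsub.trans (Finset.sdiff_subset.trans hIS)) hDPcl
  obtain ⟨LQ, hLQnd, hLQtf, hLQev, hLQpair⟩ :=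
    exists_pair_list m S hmm hne DQ (hDQsub.trans (Finset.sdiff_subset.trans hJS)) hDQcl
  have hDPP0 : DP ∪ P0 = fI \ fJ := Finset.union_sdiff_of_subset hDPsub
  have hDQQ0 : DQ ∪ Q0 = fJ \ fI := Finset.union_sdiff_of_subset hDQsub
  have hDPP0disj : Disjoint DP P0 := Finset.disjoint_sdiff
  have hDQQ0disj : Disjoint DQ Q0 := Finset.disjoint_sdiff
  by_cases hQ0ne : Q0.Nonempty
  · -- Case A : anchored chain with anchor a D'-pin
    obtain ⟨v₁, hv₁⟩ := hQ0ne
    set W : List α := LP ++ P0.toList with hWdef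
    set W' : List α := v₁ :: (LQ ++ (Q0.erase v₁).toList) with hW'def
    have hWnd : W.Nodup := by
      refine List.Nodup.append hLPnd (Finset.nodup_toList _) ?_
      intro a ha hb
      have h1 : a ∈ DP := hLPtf ▸ List.mem_toFinset.mpr ha
      have h2 : a ∈ P0 := Finset.mem_toList.mp hb
      exact Finset.disjoint_left.mp hDPP0disj h1 h2
    have hW'nd : W'.Nodup := by
      refine List.nodup_cons.mpr ⟨?_, ?_⟩
      · intro h
        rcases List.mem_append.mp h with h | h
        · exact Finset.disjoint_left.mp hDQQ0disj (hLQtf ▸ List.mem_toFinset.mpr h) hv₁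
        · exact (Finset.mem_erase.mp (Finset.mem_toList.mp h)).1 rfl
      · refine List.Nodup.append hLQnd (Finset.nodup_toList _) ?_
        intro a ha hb
        have h1 : a ∈ DQ := hLQtf ▸ List.mem_toFinset.mpr ha
        have h2 : a ∈ Q0 := Finset.mem_of_mem_erase (Finset.mem_toList.mp hb)
        exact Finset.disjoint_left.mp hDQQ0disj h1 h2
    have hWtf : W.toFinset = fI \ fJ := by
      rw [hWdef, List.toFinset_append, hLPtf, Finset.toList_toFinset]
      exact hDPP0
    have hW'tf : W'.toFinset = fJ \ fI := by
      rw [hW'def, List.toFinset_cons, List.toFinset_append, hLQtf, Finset.toList_toFinset]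
      ext x
      simp only [Finset.mem_insert, Finset.mem_union, Finset.mem_erase]
      constructor
      · rintro (rfl | h | ⟨_, h⟩)
        · exact hQ0sub hv₁
        · exact hDQsub h
        · exact hQ0sub h
      · intro hx
        by_cases h1 : x ∈ DQ
        · exact Or.inr (Or.inl h1)
        · have h2 : x ∈ Q0 := Finset.mem_sdiff.mpr ⟨hx, h1⟩
          by_cases h3 : x = v₁
          · exact Or.inl h3
          · exact Or.inr (Or.inr ⟨h3, h2⟩)
    have hWlen : W.length = (fI \ fJ).card := by
      rw [← hWtf, List.toFinset_card_of_nodup hWnd]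
    have hW'len : W'.length = (fJ \ fI).card := by
      rw [← hW'tf, List.toFinset_card_of_nodup hW'nd]
    have hlen : W.length = W'.length := by rw [hWlen, hW'len, hcard]
    set σ := listMap W W' with hσdef
    have hbij0 := listMap_bijOn W W' hWnd hW'nd hlen
    rw [hWtf, hW'tf] at hbij0
    have hkey : ∀ i (h : i < W.length), σ (W[i]'h) = W'[i]'(hlen ▸ h) :=
      listMap_getElem W W' hWnd hlen
    have himgD : ∀ u ∈ fI \ fJ, σ u ∈ fJ \ fI := by
      intro u hu
      exact_mod_cast hbij0.mapsTo (by exact_mod_cast hu)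
    have hinj : Set.InjOn σ ↑(fI \ fJ) := hbij0.injOn
    refine ⟨σ, hbij0, ?_⟩
    intro K' hK hcl
    have hWmem : ∀ i (h : i < W.length), W[i]'h ∈ fI \ fJ := by
      intro i h
      exact hWtf ▸ List.mem_toFinset.mpr (List.getElem_mem h)
    have hWpos2 : ∀ i (h : i < W.length), LP.length ≤ i → W[i]'h ∈ P0 := by
      intro i h hge
      have h2 : i - LP.length < P0.toList.length := by
        have := h
        simp only [hWdef, List.length_append] at this
        omega
      have heq : W[i]'h = P0.toList[i - LP.length]'h2 := by
        simp only [hWdef]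
        rw [List.getElem_append_right hge]
      rw [heq]
      exact Finset.mem_toList.mp (List.getElem_mem h2)
    have hW'pos1 : ∀ j (h : j < LQ.length) (hw : j + 1 < W'.length),
        W'[j+1]'hw = LQ[j]'h := by
      intro j h hw
      simp only [hW'def, List.getElem_cons_succ]
      rw [List.getElem_append_left h]
    have hW'pos2 : ∀ j (hw : j + 1 < W'.length), LQ.length ≤ j → W'[j+1]'hw ∈ Q0 := by
      intro j hw hj
      have hw2 : j < (LQ ++ (Q0.erase v₁).toList).length := by
        simp only [hW'def, List.length_cons] at hw
        omega
      have h3 : j - LQ.length < (Q0.erase v₁).toList.length := by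
        simp only [List.length_append] at hw2
        omega
      have heq : W'[j+1]'hw = (Q0.erase v₁).toList[j - LQ.length]'h3 := by
        simp only [hW'def, List.getElem_cons_succ]
        rw [List.getElem_append_right hj]
      rw [heq]
      exact Finset.mem_of_mem_erase (Finset.mem_toList.mp (List.getElem_mem h3))
    set bit : ℕ → Prop := fun i => ∃ h : i < W.length, W[i]'h ∈ K' with hbitdef
    have h0 : ¬ bit 0 := by
      rintro ⟨h, hmem⟩
      have hσ0 : σ (W[0]'h) = v₁ := by rw [hkey 0 h]; rfl
      have : W[0]'h ∉ K' := by
        refine pin_Q0 hK himgD hinj hcl (hWmem 0 h) ?_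
        rw [hσ0]
        exact hQ0O v₁ hv₁
      exact this hmem
    have hstep : ∀ i, i + 1 < W.length → (¬ bit (i+1) ∨ (bit (i+1) ↔ bit i)) := by
      intro i hi1
      have hi : i < W.length := Nat.lt_of_succ_lt hi1
      by_cases hp : LP.length ≤ i + 1
      · left
        rintro ⟨h, hmem⟩
        have hup := hWpos2 (i+1) h hp
        exact pin_P0 hK himgD hmm hIS hcl (hWmem (i+1) h) (hP0C _ hup) hmem
      · push_neg at hp
        have hiLP : i < LP.length := Nat.lt_of_succ_lt hp
        have hWi : W[i]'hi = LP[i]'hiLP := by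
          simp only [hWdef]; rw [List.getElem_append_left hiLP]
        have hWi1 : W[i+1]'hi1 = LP[i+1]'hp := by
          simp only [hWdef]; rw [List.getElem_append_left hp]
        by_cases hpar : i % 2 = 0
        · right
          have hmate : m (W[i]'hi) = W[i+1]'hi1 := by
            rw [hWi, hWi1]; exact hLPpair i hpar hp
          have hmate' : m (W[i+1]'hi1) = W[i]'hi := by
            rw [← hmate, hmm _ (hIS (Finset.mem_sdiff.mp (hWmem i hi)).1)]
          constructor
          · rintro ⟨h, hmem⟩
            exact ⟨hi, edge_D hK himgD hmm hIS hcl (hWmem (i+1) hi1) (hWmem i hi) hmate' hmem⟩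
          · rintro ⟨h, hmem⟩
            exact ⟨hi1, edge_D hK himgD hmm hIS hcl (hWmem i hi) (hWmem (i+1) hi1) hmate hmem⟩
        · -- i odd : use the D' side
          obtain ⟨j, rfl⟩ : ∃ j, i = j + 1 := ⟨i - 1, by omega⟩
          by_cases hq : j + 1 < LQ.length
          · right
            have hqj : j < LQ.length := Nat.lt_of_succ_lt hq
            have hW'i : W'[j+1]'(hlen ▸ hi) = LQ[j]'hqj := hW'pos1 j hqj (hlen ▸ hi)
            have hW'i1 : W'[j+1+1]'(hlen ▸ hi1) = LQ[j+1]'hq := hW'pos1 (j+1) hq (hlen ▸ hi1)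
            have hmate : m (σ (W[j+1]'hi)) = σ (W[j+1+1]'hi1) := by
              rw [hkey (j+1) hi, hkey (j+1+1) hi1, hW'i, hW'i1]
              exact hLQpair j (by omega) hq
            have hmate' : m (σ (W[j+1+1]'hi1)) = σ (W[j+1]'hi) := by
              rw [← hmate, hmm _ (hJS (Finset.mem_sdiff.mp (himgD _ (hWmem (j+1) hi))).1)]
            constructor
            · rintro ⟨h, hmem⟩
              exact ⟨hi, edge_D' hK himgD hinj hcl (hWmem (j+1+1) hi1) (hWmem (j+1) hi) hmate' hmem⟩
            · rintro ⟨h, hmem⟩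
              exact ⟨hi1, edge_D' hK himgD hinj hcl (hWmem (j+1) hi) (hWmem (j+1+1) hi1) hmate hmem⟩
          · left
            rintro ⟨h, hmem⟩
            have hup : W'[j+1+1]'(hlen ▸ hi1) ∈ Q0 :=
              hW'pos2 (j+1) (hlen ▸ hi1) (by omega)
            refine pin_Q0 hK himgD hinj hcl (hWmem (j+1+1) hi1) ?_ hmem
            rw [hkey (j+1+1) hi1]
            exact hQ0O _ hup
    have hall := chain_all_false W.length bit h0 hstep
    left
    have hKempty : K' = ∅ := by
      refine K'_eq_empty W K' (by rw [hWtf]; exact hK) ?_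
      intro i h hmem
      exact hall i h ⟨h, hmem⟩
    rw [hKempty]
    exact TT_empty σ fI
  · have hQ0e : Q0 = ∅ := Finset.not_nonempty_iff_eq_empty.mp hQ0ne
    have hDQeq : DQ.toList.toFinset = fJ \ fI := by
      rw [Finset.toList_toFinset, ← hDQQ0, hQ0e, Finset.union_empty]
    have hLQtf' : LQ.toFinset = fJ \ fI := by
      rw [hLQtf, ← hDQQ0, hQ0e, Finset.union_empty]
    by_cases hP0ne : P0.Nonempty
    · -- Case B : anchored chain with anchor a D-pin
      obtain ⟨u₁, hu₁⟩ := hP0ne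
      set W : List α := u₁ :: (LP ++ (P0.erase u₁).toList) with hWdef
      set W' : List α := LQ with hW'def
      have hWnd : W.Nodup := by
        refine List.nodup_cons.mpr ⟨?_, ?_⟩
        · intro h
          rcases List.mem_append.mp h with h | h
          · exact Finset.disjoint_left.mp hDPP0disj (hLPtf ▸ List.mem_toFinset.mpr h) hu₁
          · exact (Finset.mem_erase.mp (Finset.mem_toList.mp h)).1 rfl
        · refine List.Nodup.append hLPnd (Finset.nodup_toList _) ?_
          intro a ha hb
          have h1 : a ∈ DP := hLPtf ▸ List.mem_toFinset.mpr ha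
          have h2 : a ∈ P0 := Finset.mem_of_mem_erase (Finset.mem_toList.mp hb)
          exact Finset.disjoint_left.mp hDPP0disj h1 h2
      have hW'nd : W'.Nodup := hLQnd
      have hWtf : W.toFinset = fI \ fJ := by
        rw [hWdef, List.toFinset_cons, List.toFinset_append, hLPtf, Finset.toList_toFinset]
        ext x
        simp only [Finset.mem_insert, Finset.mem_union, Finset.mem_erase]
        constructor
        · rintro (rfl | h | ⟨_, h⟩)
          · exact hP0sub hu₁
          · exact hDPsub h
          · exact hP0sub h
        · intro hx
          by_cases h1 : x ∈ DP
          · exact Or.inr (Or.inl h1)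
          · have h2 : x ∈ P0 := Finset.mem_sdiff.mpr ⟨hx, h1⟩
            by_cases h3 : x = u₁
            · exact Or.inl h3
            · exact Or.inr (Or.inr ⟨h3, h2⟩)
      have hW'tf : W'.toFinset = fJ \ fI := hLQtf'
      have hWlen : W.length = (fI \ fJ).card := by
        rw [← hWtf, List.toFinset_card_of_nodup hWnd]
      have hW'len : W'.length = (fJ \ fI).card := by
        rw [← hW'tf, List.toFinset_card_of_nodup hW'nd]
      have hlen : W.length = W'.length := by rw [hWlen, hW'len, hcard]
      set σ := listMap W W' with hσdef
      have hbij0 := listMap_bijOn W W' hWnd hW'nd hlen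
      rw [hWtf, hW'tf] at hbij0
      have hkey : ∀ i (h : i < W.length), σ (W[i]'h) = W'[i]'(hlen ▸ h) :=
        listMap_getElem W W' hWnd hlen
      have himgD : ∀ u ∈ fI \ fJ, σ u ∈ fJ \ fI := by
        intro u hu
        exact_mod_cast hbij0.mapsTo (by exact_mod_cast hu)
      have hinj : Set.InjOn σ ↑(fI \ fJ) := hbij0.injOn
      refine ⟨σ, hbij0, ?_⟩
      intro K' hK hcl
      have hWmem : ∀ i (h : i < W.length), W[i]'h ∈ fI \ fJ := by
        intro i h
        exact hWtf ▸ List.mem_toFinset.mpr (List.getElem_mem h)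
      have hWpos1 : ∀ j (h : j < LP.length) (hw : j + 1 < W.length),
          W[j+1]'hw = LP[j]'h := by
        intro j h hw
        simp only [hWdef, List.getElem_cons_succ]
        rw [List.getElem_append_left h]
      have hWpos2 : ∀ j (hw : j + 1 < W.length), LP.length ≤ j → W[j+1]'hw ∈ P0 := by
        intro j hw hj
        have hw2 : j < (LP ++ (P0.erase u₁).toList).length := by
          simp only [hWdef, List.length_cons] at hw
          omega
        have h3 : j - LP.length < (P0.erase u₁).toList.length := by
          simp only [List.length_append] at hw2
          omega
        have heq : W[j+1]'hw = (P0.erase u₁).toList[j - LP.length]'h3 := by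
          simp only [hWdef, List.getElem_cons_succ]
          rw [List.getElem_append_right hj]
        rw [heq]
        exact Finset.mem_of_mem_erase (Finset.mem_toList.mp (List.getElem_mem h3))
      have hW'get : ∀ i (h : i < W.length), W'[i]'(hlen ▸ h) = LQ[i]'(by
          simpa only [hW'def] using (hlen ▸ h)) := fun i h => rfl
      set bit : ℕ → Prop := fun i => ∃ h : i < W.length, W[i]'h ∈ K' with hbitdef
      have h0 : ¬ bit 0 := by
        rintro ⟨h, hmem⟩
        have hW0 : W[0]'h = u₁ := rfl
        refine pin_P0 hK himgD hmm hIS hcl (hWmem 0 h) ?_ hmem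
        rw [hW0]
        exact hP0C u₁ hu₁
      have hstep : ∀ i, i + 1 < W.length → (¬ bit (i+1) ∨ (bit (i+1) ↔ bit i)) := by
        intro i hi1
        have hi : i < W.length := Nat.lt_of_succ_lt hi1
        by_cases hpar : i % 2 = 0
        · -- even i : D' pair (positions i, i+1 of LQ)
          right
          have hq : i + 1 < LQ.length := by
            have := hi1
            rw [hlen] at this
            simpa only [hW'def] using this
          have hmate : m (σ (W[i]'hi)) = σ (W[i+1]'hi1) := by
            rw [hkey i hi, hkey (i+1) hi1]
            exact hLQpair i hpar hq
          have hmate' : m (σ (W[i+1]'hi1)) = σ (W[i]'hi) := by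
            rw [← hmate, hmm _ (hJS (Finset.mem_sdiff.mp (himgD _ (hWmem i hi))).1)]
          constructor
          · rintro ⟨h, hmem⟩
            exact ⟨hi, edge_D' hK himgD hinj hcl (hWmem (i+1) hi1) (hWmem i hi) hmate' hmem⟩
          · rintro ⟨h, hmem⟩
            exact ⟨hi1, edge_D' hK himgD hinj hcl (hWmem i hi) (hWmem (i+1) hi1) hmate hmem⟩
        · -- odd i
          obtain ⟨j, rfl⟩ : ∃ j, i = j + 1 := ⟨i - 1, by omega⟩
          by_cases hp : j + 1 < LP.length
          · right
            have hpj : j < LP.length := Nat.lt_of_succ_lt hp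
            have hWi : W[j+1]'hi = LP[j]'hpj := hWpos1 j hpj hi
            have hWi1 : W[j+1+1]'hi1 = LP[j+1]'hp := hWpos1 (j+1) hp hi1
            have hmate : m (W[j+1]'hi) = W[j+1+1]'hi1 := by
              rw [hWi, hWi1]
              exact hLPpair j (by omega) hp
            have hmate' : m (W[j+1+1]'hi1) = W[j+1]'hi := by
              rw [← hmate, hmm _ (hIS (Finset.mem_sdiff.mp (hWmem (j+1) hi)).1)]
            constructor
            · rintro ⟨h, hmem⟩
              exact ⟨hi, edge_D hK himgD hmm hIS hcl (hWmem (j+1+1) hi1) (hWmem (j+1) hi) hmate' hmem⟩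
            · rintro ⟨h, hmem⟩
              exact ⟨hi1, edge_D hK himgD hmm hIS hcl (hWmem (j+1) hi) (hWmem (j+1+1) hi1) hmate hmem⟩
          · left
            rintro ⟨h, hmem⟩
            have hup : W[j+1+1]'hi1 ∈ P0 := hWpos2 (j+1) hi1 (by omega)
            exact pin_P0 hK himgD hmm hIS hcl (hWmem (j+1+1) hi1) (hP0C _ hup) hmem
      have hall := chain_all_false W.length bit h0 hstep
      left
      have hKempty : K' = ∅ := by
        refine K'_eq_empty W K' (by rw [hWtf]; exact hK) ?_
        intro i h hmem
        exact hall i h ⟨h, hmem⟩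
      rw [hKempty]
      exact TT_empty σ fI
    · -- Case C : both sides are unions of pairs; use a cycle
      have hP0e : P0 = ∅ := Finset.not_nonempty_iff_eq_empty.mp hP0ne
      have hLPtf' : LP.toFinset = fI \ fJ := by
        rw [hLPtf, ← hDPP0, hP0e, Finset.union_empty]
      set W : List α := LP with hWdef
      set W' : List α := LQ.rotate 1 with hW'def
      have hWnd : W.Nodup := hLPnd
      have hW'nd : W'.Nodup := List.nodup_rotate.mpr hLQnd
      have hWtf : W.toFinset = fI \ fJ := hLPtf'
      have hW'tf : W'.toFinset = fJ \ fI := by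
        rw [← hLQtf']
        ext x
        simp only [List.mem_toFinset, hW'def, List.mem_rotate]
      have hWlen : W.length = (fI \ fJ).card := by
        rw [← hWtf, List.toFinset_card_of_nodup hWnd]
      have hW'len : W'.length = (fJ \ fI).card := by
        rw [← hW'tf, List.toFinset_card_of_nodup hW'nd]
      have hlen : W.length = W'.length := by rw [hWlen, hW'len, hcard]
      have hLQW : LQ.length = W.length := by
        rw [hlen, hW'def, List.length_rotate]
      set σ := listMap W W' with hσdef
      have hbij0 := listMap_bijOn W W' hWnd hW'nd hlen
      rw [hWtf, hW'tf] at hbij0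
      have hkey : ∀ i (h : i < W.length), σ (W[i]'h) = W'[i]'(hlen ▸ h) :=
        listMap_getElem W W' hWnd hlen
      have himgD : ∀ u ∈ fI \ fJ, σ u ∈ fJ \ fI := by
        intro u hu
        exact_mod_cast hbij0.mapsTo (by exact_mod_cast hu)
      have hinj : Set.InjOn σ ↑(fI \ fJ) := hbij0.injOn
      refine ⟨σ, hbij0, ?_⟩
      intro K' hK hcl
      have hWmem : ∀ i (h : i < W.length), W[i]'h ∈ fI \ fJ := by
        intro i h
        exact hWtf ▸ List.mem_toFinset.mpr (List.getElem_mem h)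
      have hW'get : ∀ i (h : i < W.length) (h2 : i + 1 < LQ.length),
          W'[i]'(hlen ▸ h) = LQ[i+1]'h2 := by
        intro i h h2
        simp only [hW'def]
        rw [List.getElem_rotate]
        congr 1
        rw [Nat.mod_eq_of_lt h2]
      set bit : ℕ → Prop := fun i => ∃ h : i < W.length, W[i]'h ∈ K' with hbitdef
      have hstep : ∀ i, i + 1 < W.length → (bit (i+1) ↔ bit i) := by
        intro i hi1
        have hi : i < W.length := Nat.lt_of_succ_lt hi1
        by_cases hpar : i % 2 = 0
        · -- even i : LP pair
          have hp : i + 1 < LP.length := hi1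
          have hmate : m (W[i]'hi) = W[i+1]'hi1 := hLPpair i hpar hp
          have hmate' : m (W[i+1]'hi1) = W[i]'hi := by
            rw [← hmate, hmm _ (hIS (Finset.mem_sdiff.mp (hWmem i hi)).1)]
          constructor
          · rintro ⟨h, hmem⟩
            exact ⟨hi, edge_D hK himgD hmm hIS hcl (hWmem (i+1) hi1) (hWmem i hi) hmate' hmem⟩
          · rintro ⟨h, hmem⟩
            exact ⟨hi1, edge_D hK himgD hmm hIS hcl (hWmem i hi) (hWmem (i+1) hi1) hmate hmem⟩
        · -- odd i : LQ pair at positions i+1, i+2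
          have hieven : (i + 1) % 2 = 0 := by omega
          have hi2 : i + 2 < LQ.length := by
            rw [hLQW]
            have hWev : W.length % 2 = 0 := hLPev
            omega
          have hi1q : i + 1 < LQ.length := Nat.lt_of_succ_lt hi2
          have hW'i : W'[i]'(hlen ▸ hi) = LQ[i+1]'hi1q := hW'get i hi hi1q
          have hW'i1 : W'[i+1]'(hlen ▸ hi1) = LQ[i+2]'hi2 := hW'get (i+1) hi1 hi2
          have hmate : m (σ (W[i]'hi)) = σ (W[i+1]'hi1) := by
            rw [hkey i hi, hkey (i+1) hi1, hW'i, hW'i1]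
            exact hLQpair (i+1) hieven hi2
          have hmate' : m (σ (W[i+1]'hi1)) = σ (W[i]'hi) := by
            rw [← hmate, hmm _ (hJS (Finset.mem_sdiff.mp (himgD _ (hWmem i hi))).1)]
          constructor
          · rintro ⟨h, hmem⟩
            exact ⟨hi, edge_D' hK himgD hinj hcl (hWmem (i+1) hi1) (hWmem i hi) hmate' hmem⟩
          · rintro ⟨h, hmem⟩
            exact ⟨hi1, edge_D' hK himgD hinj hcl (hWmem i hi) (hWmem (i+1) hi1) hmate hmem⟩
      have hall := chain_all_eq W.length bit hstep
      by_cases hb0 : bit 0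
      · right
        have hKD : K' = fI \ fJ := by
          refine Finset.Subset.antisymm hK ?_
          intro x hx
          rw [← hWtf] at hx
          obtain ⟨i, hi, rfl⟩ := List.mem_iff_getElem.mp (List.mem_toFinset.mp hx)
          obtain ⟨h', hmem⟩ := (hall i hi).mpr hb0
          exact hmem
        rw [hKD]
        refine TT_full σ fI fJ ?_
        apply Finset.coe_injective
        rw [Finset.coe_image]
        exact hbij0.image_eq
      · left
        have hKempty : K' = ∅ := by
          refine K'_eq_empty W K' (by rw [hWtf]; exact hK) ?_
          intro i h hmem
          exact hb0 ((hall i h).mp ⟨h, hmem⟩)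
        rw [hKempty]
        exact TT_empty σ fI

lemma bijOn_single (a b : α) :
    Set.BijOn (fun _ => b) (↑({a} : Finset α) : Set α) (↑({b} : Finset α) : Set α) := by
  constructor
  · intro x hx; simp
  constructor
  · intro x hx y hy _
    simp only [Finset.coe_singleton, Set.mem_singleton_iff] at hx hy
    rw [hx, hy]
  · intro y hy
    simp only [Finset.coe_singleton, Set.mem_singleton_iff] at hy
    exact ⟨a, by simp, hy.symm⟩

lemma bijOn_pairmap (a a' b b' : α) (ha : a ≠ a') (hb : b ≠ b') :
    Set.BijOn (fun x => if x = a then b else b') (↑({a, a'} : Finset α) : Set α) (↑({b, b'} : Finset α) : Set α) := by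
  constructor
  · intro x hx
    simp only [Finset.coe_insert, Finset.coe_singleton, Set.mem_insert_iff,
      Set.mem_singleton_iff] at hx ⊢
    rcases hx with rfl | rfl
    · simp
    · rw [if_neg ha.symm]; simp
  constructor
  · intro x hx y hy hxy
    simp only [Finset.coe_insert, Finset.coe_singleton, Set.mem_insert_iff,
      Set.mem_singleton_iff] at hx hy
    dsimp only at hxy
    rcases hx with rfl | rfl <;> rcases hy with rfl | rfl
    · rfl
    · rw [if_pos rfl, if_neg ha.symm] at hxy; exact absurd hxy hb
    · rw [if_pos rfl, if_neg ha.symm] at hxy; exact absurd hxy.symm hb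
    · rfl
  · intro y hy
    simp only [Finset.coe_insert, Finset.coe_singleton, Set.mem_insert_iff,
      Set.mem_singleton_iff] at hy
    rcases hy with rfl | rfl
    · exact ⟨a, by simp, by simp⟩
    · exact ⟨a', by simp, by dsimp only; rw [if_neg ha.symm]⟩

set_option maxHeartbeats 1000000 in
lemma exists_goodSigma_pins_one (m : α → α) (S fI fJ : Finset α)
    (hmS : ∀ x ∈ S, m x ∈ S) (hmm : ∀ x ∈ S, m (m x) = x) (hne : ∀ x ∈ S, m x ≠ x)
    (hIS : fI ⊆ S) (hJS : fJ ⊆ S)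
    (hD'ne : (fJ \ fI).Nonempty) (hcard : (fI \ fJ).card = (fJ \ fI).card)
    (hmD : ∀ u ∈ fI \ fJ, m u ∈ fI \ fJ ∨ m u ∉ fI ∪ fJ)
    (hmD' : ∀ v ∈ fJ \ fI, m v ∈ fJ \ fI ∨ m v ∈ fI ∩ fJ) :
    ∃ σ : α → α, Set.BijOn σ ↑(fI \ fJ) ↑(fJ \ fI) ∧ GoodSigma m σ fI fJ := by
  classical
  haveI : Nonempty α := ⟨hD'ne.choose⟩
  obtain ⟨τ, hbijτ, hgoodτ⟩ :=
    exists_goodSigma_pins_zero m S fJ fI hmS hmm hne hJS hIS hD'ne hcard.symm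
      (by
        intro v hv
        rcases hmD' v hv with h | h
        · exact Or.inl h
        · exact Or.inr (by rw [Finset.inter_comm]; exact h))
      (by
        intro u hu
        rcases hmD u hu with h | h
        · exact Or.inl h
        · exact Or.inr (by rw [Finset.union_comm]; exact h))
  set σ := Function.invFunOn τ ↑(fJ \ fI) with hσdef
  have hτmaps : ∀ v ∈ fJ \ fI, τ v ∈ fI \ fJ := fun v hv => by
    exact_mod_cast hbijτ.mapsTo (by exact_mod_cast hv)
  have hτσ : ∀ u ∈ fI \ fJ, τ (σ u) = u := by
    intro u hu
    apply Function.invFunOn_eq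
    obtain ⟨v, hv, hvu⟩ := hbijτ.surjOn (by exact_mod_cast hu : (u : α) ∈ (↑(fI \ fJ) : Set α))
    exact ⟨v, hv, hvu⟩
  have hσmaps : ∀ u ∈ fI \ fJ, σ u ∈ fJ \ fI := by
    intro u hu
    have : σ u ∈ (↑(fJ \ fI) : Set α) := by
      apply Function.invFunOn_mem
      obtain ⟨v, hv, hvu⟩ := hbijτ.surjOn (by exact_mod_cast hu : (u : α) ∈ (↑(fI \ fJ) : Set α))
      exact ⟨v, hv, hvu⟩
    exact_mod_cast this
  have hστ : ∀ v ∈ fJ \ fI, σ (τ v) = v := by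
    intro v hv
    have h1 : σ (τ v) ∈ (↑(fJ \ fI) : Set α) := by
      exact_mod_cast hσmaps _ (hτmaps v hv)
    exact hbijτ.injOn h1 (by exact_mod_cast hv) (hτσ _ (hτmaps v hv))
  have hbijσ : Set.BijOn σ ↑(fI \ fJ) ↑(fJ \ fI) := by
    constructor
    · intro u hu
      exact_mod_cast hσmaps u (by exact_mod_cast hu)
    constructor
    · intro u hu u' hu' huu
      have := congrArg τ huu
      rwa [hτσ u (by exact_mod_cast hu), hτσ u' (by exact_mod_cast hu')] at this
    · intro v hv
      refine ⟨τ v, by exact_mod_cast hτmaps v (by exact_mod_cast hv), ?_⟩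
      exact hστ v (by exact_mod_cast hv)
  refine ⟨σ, hbijσ, ?_⟩
  intro K' hK hcl
  set L := (fJ \ fI) \ K'.image σ with hLdef
  have hLsub : L ⊆ fJ \ fI := Finset.sdiff_subset
  have hTTeq : TT τ fJ L = TT σ fI K' := by
    unfold TT
    ext x
    simp only [Finset.mem_union, Finset.mem_image, Finset.mem_sdiff]
    constructor
    · rintro (⟨w, hw, rfl⟩ | ⟨hxJ, hxL⟩)
      · rw [hLdef, Finset.mem_sdiff] at hw
        obtain ⟨hwD', hwim⟩ := hw
        have hτw : τ w ∈ fI \ fJ := hτmaps w hwD'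
        refine Or.inr ⟨(Finset.mem_sdiff.mp hτw).1, ?_⟩
        intro hτwK
        apply hwim
        exact Finset.mem_image.mpr ⟨τ w, hτwK, hστ w hwD'⟩
      · by_cases hxI : x ∈ fI
        · refine Or.inr ⟨hxI, ?_⟩
          intro hxK
          exact (Finset.mem_sdiff.mp (hK hxK)).2 hxJ
        · have hxD' : x ∈ fJ \ fI := Finset.mem_sdiff.mpr ⟨hxJ, hxI⟩
          have hxim : x ∈ K'.image σ := by
            by_contra hxim
            exact hxL (by rw [hLdef]; exact Finset.mem_sdiff.mpr ⟨hxD', hxim⟩)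
          obtain ⟨w, hw, rfl⟩ := Finset.mem_image.mp hxim
          exact Or.inl ⟨w, hw, rfl⟩
    · rintro (⟨w, hw, rfl⟩ | ⟨hxI, hxK⟩)
      · have hσw : σ w ∈ fJ \ fI := hσmaps w (hK hw)
        refine Or.inr ⟨(Finset.mem_sdiff.mp hσw).1, ?_⟩
        intro hL
        rw [hLdef, Finset.mem_sdiff] at hL
        exact hL.2 (Finset.mem_image.mpr ⟨w, hw, rfl⟩)
      · by_cases hxJ : x ∈ fJ
        · refine Or.inr ⟨hxJ, ?_⟩
          intro hL
          rw [hLdef, Finset.mem_sdiff] at hL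
          exact (Finset.mem_sdiff.mp hL.1).2 hxI
        · have hxD : x ∈ fI \ fJ := Finset.mem_sdiff.mpr ⟨hxI, hxJ⟩
          refine Or.inl ⟨σ x, ?_, hτσ x hxD⟩
          rw [hLdef, Finset.mem_sdiff]
          refine ⟨hσmaps x hxD, ?_⟩
          intro him
          obtain ⟨w', hw', hww⟩ := Finset.mem_image.mp him
          have hwx : w' = x := by
            have := congrArg τ hww
            rwa [hτσ w' (Finset.mem_sdiff.mp (hK hw') |> fun h => Finset.mem_sdiff.mpr h),
              hτσ x hxD] at this
          exact hxK (hwx ▸ hw')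
  rw [← hTTeq]
  rw [← hTTeq] at hcl
  rcases hgoodτ L hLsub hcl with h | h
  · exact Or.inr h
  · exact Or.inl h

set_option maxHeartbeats 1000000 in
lemma exists_goodSigma (m : α → α) (S fI fJ : Finset α)
    (hmS : ∀ x ∈ S, m x ∈ S) (hmm : ∀ x ∈ S, m (m x) = x) (hne : ∀ x ∈ S, m x ≠ x)
    (hIS : fI ⊆ S) (hJS : fJ ⊆ S)
    (hcard : (fI \ fJ).card = (fJ \ fI).card) :
    ∃ σ : α → α, Set.BijOn σ ↑(fI \ fJ) ↑(fJ \ fI) ∧ GoodSigma m σ fI fJ := by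
  classical
  by_cases hDe : fI \ fJ = ∅
  · have hD'e : fJ \ fI = ∅ := by
      rw [← Finset.card_eq_zero, ← hcard, hDe, Finset.card_empty]
    refine ⟨id, by rw [hDe, hD'e]; simp, ?_⟩
    intro K' hK _
    left
    have : K' = ∅ := Finset.subset_empty.mp (hDe ▸ hK)
    rw [this]
    exact TT_empty id fI
  have hDne : (fI \ fJ).Nonempty := Finset.nonempty_of_ne_empty hDe
  have hD'ne : (fJ \ fI).Nonempty := by
    rw [← Finset.card_pos, ← hcard, Finset.card_pos]; exact hDne
  by_cases h2 : ∃ u ∈ fI \ fJ, m u ∈ fJ \ fI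
  · -- a mate pair crossing the two sides kills every closed set
    obtain ⟨u, hu, hmu⟩ := h2
    obtain ⟨σ, hbij, hext⟩ := bijOn_extend (fI \ fJ) (fJ \ fI) {u} {m u} hcard
      (Finset.singleton_subset_iff.mpr hu) (Finset.singleton_subset_iff.mpr hmu)
      (fun _ => m u) (bijOn_single u (m u))
    have hσu : σ u = m u := hext u (Finset.mem_singleton_self u)
    have himg : ∀ w ∈ fI \ fJ, σ w ∈ fJ \ fI := fun w hw => by
      exact_mod_cast hbij.mapsTo (by exact_mod_cast hw)
    have hinj : Set.InjOn σ ↑(fI \ fJ) := hbij.injOn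
    refine ⟨σ, hbij, ?_⟩
    intro K' hK hcl
    exfalso
    by_cases huK : u ∈ K'
    · have h1 : σ u ∈ TT σ fI K' := (mem_TT_img hK himg hinj hu).mpr huK
      have h2 := hcl _ h1
      rw [hσu, hmm u (hIS (Finset.mem_sdiff.mp hu).1)] at h2
      exact (mem_TT_left hK himg (Finset.mem_sdiff.mp hu).1).mp h2 huK
    · have h1 : u ∈ TT σ fI K' := (mem_TT_left hK himg (Finset.mem_sdiff.mp hu).1).mpr huK
      have h2 := hcl _ h1
      rw [← hσu] at h2
      exact huK ((mem_TT_img hK himg hinj hu).mp h2)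
  · push_neg at h2
    have hmD : ∀ u ∈ fI \ fJ, m u ∈ fI \ fJ ∨ m u ∈ fI ∩ fJ ∨ m u ∉ fI ∪ fJ := by
      intro u hu
      by_cases h3 : m u ∈ fI <;> by_cases h4 : m u ∈ fJ
      · exact Or.inr (Or.inl (Finset.mem_inter.mpr ⟨h3, h4⟩))
      · exact Or.inl (Finset.mem_sdiff.mpr ⟨h3, h4⟩)
      · exact absurd (Finset.mem_sdiff.mpr ⟨h4, h3⟩) (h2 u hu)
      · exact Or.inr (Or.inr (fun h => (Finset.mem_union.mp h).elim h3 h4))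
    have hmD' : ∀ v ∈ fJ \ fI, m v ∈ fJ \ fI ∨ v ∈ (fJ \ fI).filter (fun v => m v ∈ fI ∩ fJ)
        ∨ m v ∉ fI ∪ fJ := by
      intro v hv
      by_cases h3 : m v ∈ fI <;> by_cases h4 : m v ∈ fJ
      · exact Or.inr (Or.inl (Finset.mem_filter.mpr ⟨hv, Finset.mem_inter.mpr ⟨h3, h4⟩⟩))
      · exfalso
        have hmv : m v ∈ fI \ fJ := Finset.mem_sdiff.mpr ⟨h3, h4⟩
        have hvv : m (m v) = v := hmm v (hJS (Finset.mem_sdiff.mp hv).1)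
        apply h2 (m v) hmv
        rw [hvv]
        exact hv
      · exact Or.inl (Finset.mem_sdiff.mpr ⟨h4, h3⟩)
      · exact Or.inr (Or.inr (fun h => (Finset.mem_union.mp h).elim h3 h4))
    set P0 := (fI \ fJ).filter (fun u => m u ∈ fI ∩ fJ) with hP0def
    set P1 := (fI \ fJ).filter (fun u => m u ∉ fI ∪ fJ) with hP1def
    set Q1 := (fJ \ fI).filter (fun v => m v ∈ fI ∩ fJ) with hQ1def
    set Q0 := (fJ \ fI).filter (fun v => m v ∉ fI ∪ fJ) with hQ0def
    have hP0m : ∀ u ∈ P0, m u ∈ fI ∩ fJ := by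
      intro u hu; rw [hP0def] at hu; exact (Finset.mem_filter.mp hu).2
    have hP1m : ∀ u ∈ P1, m u ∉ fI ∪ fJ := by
      intro u hu; rw [hP1def] at hu; exact (Finset.mem_filter.mp hu).2
    have hQ1m : ∀ v ∈ Q1, m v ∈ fI ∩ fJ := by
      intro v hv; rw [hQ1def] at hv; exact (Finset.mem_filter.mp hv).2
    have hQ0m : ∀ v ∈ Q0, m v ∉ fI ∪ fJ := by
      intro v hv; rw [hQ0def] at hv; exact (Finset.mem_filter.mp hv).2
    have hP0sub : P0 ⊆ fI \ fJ := by rw [hP0def]; exact Finset.filter_subset _ _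
    have hP1sub : P1 ⊆ fI \ fJ := by rw [hP1def]; exact Finset.filter_subset _ _
    have hQ1sub : Q1 ⊆ fJ \ fI := by rw [hQ1def]; exact Finset.filter_subset _ _
    have hQ0sub : Q0 ⊆ fJ \ fI := by rw [hQ0def]; exact Finset.filter_subset _ _
    have hmemP0 : ∀ u, u ∈ fI \ fJ → m u ∈ fI ∩ fJ → u ∈ P0 := by
      intro u h1 h3; rw [hP0def]; exact Finset.mem_filter.mpr ⟨h1, h3⟩
    have hmemP1 : ∀ u, u ∈ fI \ fJ → m u ∉ fI ∪ fJ → u ∈ P1 := by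
      intro u h1 h3; rw [hP1def]; exact Finset.mem_filter.mpr ⟨h1, h3⟩
    have hmemQ0 : ∀ v, v ∈ fJ \ fI → m v ∉ fI ∪ fJ → v ∈ Q0 := by
      intro v h1 h3; rw [hQ0def]; exact Finset.mem_filter.mpr ⟨h1, h3⟩
    -- conflict constructions
    have conflict01 : ∀ u ∈ P0, ∀ v ∈ Q1, ∃ σ : α → α,
        Set.BijOn σ ↑(fI \ fJ) ↑(fJ \ fI) ∧ GoodSigma m σ fI fJ := by
      intro u hu v hv
      obtain ⟨σ, hbij, hext⟩ := bijOn_extend (fI \ fJ) (fJ \ fI) {u} {v} hcard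
        (Finset.singleton_subset_iff.mpr (hP0sub hu)) (Finset.singleton_subset_iff.mpr (hQ1sub hv))
        (fun _ => v) (bijOn_single u v)
      have hσu : σ u = v := hext u (Finset.mem_singleton_self u)
      have himg : ∀ w ∈ fI \ fJ, σ w ∈ fJ \ fI := fun w hw => by
        exact_mod_cast hbij.mapsTo (by exact_mod_cast hw)
      refine ⟨σ, hbij, ?_⟩
      intro K' hK hcl
      exfalso
      have h1 : u ∉ K' := pin_P0 hK himg hmm hIS hcl (hP0sub hu) (hP0m u hu)
      have h3 : u ∈ K' := pin_Q1 hK himg hbij.injOn hmm hJS hcl (hP0sub hu)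
        (by rw [hσu]; exact hQ1m v hv)
      exact h1 h3
    have conflict10 : ∀ u ∈ P1, ∀ v ∈ Q0, ∃ σ : α → α,
        Set.BijOn σ ↑(fI \ fJ) ↑(fJ \ fI) ∧ GoodSigma m σ fI fJ := by
      intro u hu v hv
      obtain ⟨σ, hbij, hext⟩ := bijOn_extend (fI \ fJ) (fJ \ fI) {u} {v} hcard
        (Finset.singleton_subset_iff.mpr (hP1sub hu)) (Finset.singleton_subset_iff.mpr (hQ0sub hv))
        (fun _ => v) (bijOn_single u v)
      have hσu : σ u = v := hext u (Finset.mem_singleton_self u)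
      have himg : ∀ w ∈ fI \ fJ, σ w ∈ fJ \ fI := fun w hw => by
        exact_mod_cast hbij.mapsTo (by exact_mod_cast hw)
      refine ⟨σ, hbij, ?_⟩
      intro K' hK hcl
      exfalso
      have h1 : u ∈ K' := pin_P1 hK himg hcl (hP1sub hu) (hP1m u hu)
      have h3 : u ∉ K' := pin_Q0 hK himg hbij.injOn hcl (hP1sub hu)
        (by rw [hσu]; exact hQ0m v hv)
      exact h3 h1
    by_cases hP1e : P1 = ∅
    · by_cases hQ1e : Q1 = ∅
      · -- all pins have value 0 : main lemma
        refine exists_goodSigma_pins_zero m S fI fJ hmS hmm hne hIS hJS hDne hcard ?_ ?_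
        · intro u hu
          rcases hmD u hu with h | h | h
          · exact Or.inl h
          · exact Or.inr h
          · exact absurd (hmemP1 u hu h) (by rw [hP1e]; exact Finset.notMem_empty u)
        · intro v hv
          rcases hmD' v hv with h | h | h
          · exact Or.inl h
          · exact absurd h (by rw [hQ1e]; exact Finset.notMem_empty v)
          · exact Or.inr h
      · obtain ⟨v, hv⟩ := Finset.nonempty_of_ne_empty hQ1e
        by_cases hP0e : P0 = ∅
        · by_cases hQ0e : Q0 = ∅
          · -- all pins have value 1 : symmetric main lemma
            refine exists_goodSigma_pins_one m S fI fJ hmS hmm hne hIS hJS hD'ne hcard ?_ ?_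
            · intro u hu
              rcases hmD u hu with h | h | h
              · exact Or.inl h
              · exact absurd (hmemP0 u hu h) (by rw [hP0e]; exact Finset.notMem_empty u)
              · exact Or.inr h
            · intro w hw
              rcases hmD' w hw with h | h | h
              · exact Or.inl h
              · exact Or.inr (hQ1m w h)
              · exact absurd (hmemQ0 w hw h) (by rw [hQ0e]; exact Finset.notMem_empty w)
          · -- Q1 ≠ ∅, Q0 ≠ ∅, P0 = ∅, P1 = ∅ : conflict inside D'
            obtain ⟨v₀, hv₀⟩ := Finset.nonempty_of_ne_empty hQ0e
            -- D is a union of pairs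
            have hmDpair : ∀ u ∈ fI \ fJ, m u ∈ fI \ fJ := by
              intro u hu
              rcases hmD u hu with h | h | h
              · exact h
              · exact absurd (hmemP0 u hu h) (by rw [hP0e]; exact Finset.notMem_empty u)
              · exact absurd (hmemP1 u hu h) (by rw [hP1e]; exact Finset.notMem_empty u)
            obtain ⟨u, hu⟩ := hDne
            have hu' : m u ∈ fI \ fJ := hmDpair u hu
            have huu' : u ≠ m u := (hne u (hIS (Finset.mem_sdiff.mp hu).1)).symm
            have hv01 : v ≠ v₀ := by
              intro h
              apply hQ0m v₀ hv₀
              rw [← h]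
              exact Finset.mem_union_left _ (Finset.mem_inter.mp (hQ1m v hv)).1
            obtain ⟨σ, hbij, hext⟩ := bijOn_extend (fI \ fJ) (fJ \ fI) {u, m u} {v, v₀} hcard
              (by intro x hx; rcases Finset.mem_insert.mp hx with rfl | hx
                  · exact hu
                  · rw [Finset.mem_singleton.mp hx]; exact hu')
              (by intro x hx; rcases Finset.mem_insert.mp hx with rfl | hx
                  · exact hQ1sub hv
                  · rw [Finset.mem_singleton.mp hx]; exact hQ0sub hv₀)
              (fun x => if x = u then v else v₀) (bijOn_pairmap u (m u) v v₀ huu' hv01)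
            have hσu : σ u = v := by
              rw [hext u (Finset.mem_insert_self u _)]; simp
            have hσu' : σ (m u) = v₀ := by
              rw [hext (m u) (Finset.mem_insert_of_mem (Finset.mem_singleton_self _))]
              rw [if_neg huu'.symm]
            have himg : ∀ w ∈ fI \ fJ, σ w ∈ fJ \ fI := fun w hw => by
              exact_mod_cast hbij.mapsTo (by exact_mod_cast hw)
            refine ⟨σ, hbij, ?_⟩
            intro K' hK hcl
            exfalso
            have h1 : u ∈ K' := pin_Q1 hK himg hbij.injOn hmm hJS hcl hu
              (by rw [hσu]; exact hQ1m v hv)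
            have h3 : m u ∉ K' := pin_Q0 hK himg hbij.injOn hcl hu'
              (by rw [hσu']; exact hQ0m v₀ hv₀)
            exact h3 (edge_D hK himg hmm hIS hcl hu hu' rfl h1)
        · obtain ⟨u, hu⟩ := Finset.nonempty_of_ne_empty hP0e
          exact conflict01 u hu v hv
    · obtain ⟨u, hu⟩ := Finset.nonempty_of_ne_empty hP1e
      by_cases hQ0e : Q0 = ∅
      · by_cases hP0e : P0 = ∅
        · -- pins all value 1 : symmetric main lemma
          refine exists_goodSigma_pins_one m S fI fJ hmS hmm hne hIS hJS hD'ne hcard ?_ ?_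
          · intro w hw
            rcases hmD w hw with h | h | h
            · exact Or.inl h
            · exact absurd (hmemP0 w hw h) (by rw [hP0e]; exact Finset.notMem_empty w)
            · exact Or.inr h
          · intro w hw
            rcases hmD' w hw with h | h | h
            · exact Or.inl h
            · exact Or.inr (hQ1m w h)
            · exact absurd (hmemQ0 w hw h) (by rw [hQ0e]; exact Finset.notMem_empty w)
        · obtain ⟨u₀, hu₀⟩ := Finset.nonempty_of_ne_empty hP0e
          by_cases hQ1e : Q1 = ∅
          · -- P0, P1 ≠ ∅, Q0 = Q1 = ∅ : conflict inside D
            have hmD'pair : ∀ v ∈ fJ \ fI, m v ∈ fJ \ fI := by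
              intro v hv
              rcases hmD' v hv with h | h | h
              · exact h
              · exact absurd h (by rw [hQ1e]; exact Finset.notMem_empty v)
              · exact absurd (hmemQ0 v hv h) (by rw [hQ0e]; exact Finset.notMem_empty v)
            obtain ⟨w, hw⟩ := hD'ne
            have hw' : m w ∈ fJ \ fI := hmD'pair w hw
            have hww' : w ≠ m w := (hne w (hJS (Finset.mem_sdiff.mp hw).1)).symm
            have hu01 : u₀ ≠ u := by
              intro h
              rw [h] at hu₀
              exact hP1m u hu (Finset.mem_union_left _ (Finset.mem_inter.mp (hP0m u hu₀)).1)
            obtain ⟨σ, hbij, hext⟩ := bijOn_extend (fI \ fJ) (fJ \ fI) {u₀, u} {w, m w} hcard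
              (by intro x hx; rcases Finset.mem_insert.mp hx with rfl | hx
                  · exact hP0sub hu₀
                  · rw [Finset.mem_singleton.mp hx]; exact hP1sub hu)
              (by intro x hx; rcases Finset.mem_insert.mp hx with rfl | hx
                  · exact hw
                  · rw [Finset.mem_singleton.mp hx]; exact hw')
              (fun x => if x = u₀ then w else m w) (bijOn_pairmap u₀ u w (m w) hu01 hww')
            have hσu₀ : σ u₀ = w := by
              rw [hext u₀ (Finset.mem_insert_self u₀ _)]; simp
            have hσu : σ u = m w := by
              rw [hext u (Finset.mem_insert_of_mem (Finset.mem_singleton_self _))]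
              rw [if_neg hu01.symm]
            have himg : ∀ x ∈ fI \ fJ, σ x ∈ fJ \ fI := fun x hx => by
              exact_mod_cast hbij.mapsTo (by exact_mod_cast hx)
            refine ⟨σ, hbij, ?_⟩
            intro K' hK hcl
            exfalso
            have h1 : u ∈ K' := pin_P1 hK himg hcl (hP1sub hu) (hP1m u hu)
            have h3 : u₀ ∉ K' := pin_P0 hK himg hmm hIS hcl (hP0sub hu₀) (hP0m u₀ hu₀)
            -- edge in D' : m (σ u) = σ u₀
            have hmateD' : m (σ u) = σ u₀ := by
              rw [hσu, hσu₀, hmm w (hJS (Finset.mem_sdiff.mp hw).1)]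
            exact h3 (edge_D' hK himg hbij.injOn hcl (hP1sub hu) (hP0sub hu₀) hmateD' h1)
          · obtain ⟨v, hv⟩ := Finset.nonempty_of_ne_empty hQ1e
            exact conflict01 u₀ hu₀ v hv
      · obtain ⟨v, hv⟩ := Finset.nonempty_of_ne_empty hQ0e
        exact conflict10 u hu v hv

set_option maxHeartbeats 1000000 in
theorem MG_stronglyBaseOrderable
    (S : Finset α) (E : Finset (Finset α)) (hE : IsPairPartition S E)
    (n : ℕ) (hn : E.card = n)
    (ν : ℕ) (hν : 1 ≤ ν) (hνn : ν < n)
    (G : SimpleGraph (Finset α))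
    (M : Matroid α) (hground : M.E = ↑S)
    (hbase : ∀ T : Set α, M.IsBase T ↔ MemBMG S E ν G T) :
    M.StronglyBaseOrderable := by
  classical
  intro I J hI hJ
  obtain ⟨m, hmS, hmm, hne, hmpair, hpair_eq⟩ := exists_mate S E hE
  have hbase_shape : ∀ T : Set α, M.IsBase T →
      ∃ fT : Finset α, ↑fT = T ∧ fT ⊆ S ∧ fT.card = 2 * ν := by
    intro T hT
    have h := (hbase T).1 hT
    unfold MemBMG at h
    rcases h with ⟨T', h1, h2, h3, _⟩ | ⟨F, hFE, hFc, _, hFu⟩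
    · exact ⟨T', h1, h2, h3⟩
    · refine ⟨F.biUnion id, hFu, ?_, ?_⟩
      · intro x hx
        rw [← hE.2.2]
        obtain ⟨e, he, hxe⟩ := Finset.mem_biUnion.mp hx
        exact Finset.mem_biUnion.mpr ⟨e, hFE he, hxe⟩
      · rw [Finset.card_biUnion (fun e he f hf hef =>
          hE.2.1 (Finset.mem_coe.mpr (hFE he)) (Finset.mem_coe.mpr (hFE hf)) hef)]
        have hsum : ∑ u ∈ F, (id u : Finset α).card = ∑ _u ∈ F, 2 :=
          Finset.sum_congr rfl (fun e he => hE.1 e (hFE he))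
        rw [hsum, Finset.sum_const, smul_eq_mul, hFc, mul_comm]
  have hclosed_base : ∀ T : Finset α, T ⊆ S → T.card = 2 * ν →
      (∃ x ∈ T, m x ∉ T) → M.IsBase ↑T := by
    rintro T hTS hTc ⟨x, hx, hmx⟩
    refine (hbase ↑T).2 (Or.inl ⟨T, rfl, hTS, hTc, ?_⟩)
    rintro ⟨F, hFE, hFc, hFu⟩
    apply hmx
    rw [← hFu] at hx ⊢
    obtain ⟨e, he, hxe⟩ := Finset.mem_biUnion.mp hx
    have hee : e = {x, m x} := hpair_eq e (hFE he) x (by simpa using hxe)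
    exact Finset.mem_biUnion.mpr ⟨e, he, by rw [hee]; simp⟩
  obtain ⟨fI, hfIeq, hfIS, hfIc⟩ := hbase_shape I hI
  obtain ⟨fJ, hfJeq, hfJS, hfJc⟩ := hbase_shape J hJ
  subst hfIeq
  subst hfJeq
  have hcard : (fI \ fJ).card = (fJ \ fI).card :=
    Finset.card_sdiff_comm (hfIc.trans hfJc.symm)
  obtain ⟨σ, hbij, hgood⟩ := exists_goodSigma m S fI fJ hmS hmm hne hfIS hfJS hcard
  have hσmaps : ∀ u ∈ fI \ fJ, σ u ∈ fJ \ fI := fun u hu => by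
    exact_mod_cast hbij.mapsTo (by exact_mod_cast hu)
  set π := fun x => if x ∈ fI \ fJ then σ x else x with hπdef
  refine ⟨π, ?_, ?_⟩
  · constructor
    · intro x hx
      simp only [Finset.mem_coe] at hx ⊢
      by_cases h : x ∈ fI \ fJ
      · simp only [hπdef, if_pos h]
        exact (Finset.mem_sdiff.mp (hσmaps x h)).1
      · simp only [hπdef, if_neg h]
        by_contra hJ'
        exact h (Finset.mem_sdiff.mpr ⟨hx, hJ'⟩)
    constructor
    · intro x hx y hy hxy
      simp only [Finset.mem_coe] at hx hy
      simp only [hπdef] at hxy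
      by_cases h1 : x ∈ fI \ fJ <;> by_cases h2 : y ∈ fI \ fJ
      · rw [if_pos h1, if_pos h2] at hxy
        exact hbij.injOn (by exact_mod_cast h1) (by exact_mod_cast h2) hxy
      · rw [if_pos h1, if_neg h2] at hxy
        exfalso
        have hyJ : y ∈ fJ := by
          by_contra hJ'
          exact h2 (Finset.mem_sdiff.mpr ⟨hy, hJ'⟩)
        have : σ x ∈ fJ \ fI := hσmaps x h1
        rw [hxy] at this
        exact (Finset.mem_sdiff.mp this).2 hy
      · rw [if_neg h1, if_pos h2] at hxy
        exfalso
        have : σ y ∈ fJ \ fI := hσmaps y h2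
        rw [← hxy] at this
        exact (Finset.mem_sdiff.mp this).2 hx
      · rw [if_neg h1, if_neg h2] at hxy
        exact hxy
    · intro y hy
      simp only [Finset.mem_coe] at hy
      by_cases h : y ∈ fJ \ fI
      · obtain ⟨x, hx, hxy⟩ := hbij.surjOn (by exact_mod_cast h : (y:α) ∈ (↑(fJ \ fI) : Set α))
        have hxD : x ∈ fI \ fJ := by exact_mod_cast hx
        refine ⟨x, ?_, ?_⟩
        · simp only [Finset.mem_coe]
          exact (Finset.mem_sdiff.mp hxD).1
        · simp only [hπdef]
          rw [if_pos hxD]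
          exact hxy
      · have hyI : y ∈ fI := by
          by_contra hI'
          exact h (Finset.mem_sdiff.mpr ⟨hy, hI'⟩)
        refine ⟨y, Finset.mem_coe.mpr hyI, ?_⟩
        simp only [hπdef]
        rw [if_neg ?_]
        intro hyD
        exact (Finset.mem_sdiff.mp hyD).2 hy
  · intro K hK
    have hKfin : K.Finite := Set.Finite.subset fI.finite_toSet hK
    set fK := hKfin.toFinset with hfKdef
    have hfKeq : ↑fK = K := hKfin.coe_toFinset
    have hfKsub : fK ⊆ fI := by
      rw [← Finset.coe_subset, hfKeq]
      exact hK
    set K' := fK ∩ (fI \ fJ) with hK'def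
    have hK'sub : K' ⊆ fI \ fJ := Finset.inter_subset_right
    have hfinseteq : fK.image π ∪ (fI \ fK) = TT σ fI K' := by
      unfold TT
      ext x
      constructor
      · intro hx
        rcases Finset.mem_union.mp hx with h | h
        · obtain ⟨w, hw, rfl⟩ := Finset.mem_image.mp h
          by_cases hwD : w ∈ fI \ fJ
          · refine Finset.mem_union_left _ (Finset.mem_image.mpr ⟨w, ?_, ?_⟩)
            · rw [hK'def]; exact Finset.mem_inter.mpr ⟨hw, hwD⟩
            · simp only [hπdef]; rw [if_pos hwD]
          · refine Finset.mem_union_right _ ?_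
            have hπw : π w = w := by simp only [hπdef]; rw [if_neg hwD]
            rw [hπw]
            refine Finset.mem_sdiff.mpr ⟨hfKsub hw, ?_⟩
            rw [hK'def]
            intro h2
            exact hwD (Finset.mem_inter.mp h2).2
        · obtain ⟨hxI, hxK⟩ := Finset.mem_sdiff.mp h
          refine Finset.mem_union_right _ (Finset.mem_sdiff.mpr ⟨hxI, ?_⟩)
          rw [hK'def]
          intro h2
          exact hxK (Finset.mem_inter.mp h2).1
      · intro hx
        rcases Finset.mem_union.mp hx with h | h
        · obtain ⟨w, hw, rfl⟩ := Finset.mem_image.mp h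
          rw [hK'def] at hw
          obtain ⟨hwK, hwD⟩ := Finset.mem_inter.mp hw
          refine Finset.mem_union_left _ (Finset.mem_image.mpr ⟨w, hwK, ?_⟩)
          simp only [hπdef]; rw [if_pos hwD]
        · obtain ⟨hxI, hxK⟩ := Finset.mem_sdiff.mp h
          by_cases hxfK : x ∈ fK
          · have hxD : x ∉ fI \ fJ := by
              intro h2
              exact hxK (by rw [hK'def]; exact Finset.mem_inter.mpr ⟨hxfK, h2⟩)
            refine Finset.mem_union_left _ (Finset.mem_image.mpr ⟨x, hxfK, ?_⟩)
            simp only [hπdef]; rw [if_neg hxD]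
          · exact Finset.mem_union_right _ (Finset.mem_sdiff.mpr ⟨hxI, hxfK⟩)
    have heq : π '' K ∪ (↑fI \ K) = ↑(TT σ fI K') := by
      rw [← hfKeq, ← Finset.coe_image, ← Finset.coe_sdiff, ← Finset.coe_union, hfinseteq]
    rw [heq]
    by_cases hcl : ∀ x ∈ TT σ fI K', m x ∈ TT σ fI K'
    · rcases hgood K' hK'sub hcl with h | h <;> rw [h]
      · exact hI
      · exact hJ
    · push_neg at hcl
      refine hclosed_base _ ?_ ?_ hcl
      · intro x hx
        rcases Finset.mem_union.mp hx with h | h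
        · obtain ⟨w, hw, rfl⟩ := Finset.mem_image.mp h
          exact hfJS (Finset.mem_sdiff.mp (hσmaps w (hK'sub hw))).1
        · exact hfIS (Finset.mem_sdiff.mp h).1
      · have hdisj : Disjoint (K'.image σ) (fI \ K') := by
          rw [Finset.disjoint_left]
          intro x hx hx2
          obtain ⟨w, hw, rfl⟩ := Finset.mem_image.mp hx
          exact (Finset.mem_sdiff.mp (hσmaps w (hK'sub hw))).2 (Finset.mem_sdiff.mp hx2).1
        have hKle : K'.card ≤ fI.card :=
          Finset.card_le_card (hK'sub.trans Finset.sdiff_subset)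
        unfold TT
        rw [Finset.card_union_of_disjoint hdisj,
          Finset.card_image_of_injOn (hbij.injOn.mono (by exact_mod_cast hK'sub)),
          Finset.card_sdiff_of_subset (hK'sub.trans Finset.sdiff_subset), hfIc]
        rw [hfIc] at hKle
        omega
end

section
/- Let S be a finite set, let E be a partition of S into n pairs, let ν be a positive integer with ν < n, and let G be a simple graph with vertex set E. Then there exists a matroid on ground set S whose bases are exactly the members of B(M_G). -/
open Finset

variable {α : Type*} [DecidableEq α]

section Aux

variable {S : Finset α} {E : Finset (Finset α)}

lemma pairPart_inter (hE : IsPairPartition S E) {F : Finset (Finset α)} (hF : F ⊆ E)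
    {e : Finset α} (he : e ∈ E) :
    (F.biUnion id) ∩ e = if e ∈ F then e else ∅ := by
  split_ifs with h
  · exact inter_eq_right.mpr (subset_biUnion_of_mem id h)
  · rw [eq_empty_iff_forall_notMem]
    intro x hx
    simp only [mem_inter, mem_biUnion, id] at hx
    obtain ⟨⟨f, hf, hxf⟩, hxe⟩ := hx
    have hne : f ≠ e := fun h' => h (h' ▸ hf)
    exact Finset.disjoint_left.mp (hE.2.1 (hF hf) he hne) hxf hxe

lemma pairPart_card (hE : IsPairPartition S E) {F : Finset (Finset α)} (hF : F ⊆ E) :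
    (F.biUnion id).card = 2 * F.card := by
  rw [card_biUnion (fun x hx y hy hxy => hE.2.1 (hF hx) (hF hy) hxy)]
  simp only [id_eq]
  rw [Finset.sum_congr rfl fun e heF => hE.1 e (hF heF), Finset.sum_const, smul_eq_mul, mul_comm]

lemma pairPart_card_inter_ne_one (hE : IsPairPartition S E) {F : Finset (Finset α)}
    (hF : F ⊆ E) {e : Finset α} (he : e ∈ E) : ((F.biUnion id) ∩ e).card ≠ 1 := by
  rw [pairPart_inter hE hF he]
  split_ifs with h
  · rw [hE.1 e he]; omega
  · simp

lemma pairPart_mem_iff (hE : IsPairPartition S E) {F : Finset (Finset α)} (hF : F ⊆ E)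
    {e : Finset α} (he : e ∈ E) : e ∈ F ↔ ((F.biUnion id) ∩ e).Nonempty := by
  rw [pairPart_inter hE hF he]
  split_ifs with h
  · simp only [h, true_iff]
    exact card_pos.mp (by rw [hE.1 e he]; omega)
  · simp [h]

lemma pairPart_unique (hE : IsPairPartition S E) {F F' : Finset (Finset α)} (hF : F ⊆ E)
    (hF' : F' ⊆ E) (h : F.biUnion id = F'.biUnion id) : F = F' := by
  ext e
  by_cases he : e ∈ E
  · rw [pairPart_mem_iff hE hF he, pairPart_mem_iff hE hF' he, h]
  · exact iff_of_false (fun h' => he (hF h')) (fun h' => he (hF' h'))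

/-- At most one element `b` outside `T'` can make `insert b T'` a union of pairs. -/
lemma not_both_paired (hE : IsPairPartition S E) {T' : Finset α} {b1 b2 : α}
    (hb2S : b2 ∈ S) (hne : b1 ≠ b2) (hb1 : b1 ∉ T') (hb2 : b2 ∉ T')
    {F1 F2 : Finset (Finset α)} (hF1 : F1 ⊆ E) (hF2 : F2 ⊆ E)
    (h1 : F1.biUnion id = insert b1 T') (h2 : F2.biUnion id = insert b2 T') : False := by
  have hb2' : b2 ∈ E.biUnion id := by rw [hE.2.2]; exact hb2S
  obtain ⟨e2, he2, hb2e2⟩ := mem_biUnion.mp hb2'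
  have hb2e2 : b2 ∈ e2 := hb2e2
  have hcard_e2 : e2.card = 2 := hE.1 e2 he2
  have hU2 : (insert b2 T') ∩ e2 = insert b2 (T' ∩ e2) := insert_inter_of_mem hb2e2
  have hb2ni : b2 ∉ T' ∩ e2 := fun h => hb2 (mem_inter.mp h).1
  by_cases hb1e2 : b1 ∈ e2
  · -- then e2 = {b1, b2} and (insert b2 T') ∩ e2 = {b2}, odd
    have he2eq : e2 = {b1, b2} := by
      refine (eq_of_subset_of_card_le ?_ ?_).symm
      · intro x hx
        simp only [mem_insert, mem_singleton] at hx
        rcases hx with rfl | rfl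
        exacts [hb1e2, hb2e2]
      · rw [hcard_e2, card_insert_of_notMem (by simp [hne]), card_singleton]
    have hT'e2 : T' ∩ e2 = ∅ := by
      rw [he2eq, eq_empty_iff_forall_notMem]
      intro x hx
      simp only [mem_inter, mem_insert, mem_singleton] at hx
      rcases hx.2 with rfl | rfl
      exacts [hb1 hx.1, hb2 hx.1]
    have hone : ((F2.biUnion id) ∩ e2).card = 1 := by
      rw [h2, hU2, hT'e2]; simp
    exact pairPart_card_inter_ne_one hE hF2 he2 hone
  · have hc1 := pairPart_card_inter_ne_one hE hF1 he2
    rw [h1, insert_inter_of_notMem hb1e2] at hc1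
    have hc2 := pairPart_card_inter_ne_one hE hF2 he2
    rw [h2, hU2, card_insert_of_notMem hb2ni] at hc2
    have hle : (T' ∩ e2).card + 1 ≤ 2 := by
      rw [← card_insert_of_notMem hb2ni, ← hU2, ← hcard_e2]
      exact card_le_card (inter_subset_right)
    omega

/-- The Finset characterization of `MemBMG`. -/
def GoodSet (S : Finset α) (E : Finset (Finset α)) (ν : ℕ) (G : SimpleGraph (Finset α))
    (T' : Finset α) : Prop :=
  T' ⊆ S ∧ T'.card = 2 * ν ∧
    ∀ F ⊆ E, F.biUnion id = T' → (↑F : Set (Finset α)).Pairwise G.Adj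

lemma memBMG_iff_good (hE : IsPairPartition S E) {ν : ℕ} {G : SimpleGraph (Finset α)}
    {T : Set α} :
    MemBMG S E ν G T ↔ ∃ T' : Finset α, ↑T' = T ∧ GoodSet S E ν G T' := by
  constructor
  · rintro (⟨T', hTT, hTS, hTc, hnex⟩ | ⟨F, hF, hFc, hFadj, hFT⟩)
    · refine ⟨T', hTT, hTS, hTc, fun F hF hbi => ?_⟩
      exfalso
      refine hnex ⟨F, hF, ?_, hbi⟩
      have := pairPart_card hE hF
      rw [hbi, hTc] at this
      omega
    · refine ⟨F.biUnion id, hFT, ?_, ?_, ?_⟩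
      · rw [← hE.2.2]
        exact biUnion_subset_biUnion_of_subset_left id hF
      · rw [pairPart_card hE hF, hFc]
      · intro F' hF' hbi
        rwa [pairPart_unique hE hF' hF hbi]
  · rintro ⟨T', hTT, hTS, hTc, hall⟩
    by_cases hp : ∃ F ⊆ E, F.biUnion id = T'
    · obtain ⟨F, hF, hbi⟩ := hp
      have hFc : F.card = ν := by
        have := pairPart_card hE hF
        rw [hbi, hTc] at this
        omega
      exact Or.inr ⟨F, hF, hFc, hall F hF hbi, by rw [hbi, hTT]⟩
    · exact Or.inl ⟨T', hTT, hTS, hTc, fun ⟨F, hF, _, hbi⟩ => hp ⟨F, hF, hbi⟩⟩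

end Aux

theorem exists_MG_matroid
    (S : Finset α) (E : Finset (Finset α)) (hE : IsPairPartition S E)
    (n : ℕ) (hn : E.card = n)
    (ν : ℕ) (hν : 1 ≤ ν) (hνn : ν < n)
    (G : SimpleGraph (Finset α)) :
    ∃ M : Matroid α, M.E = ↑S ∧ ∀ T : Set α, M.IsBase T ↔ MemBMG S E ν G T := by
  -- existence of a base
  have exists_base : ∃ B : Set α, MemBMG S E ν G B := by
    obtain ⟨F, hFE, hFcard⟩ := Finset.exists_subset_card_eq (show ν + 1 ≤ E.card by omega)
    obtain ⟨e1, he1, e2, he2, hee⟩ := Finset.one_lt_card.mp (by omega : 1 < F.card)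
    have he1E : e1 ∈ E := hFE he1
    have he2E : e2 ∈ E := hFE he2
    obtain ⟨x1, hx1⟩ := card_pos.mp (by rw [hE.1 e1 he1E]; omega : 0 < e1.card)
    obtain ⟨x2, hx2⟩ := card_pos.mp (by rw [hE.1 e2 he2E]; omega : 0 < e2.card)
    have hdisj : Disjoint e1 e2 := hE.2.1 he1E he2E hee
    have hx12 : x1 ≠ x2 := fun h => Finset.disjoint_left.mp hdisj hx1 (h ▸ hx2)
    set U := F.biUnion id with hU
    have hx1U : x1 ∈ U := mem_biUnion.mpr ⟨e1, he1, hx1⟩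
    have hx2U : x2 ∈ U := mem_biUnion.mpr ⟨e2, he2, hx2⟩
    set T0 := (U.erase x1).erase x2 with hT0
    have hT0card : T0.card = 2 * ν := by
      rw [hT0, card_erase_of_mem (mem_erase.mpr ⟨hx12.symm, hx2U⟩), card_erase_of_mem hx1U,
        hU, pairPart_card hE hFE, hFcard]
      omega
    have hT0S : T0 ⊆ S := by
      refine Subset.trans (Subset.trans (erase_subset _ _) (erase_subset _ _)) ?_
      rw [← hE.2.2]
      exact biUnion_subset_biUnion_of_subset_left id hFE
    have hT0e1 : T0 ∩ e1 = e1.erase x1 := by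
      ext y
      simp only [hT0, mem_inter, mem_erase]
      constructor
      · rintro ⟨⟨hy2, hy1, hyU⟩, hye1⟩
        exact ⟨hy1, hye1⟩
      · rintro ⟨hy1, hye1⟩
        have hy2 : y ≠ x2 := fun h => Finset.disjoint_left.mp hdisj hye1 (h ▸ hx2)
        exact ⟨⟨hy2, hy1, mem_biUnion.mpr ⟨e1, he1, hye1⟩⟩, hye1⟩
    refine ⟨↑T0, Or.inl ⟨T0, rfl, hT0S, hT0card, ?_⟩⟩
    rintro ⟨F', hF', _, hbi⟩
    have h1 : ((F'.biUnion id) ∩ e1).card = 1 := by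
      rw [hbi, hT0e1, card_erase_of_mem hx1, hE.1 e1 he1E]
    exact pairPart_card_inter_ne_one hE hF' he1E h1
  -- exchange property
  have exch : Matroid.ExchangeProperty (MemBMG S E ν G) := by
    intro X Y hX hY a haXY
    obtain ⟨T1, rfl, hT1S, hT1c, hT1all⟩ := (memBMG_iff_good hE).mp hX
    obtain ⟨T2, rfl, hT2S, hT2c, hT2all⟩ := (memBMG_iff_good hE).mp hY
    have haT1 : a ∈ T1 := haXY.1
    have haT2 : a ∉ T2 := by simpa using haXY.2
    have hcards : T1.card = T2.card := by rw [hT1c, hT2c]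
    have hdne : (T2 \ T1).Nonempty := by
      rw [sdiff_nonempty]
      intro hsub
      exact haT2 ((eq_of_subset_of_card_le hsub (le_of_eq hcards)) ▸ haT1)
    -- helper: goodness of an unpaired exchange set
    have hgood : ∀ b ∈ T2, b ∉ T1 →
        (∀ F ⊆ E, F.biUnion id = insert b (T1.erase a) →
          (↑F : Set (Finset α)).Pairwise G.Adj) →
        ∃ y ∈ (↑T2 : Set α) \ ↑T1, MemBMG S E ν G (insert y ((↑T1 : Set α) \ {a})) := by
      intro b hbT2 hbT1 hvac
      refine ⟨b, ⟨hbT2, by simpa using hbT1⟩, ?_⟩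
      rw [memBMG_iff_good hE]
      refine ⟨insert b (T1.erase a), by push_cast; rfl, ?_, ?_, hvac⟩
      · exact insert_subset (hT2S hbT2) (Subset.trans (erase_subset _ _) hT1S)
      · rw [card_insert_of_notMem (fun h => hbT1 (mem_of_mem_erase h)),
          card_erase_of_mem haT1, hT1c]
        omega
    by_cases hone : (T2 \ T1).card = 1
    · -- the unique exchange gives exactly T2
      obtain ⟨b, hb⟩ := card_eq_one.mp hone
      have hbmem : b ∈ T2 \ T1 := hb ▸ mem_singleton_self b
      have h12 : (T1 \ T2).card = 1 := by
        rw [card_sdiff_comm hcards, hone]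
      obtain ⟨a', ha'⟩ := card_eq_one.mp h12
      have haa : a' = a := by
        have : a ∈ T1 \ T2 := mem_sdiff.mpr ⟨haT1, haT2⟩
        rw [ha', mem_singleton] at this
        exact this.symm
      subst haa
      have hT2eq : insert b (T1.erase a') = T2 := by
        ext x
        simp only [mem_insert, mem_erase]
        constructor
        · rintro (rfl | ⟨hxa, hxT1⟩)
          · exact (mem_sdiff.mp hbmem).1
          · by_contra hxT2
            have : x ∈ T1 \ T2 := mem_sdiff.mpr ⟨hxT1, hxT2⟩
            rw [ha', mem_singleton] at this
            exact hxa this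
        · intro hxT2
          by_cases hxT1 : x ∈ T1
          · exact Or.inr ⟨fun h => haT2 (h ▸ hxT2), hxT1⟩
          · have : x ∈ T2 \ T1 := mem_sdiff.mpr ⟨hxT2, hxT1⟩
            rw [hb, mem_singleton] at this
            exact Or.inl this
      refine hgood b (mem_sdiff.mp hbmem).1 (mem_sdiff.mp hbmem).2 ?_
      rw [hT2eq]
      exact hT2all
    · -- at least two candidates; at most one can be paired
      have h2 : 1 < (T2 \ T1).card := by
        have := card_pos.mpr hdne
        omega
      obtain ⟨b1, hb1, b2, hb2, hb12⟩ := Finset.one_lt_card.mp h2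
      have hb1T2 := (mem_sdiff.mp hb1).1
      have hb1T1 := (mem_sdiff.mp hb1).2
      have hb2T2 := (mem_sdiff.mp hb2).1
      have hb2T1 := (mem_sdiff.mp hb2).2
      have hb1e : b1 ∉ T1.erase a := fun h => hb1T1 (mem_of_mem_erase h)
      have hb2e : b2 ∉ T1.erase a := fun h => hb2T1 (mem_of_mem_erase h)
      by_cases hp : ∃ F ⊆ E, F.biUnion id = insert b1 (T1.erase a)
      · obtain ⟨F1, hF1, hbi1⟩ := hp
        refine hgood b2 hb2T2 hb2T1 ?_
        intro F2 hF2 hbi2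
        exact absurd (not_both_paired hE (hT2S hb2T2) hb12 hb1e hb2e hF1 hF2 hbi1 hbi2)
          not_false
      · refine hgood b1 hb1T2 hb1T1 ?_
        intro F hF hbi
        exact absurd ⟨F, hF, hbi⟩ hp
  -- subset of ground set
  have ground : ∀ B : Set α, MemBMG S E ν G B → B ⊆ ↑S := by
    intro B hB
    obtain ⟨T', rfl, hTS, -, -⟩ := (memBMG_iff_good hE).mp hB
    exact_mod_cast hTS
  exact ⟨Matroid.ofIsBaseOfFinite S.finite_toSet (MemBMG S E ν G) exists_base exch ground,
    rfl, fun T => Iff.rfl⟩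
end

section
/- Let S be a finite set, let E be a partition of S into n pairs, let ν be a positive integer with ν < n, let G be a simple graph with vertex set E, and let M_G be a matroid on S whose bases are exactly the members of B(M_G). Then there exists a set F ⊆ E with |F| = ν such that ⋃F is independent in M_G if and only if G contains a clique of size ν. -/
open Finset

variable {α : Type*} [DecidableEq α]

theorem MG_feasible_matching_iff_clique
    (S : Finset α) (E : Finset (Finset α)) (hE : IsPairPartition S E)
    (n : ℕ) (hn : E.card = n)
    (ν : ℕ) (hν : 1 ≤ ν) (hνn : ν < n)
    (G : SimpleGraph (Finset α))
    (M : Matroid α) (hground : M.E = ↑S)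
    (hbase : ∀ T : Set α, M.IsBase T ↔ MemBMG S E ν G T) :
    (∃ F ⊆ E, F.card = ν ∧ M.Indep ↑(F.biUnion id)) ↔
      (∃ F ⊆ E, F.card = ν ∧ (↑F : Set (Finset α)).Pairwise G.Adj) := by
  obtain ⟨hcard2, hdisj, hunion⟩ := hE
  have hbU : ∀ F : Finset (Finset α), F ⊆ E → (F.biUnion id).card = 2 * F.card := by
    intro F hF
    rw [Finset.card_biUnion (fun x hx y hy hxy => hdisj (hF hx) (hF hy) hxy)]
    simp only [id]
    rw [Finset.sum_congr rfl (fun e he => hcard2 e (hF he))]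
    simp [mul_comm]
  have hsubE : ∀ F F' : Finset (Finset α), F ⊆ E → F' ⊆ E →
      F.biUnion id = F'.biUnion id → F ⊆ F' := by
    intro F F' hF hF' h e he
    have he2 : e.card = 2 := hcard2 e (hF he)
    obtain ⟨x, hx⟩ := Finset.card_pos.mp (show 0 < e.card by rw [he2]; norm_num)
    have hxU : x ∈ F'.biUnion id := by
      rw [← h]; exact Finset.mem_biUnion.mpr ⟨e, he, hx⟩
    obtain ⟨f, hf, hxf⟩ := Finset.mem_biUnion.mp hxU
    have hef : e = f := by
      by_contra hne
      exact Finset.disjoint_left.mp (hdisj (hF he) (hF' hf) hne) hx hxf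
    exact hef ▸ hf
  constructor
  · rintro ⟨F, hFE, hFcard, hFind⟩
    obtain ⟨T, hT, hsub⟩ := hFind.exists_isBase_superset
    rcases (hbase T).mp hT with ⟨T', rfl, hTS, hTcard, hnot⟩ | ⟨F', hF'E, hF'card, hF'cl, hF'T⟩
    · exfalso
      have hsub' : F.biUnion id ⊆ T' := Finset.coe_subset.mp hsub
      have hcardeq : (F.biUnion id).card = T'.card := by
        rw [hbU F hFE, hFcard, hTcard]
      exact hnot ⟨F, hFE, hFcard, Finset.eq_of_subset_of_card_le hsub' hcardeq.ge⟩
    · have hsub' : F.biUnion id ⊆ F'.biUnion id := by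
        rw [← Finset.coe_subset]; rw [hF'T]; exact hsub
      have hcardeq : (F'.biUnion id).card ≤ (F.biUnion id).card := by
        rw [hbU F hFE, hbU F' hF'E, hFcard, hF'card]
      have hUeq : F.biUnion id = F'.biUnion id :=
        Finset.eq_of_subset_of_card_le hsub' hcardeq
      have hFF' : F = F' :=
        Finset.eq_of_subset_of_card_le (hsubE F F' hFE hF'E hUeq) (by rw [hFcard, hF'card])
      exact ⟨F, hFE, hFcard, hFF' ▸ hF'cl⟩
  · rintro ⟨F, hFE, hFcard, hFcl⟩
    refine ⟨F, hFE, hFcard, ?_⟩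
    exact ((hbase _).mpr (Or.inr ⟨F, hFE, hFcard, hFcl, rfl⟩)).indep
end

section
/- Let M be a matroid on a finite ground set S, let E be a partition of S into n pairs, and let w : E → ℝ≥0. Let e₁, …, e_n be an enumeration of E with w(e₁) ≥ w(e₂) ≥ … ≥ w(e_n), and define the greedy solution by A₀ = ∅ and, for i = 1, …, n, A_i = A_{i−1} ∪ {e_i} if ⋃(A_{i−1} ∪ {e_i}) is independent in M and A_i = A_{i−1} otherwise. Then A_n is feasible and for every feasible set of pairs B ⊆ E one has w(B) ≤ 2·w(A_n); that is, the greedy solution is a 2-approximation for the weighted matroid parity problem. -/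
open Finset

variable {α : Type*} [DecidableEq α]

private lemma abel_id (f u : ℕ → ℝ) (n : ℕ) :
    ∑ i ∈ Finset.range n, f i * (u (i+1) - u i)
      = f n * u n - f 0 * u 0 - ∑ i ∈ Finset.range n, (f (i+1) - f i) * u (i+1) := by
  induction n with
  | zero => simp
  | succ m ih => rw [Finset.sum_range_succ, Finset.sum_range_succ, ih]; ring

private lemma card_biUnion_pairs (E : Finset (Finset α)) (h2 : ∀ e ∈ E, e.card = 2)
    (hd : (E : Set (Finset α)).PairwiseDisjoint id) (A : Finset (Finset α)) (hA : A ⊆ E) :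
    (A.biUnion id).card = 2 * A.card := by
  rw [Finset.card_biUnion (fun x hx y hy hxy => hd (hA hx) (hA hy) hxy)]
  calc ∑ u ∈ A, (id u).card = ∑ _u ∈ A, 2 :=
        Finset.sum_congr rfl fun e he => h2 e (hA he)
    _ = 2 * A.card := by rw [Finset.sum_const, smul_eq_mul, mul_comm]

theorem greedy_two_approximation
    (M : Matroid α) (S : Finset α) (hground : M.E = ↑S)
    (E : Finset (Finset α)) (hE : IsPairPartition S E)
    (n : ℕ) (hn : E.card = n)
    (w : Finset α → ℝ) (hw : ∀ e ∈ E, 0 ≤ w e)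
    -- `g 0, g 1, …, g (n-1)` is an enumeration of `E` in decreasing order of weight
    (g : Fin n → Finset α) (hgmem : ∀ i, g i ∈ E) (hginj : Function.Injective g)
    (hgsorted : ∀ i j : Fin n, i ≤ j → w (g j) ≤ w (g i))
    -- `A` is the sequence of greedy solutions
    (A : ℕ → Finset (Finset α)) (hA0 : A 0 = ∅)
    (hAstep : ∀ i : Fin n,
      (FeasibleSet M (insert (g i) (A i)) → A (i + 1) = insert (g i) (A i)) ∧
      (¬FeasibleSet M (insert (g i) (A i)) → A (i + 1) = A i)) :
    FeasibleSet M (A n) ∧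
      ∀ B ⊆ E, FeasibleSet M B → ∑ e ∈ B, w e ≤ 2 * ∑ e ∈ A n, w e := by
  obtain ⟨h2, hdisj, hunion⟩ := hE
  -- the step dichotomy, with natural-number indices
  have hstep : ∀ i : ℕ, ∀ hi : i < n,
      (A (i+1) = insert (g ⟨i, hi⟩) (A i) ∧ FeasibleSet M (insert (g ⟨i, hi⟩) (A i))) ∨
        (A (i+1) = A i ∧ ¬FeasibleSet M (insert (g ⟨i, hi⟩) (A i))) := by
    intro i hi
    obtain ⟨h1, h2'⟩ := hAstep ⟨i, hi⟩
    by_cases hf : FeasibleSet M (insert (g ⟨i, hi⟩) (A i))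
    · exact Or.inl ⟨h1 hf, hf⟩
    · exact Or.inr ⟨h2' hf, hf⟩
  -- main invariant: indices of members, and feasibility
  have hinv : ∀ i, i ≤ n →
      (∀ e ∈ A i, ∃ j : Fin n, (j : ℕ) < i ∧ g j = e) ∧ FeasibleSet M (A i) := by
    intro i
    induction i with
    | zero =>
      intro _
      refine ⟨fun e he => ?_, ?_⟩
      · rw [hA0] at he; exact absurd he (Finset.notMem_empty e)
      · rw [hA0]; simpa [FeasibleSet] using M.empty_indep
    | succ m ih =>
      intro hm
      have hmn : m < n := hm
      obtain ⟨ihidx, ihfeas⟩ := ih (le_of_lt hmn)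
      rcases hstep m hmn with ⟨h, hf⟩ | ⟨h, hf⟩
      · refine ⟨fun e he => ?_, by rw [h]; exact hf⟩
        rw [h] at he
        rcases Finset.mem_insert.mp he with rfl | he'
        · exact ⟨⟨m, hmn⟩, Nat.lt_succ_self m, rfl⟩
        · obtain ⟨j, hj, hje⟩ := ihidx e he'
          exact ⟨j, Nat.lt_succ_of_lt hj, hje⟩
      · rw [h]
        exact ⟨fun e he => (ihidx e he).imp
          (fun j hj => ⟨Nat.lt_succ_of_lt hj.1, hj.2⟩), ihfeas⟩
  -- monotonicity of the greedy sequence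
  have hmono : ∀ i j : ℕ, i ≤ j → j ≤ n → A i ⊆ A j := by
    intro i j hij hjn
    induction j with
    | zero => rw [Nat.le_zero.mp hij]
    | succ m ih =>
      rcases Nat.lt_succ_iff_lt_or_eq.mp (Nat.lt_succ_of_le hij) with hlt | rfl
      · have hmn : m < n := hjn
        have h1 : A i ⊆ A m := ih (Nat.lt_succ_iff.mp hlt) (le_of_lt hmn)
        rcases hstep m hmn with ⟨h, _⟩ | ⟨h, _⟩
        · rw [h]; exact h1.trans (Finset.subset_insert _ _)
        · rw [h]; exact h1
      · exact Finset.Subset.refl _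
  have hAE : ∀ i, i ≤ n → A i ⊆ E := by
    intro i hi e he
    obtain ⟨j, _, hje⟩ := (hinv i hi).1 e he
    exact hje ▸ hgmem j
  -- a pair that was skipped stays infeasible to add
  have hskip : ∀ i, i ≤ n → ∀ j : Fin n, (j : ℕ) < i → g j ∉ A i →
      ¬FeasibleSet M (insert (g j) (A i)) := by
    intro i hi j hji hnot hfeas
    have hj1 : (j : ℕ) + 1 ≤ i := hji
    rcases hstep j j.isLt with ⟨h, _⟩ | ⟨_, hf⟩
    · apply hnot
      apply hmono ((j : ℕ) + 1) i hj1 hi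
      rw [h]; exact Finset.mem_insert_self _ _
    · apply hf
      have hsub : (insert (g ⟨(j : ℕ), j.isLt⟩) (A (j : ℕ))).biUnion id ⊆
          (insert (g j) (A i)).biUnion id := by
        apply Finset.biUnion_subset_biUnion_of_subset_left
        intro e he
        rcases Finset.mem_insert.mp he with rfl | he'
        · exact Finset.mem_insert_self _ _
        · exact Finset.mem_insert_of_mem (hmono (j : ℕ) i (le_of_lt hji) hi he')
      exact hfeas.subset (by exact_mod_cast hsub)
  -- g is surjective onto E
  have hgsurj : ∀ e ∈ E, ∃ j : Fin n, g j = e := by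
    intro e he
    have himg : Finset.univ.image g = E := by
      apply Finset.eq_of_subset_of_card_le
      · intro x hx
        obtain ⟨j, _, rfl⟩ := Finset.mem_image.mp hx
        exact hgmem j
      · rw [Finset.card_image_of_injective _ hginj, Finset.card_univ, Fintype.card_fin, hn]
    have : e ∈ Finset.univ.image g := himg ▸ he
    obtain ⟨j, _, hje⟩ := Finset.mem_image.mp this
    exact ⟨j, hje⟩
  -- the key counting lemma: any feasible B restricted to the first i pairs
  -- has at most twice as many pairs as the greedy solution A i
  have hcount : ∀ B : Finset (Finset α), B ⊆ E → FeasibleSet M B → ∀ i, i ≤ n →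
      (B.filter (fun e => ∃ j : Fin n, (j : ℕ) < i ∧ g j = e)).card ≤ 2 * (A i).card := by
    intro B hBE hBfeas i hi
    classical
    set Bi := B.filter (fun e => ∃ j : Fin n, (j : ℕ) < i ∧ g j = e) with hBidef
    have hBiB : Bi ⊆ B := Finset.filter_subset _ _
    have hBiE : Bi ⊆ E := hBiB.trans hBE
    have hAiE := hAE i hi
    have hBi_indep : M.Indep ↑(Bi.biUnion id) := by
      apply hBfeas.subset
      exact_mod_cast Finset.biUnion_subset_biUnion_of_subset_left _ hBiB
    set I : Finset α := (A i).biUnion id with hIdef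
    have hXS : ((I ∪ Bi.biUnion id : Finset α) : Set α) ⊆ M.E := by
      rw [hground]
      intro x hx
      have hx' : x ∈ (I ∪ Bi.biUnion id : Finset α) := by exact_mod_cast hx
      have : x ∈ E.biUnion id := by
        rcases Finset.mem_union.mp hx' with h | h
        · obtain ⟨e, he, hxe⟩ := Finset.mem_biUnion.mp h
          exact Finset.mem_biUnion.mpr ⟨e, hAiE he, hxe⟩
        · obtain ⟨e, he, hxe⟩ := Finset.mem_biUnion.mp h
          exact Finset.mem_biUnion.mpr ⟨e, hBiE he, hxe⟩
      rw [hunion] at this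
      exact_mod_cast this
    obtain ⟨J, hJ, hIJ⟩ := (show M.Indep _ from (hinv i hi).2).subset_isBasis_of_subset
      (by exact_mod_cast Finset.subset_union_left) hXS
    obtain ⟨K, hK, hBK⟩ := hBi_indep.subset_isBasis_of_subset
      (by exact_mod_cast Finset.subset_union_right) hXS
    have hKJ : K.encard = J.encard := hK.encard_eq_encard hJ
    have hJfin : J.Finite := (Finset.finite_toSet _).subset hJ.subset
    set J' := hJfin.toFinset with hJ'def
    have hJJ' : ↑J' = J := hJfin.coe_toFinset
    have hcard1 : 2 * Bi.card ≤ J'.card := by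
      have h1 : ((Bi.biUnion id : Finset α) : Set α).encard ≤ K.encard := Set.encard_le_encard hBK
      rw [Set.encard_coe_eq_coe_finsetCard, hKJ, hJfin.encard_eq_coe_toFinset_card] at h1
      have h2' : (Bi.biUnion id).card ≤ J'.card := by exact_mod_cast h1
      rwa [card_biUnion_pairs E h2 hdisj Bi hBiE] at h2'
    have hpair : ∀ e ∈ Bi \ A i, ¬((e : Set α) ⊆ J) := by
      intro e he hsubJ
      have he' := Finset.mem_sdiff.mp he
      obtain ⟨heB, j, hji, hje⟩ := Finset.mem_filter.mp he'.1
      refine hskip i hi j hji (by rw [hje]; exact he'.2) ?_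
      show M.Indep ↑((insert (g j) (A i)).biUnion id)
      rw [hje]
      apply hJ.indep.subset
      rw [Finset.biUnion_insert, Finset.coe_union]
      exact Set.union_subset hsubJ hIJ
    have hJ'sub : J' \ I ⊆ (Bi \ A i).biUnion (fun e => e ∩ J') := by
      intro x hx
      obtain ⟨hxJ', hxI⟩ := Finset.mem_sdiff.mp hx
      have hxJ : x ∈ J := by rw [← hJJ']; exact_mod_cast hxJ'
      have hxX : x ∈ (I ∪ Bi.biUnion id : Finset α) := by exact_mod_cast hJ.subset hxJ
      rcases Finset.mem_union.mp hxX with h | h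
      · exact absurd h hxI
      · obtain ⟨e, heBi, hxe⟩ := Finset.mem_biUnion.mp h
        have heA : e ∉ A i := fun hcon => hxI (Finset.mem_biUnion.mpr ⟨e, hcon, hxe⟩)
        exact Finset.mem_biUnion.mpr ⟨e, Finset.mem_sdiff.mpr ⟨heBi, heA⟩,
          Finset.mem_inter.mpr ⟨hxe, hxJ'⟩⟩
    have hle1 : ∀ e ∈ Bi \ A i, (e ∩ J').card ≤ 1 := by
      intro e he
      by_contra hcon
      push_neg at hcon
      have he2 : e.card = 2 := h2 e (hBiE (Finset.mem_sdiff.mp he).1)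
      have heq : e ∩ J' = e :=
        Finset.eq_of_subset_of_card_le Finset.inter_subset_left (by omega)
      have heJ' : e ⊆ J' := Finset.inter_eq_left.mp heq
      exact hpair e he (by rw [← hJJ']; exact_mod_cast heJ')
    have hcard2 : (J' \ I).card ≤ (Bi \ A i).card := by
      calc (J' \ I).card ≤ ((Bi \ A i).biUnion (fun e => e ∩ J')).card :=
            Finset.card_le_card hJ'sub
        _ ≤ ∑ e ∈ Bi \ A i, (e ∩ J').card := Finset.card_biUnion_le
        _ ≤ ∑ _e ∈ Bi \ A i, 1 := Finset.sum_le_sum hle1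
        _ = (Bi \ A i).card := by simp
    have hcard3 : J'.card ≤ I.card + (Bi \ A i).card := by
      have h4 := Finset.card_inter_add_card_sdiff J' I
      have hint : (J' ∩ I).card ≤ I.card := Finset.card_le_card Finset.inter_subset_right
      omega
    have hIcard : I.card = 2 * (A i).card := card_biUnion_pairs E h2 hdisj (A i) hAiE
    have hsd : (Bi \ A i).card ≤ Bi.card := Finset.card_le_card Finset.sdiff_subset
    omega
  refine ⟨(hinv n le_rfl).2, ?_⟩
  intro B hBE hBfeas
  set f : ℕ → ℝ := fun i => if h : i < n then w (g ⟨i, h⟩) else 0 with hfdef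
  set Bf : ℕ → Finset (Finset α) :=
    fun i => B.filter (fun e => ∃ j : Fin n, (j : ℕ) < i ∧ g j = e) with hBfdef
  have hf0 : ∀ (m : ℕ) (hm : m < n), f m = w (g ⟨m, hm⟩) := by
    intro m hm; simp only [hfdef]; exact dif_pos hm
  have hfn : f n = 0 := by simp only [hfdef]; exact dif_neg (lt_irrefl n)
  have hfmono : ∀ m ∈ Finset.range n, 0 ≤ f m - f (m + 1) := by
    intro m hm
    have hmn : m < n := Finset.mem_range.mp hm
    by_cases h1 : m + 1 < n
    · rw [hf0 m hmn, hf0 (m+1) h1]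
      have := hgsorted ⟨m, hmn⟩ ⟨m+1, h1⟩ (by simp [Fin.mk_le_mk])
      linarith
    · have hz : f (m+1) = 0 := by simp only [hfdef]; exact dif_neg h1
      rw [hz, hf0 m hmn, sub_zero]
      exact hw _ (hgmem _)
  have hgnewA : ∀ (m : ℕ) (hm : m < n), g ⟨m, hm⟩ ∉ A m := by
    intro m hm hcon
    obtain ⟨j, hj, hje⟩ := (hinv m (le_of_lt hm)).1 _ hcon
    have : (j : ℕ) = m := congrArg Fin.val (hginj hje)
    omega
  have hgnewB : ∀ (m : ℕ) (hm : m < n), g ⟨m, hm⟩ ∉ Bf m := by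
    intro m hm hcon
    obtain ⟨-, j, hj, hje⟩ := Finset.mem_filter.mp hcon
    have : (j : ℕ) = m := congrArg Fin.val (hginj hje)
    omega
  have hBf0 : Bf 0 = ∅ := by
    ext e; simp [hBfdef]
  have hBfn : Bf n = B := by
    ext e
    simp only [hBfdef, Finset.mem_filter]
    constructor
    · rintro ⟨h, -⟩; exact h
    · intro he
      obtain ⟨j, hje⟩ := hgsurj e (hBE he)
      exact ⟨he, j, j.isLt, hje⟩
  have hBfstep : ∀ (m : ℕ) (hm : m < n),
      Bf (m+1) = if g ⟨m, hm⟩ ∈ B then insert (g ⟨m, hm⟩) (Bf m) else Bf m := by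
    intro m hm
    ext e
    by_cases hgB : g ⟨m, hm⟩ ∈ B
    · rw [if_pos hgB]
      simp only [hBfdef, Finset.mem_insert, Finset.mem_filter]
      constructor
      · rintro ⟨heB, j, hj, rfl⟩
        rcases Nat.lt_succ_iff_lt_or_eq.mp hj with h | h
        · exact Or.inr ⟨heB, j, h, rfl⟩
        · have hjm : j = (⟨m, hm⟩ : Fin n) := by apply Fin.ext; exact h
          exact Or.inl (congrArg g hjm)
      · rintro (rfl | ⟨heB, j, hj, rfl⟩)
        · exact ⟨hgB, ⟨m, hm⟩, Nat.lt_succ_self m, rfl⟩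
        · exact ⟨heB, j, Nat.lt_succ_of_lt hj, rfl⟩
    · rw [if_neg hgB]
      simp only [hBfdef, Finset.mem_filter]
      constructor
      · rintro ⟨heB, j, hj, rfl⟩
        rcases Nat.lt_succ_iff_lt_or_eq.mp hj with h | h
        · exact ⟨heB, j, h, rfl⟩
        · have hjm : j = (⟨m, hm⟩ : Fin n) := by apply Fin.ext; exact h
          exact absurd (hjm ▸ heB) hgB
      · rintro ⟨heB, j, hj, rfl⟩
        exact ⟨heB, j, Nat.lt_succ_of_lt hj, rfl⟩
  -- sum identities
  have hAsum : ∀ m, m ≤ n → ∑ e ∈ A m, w e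
      = ∑ i ∈ Finset.range m, f i * (((A (i+1)).card : ℝ) - ((A i).card : ℝ)) := by
    intro m
    induction m with
    | zero => intro _; rw [hA0]; simp
    | succ m ih =>
      intro hm
      have hmn : m < n := hm
      rw [Finset.sum_range_succ, ← ih (le_of_lt hmn)]
      rcases hstep m hmn with ⟨h, -⟩ | ⟨h, -⟩
      · rw [h, Finset.sum_insert (hgnewA m hmn),
          Finset.card_insert_of_notMem (hgnewA m hmn), hf0 m hmn]
        push_cast
        ring
      · rw [h]
        ring
  have hBsum : ∀ m, m ≤ n → ∑ e ∈ Bf m, w e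
      = ∑ i ∈ Finset.range m, f i * (((Bf (i+1)).card : ℝ) - ((Bf i).card : ℝ)) := by
    intro m
    induction m with
    | zero => intro _; rw [hBf0]; simp
    | succ m ih =>
      intro hm
      have hmn : m < n := hm
      rw [Finset.sum_range_succ, ← ih (le_of_lt hmn), hBfstep m hmn]
      by_cases hgB : g ⟨m, hm⟩ ∈ B
      · rw [if_pos hgB, Finset.sum_insert (hgnewB m hmn),
          Finset.card_insert_of_notMem (hgnewB m hmn), hf0 m hmn]
        push_cast
        ring
      · rw [if_neg hgB]
        ring
  -- Abel summation
  have habel' : ∀ u : ℕ → ℝ, u 0 = 0 →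
      ∑ i ∈ Finset.range n, f i * (u (i+1) - u i)
        = ∑ i ∈ Finset.range n, (f i - f (i+1)) * u (i+1) := by
    intro u hu0
    rw [abel_id, hfn, hu0, zero_mul, mul_zero, sub_zero, zero_sub,
      ← Finset.sum_neg_distrib]
    exact Finset.sum_congr rfl fun x _ => by ring
  have hBabel : ∑ i ∈ Finset.range n, f i * (((Bf (i+1)).card : ℝ) - ((Bf i).card : ℝ))
      = ∑ i ∈ Finset.range n, (f i - f (i+1)) * ((Bf (i+1)).card : ℝ) :=
    habel' (fun i => ((Bf i).card : ℝ)) (by simp [hBf0])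
  have hAabel : ∑ i ∈ Finset.range n, f i * (((A (i+1)).card : ℝ) - ((A i).card : ℝ))
      = ∑ i ∈ Finset.range n, (f i - f (i+1)) * ((A (i+1)).card : ℝ) :=
    habel' (fun i => ((A i).card : ℝ)) (by simp [hA0])
  calc ∑ e ∈ B, w e = ∑ e ∈ Bf n, w e := by rw [hBfn]
    _ = ∑ i ∈ Finset.range n, f i * (((Bf (i+1)).card : ℝ) - ((Bf i).card : ℝ)) :=
        hBsum n le_rfl
    _ = ∑ i ∈ Finset.range n, (f i - f (i+1)) * ((Bf (i+1)).card : ℝ) := hBabel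
    _ ≤ ∑ i ∈ Finset.range n, (f i - f (i+1)) * (2 * ((A (i+1)).card : ℝ)) := by
        apply Finset.sum_le_sum
        intro m hm
        have hmn : m < n := Finset.mem_range.mp hm
        have hb := hcount B hBE hBfeas (m+1) hmn
        have hbR : ((Bf (m+1)).card : ℝ) ≤ 2 * ((A (m+1)).card : ℝ) := by
          simp only [hBfdef]
          exact_mod_cast hb
        exact mul_le_mul_of_nonneg_left hbR (hfmono m hm)
    _ = 2 * ∑ i ∈ Finset.range n, (f i - f (i+1)) * ((A (i+1)).card : ℝ) := by
        rw [Finset.mul_sum]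
        exact Finset.sum_congr rfl fun x _ => by ring
    _ = 2 * ∑ i ∈ Finset.range n, f i * (((A (i+1)).card : ℝ) - ((A i).card : ℝ)) := by
        rw [hAabel]
    _ = 2 * ∑ e ∈ A n, w e := by rw [← hAsum n le_rfl]
end
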